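/- arXiv:2511.17280 — 6 statements merged into one kernel-verified Lean document; each statement's English description precedes it below -/
import Mathlib

section
/- Let m ∈ ℕ be even and let 0 ≤ x_1 ≤ x_2 ≤ ⋯ ≤ x_m. Then E[(−1)^{Σ_{j=1}^m T(x_j)}] = ℙ{L(x_{2j}) − L(x_{2j−1}) = 0 for all j = 1, …, m/2}. -/
open MeasureTheory ProbabilityTheory Set

open scoped ENNReal

private lemma sum_range_two_mul (g : ℕ → ℕ) (q : ℕ) :
    ∑ i ∈ Finset.range (2 * q), g i
      = ∑ j ∈ Finset.range q, (g (2 * j) + g (2 * j + 1)) := by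
  induction q with
  | zero => simp
  | succ q ih =>
      rw [Finset.sum_range_succ, ← ih, show 2 * (q + 1) = 2 * q + 1 + 1 by ring,
        Finset.sum_range_succ, Finset.sum_range_succ]
      omega

private lemma natCard_eq (f : ℕ → ℝ) (hmono : Monotone f) (t : ℝ) (n : ℕ)
    (h1 : f n ≤ t) (h2 : t < f (n + 1)) :
    Nat.card {k : ℕ // 1 ≤ k ∧ f k ≤ t} = n := by
  have hset : {k : ℕ | 1 ≤ k ∧ f k ≤ t} = ↑(Finset.Icc 1 n) := by
    ext k
    simp only [Set.mem_setOf_eq, Finset.coe_Icc, Set.mem_Icc]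
    constructor
    · rintro ⟨hk1, hk2⟩
      refine ⟨hk1, ?_⟩
      by_contra hk
      exact absurd (le_trans (hmono (by omega : n + 1 ≤ k)) hk2) (not_le.2 h2)
    · rintro ⟨hk1, hk2⟩
      exact ⟨hk1, le_trans (hmono hk2) h1⟩
  have h : Nat.card {k : ℕ | 1 ≤ k ∧ f k ≤ t} = n := by
    rw [hset, Nat.card_coe_set_eq, Set.ncard_coe_finset, Nat.card_Icc]
    omega
  exact h

private lemma natCard_eq_zero (f : ℕ → ℝ) (t : ℝ) (h : ∀ k, f k ≤ t) :
    Nat.card {k : ℕ // 1 ≤ k ∧ f k ≤ t} = 0 := by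
  have hset : {k : ℕ | 1 ≤ k ∧ f k ≤ t} = Set.Ici 1 := by
    ext k; simp [Set.mem_Ici, h k]
  have hinf : {k : ℕ | 1 ≤ k ∧ f k ≤ t}.Infinite := hset ▸ Set.Ici_infinite 1
  have : Infinite {k : ℕ // 1 ≤ k ∧ f k ≤ t} := hinf.to_subtype
  exact Nat.card_eq_zero_of_infinite

private lemma exists_step (f : ℕ → ℝ) (t : ℝ) (h0 : f 0 ≤ t) (h : ∃ k, t < f k) :
    ∃ n, f n ≤ t ∧ t < f (n + 1) := by
  classical
  have hK : t < f (Nat.find h) := Nat.find_spec h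
  have hKpos : Nat.find h ≠ 0 := by
    intro h0'; rw [h0'] at hK; exact absurd h0 (not_le.2 hK)
  refine ⟨Nat.find h - 1, ?_, ?_⟩
  · have := Nat.find_min h (show Nat.find h - 1 < Nat.find h by omega)
    exact not_lt.1 this
  · have he : Nat.find h - 1 + 1 = Nat.find h := by omega
    rw [he]; exact hK

noncomputable def Stl (k : ℕ) (u : ℕ → ℝ) : ℝ := ∑ i ∈ Finset.range k, u i

lemma Stl_meas (k : ℕ) : Measurable (Stl k) :=
  Finset.measurable_sum _ fun i _ => measurable_pi_apply i

def Dst (t : ℝ) (n : ℕ) : Set (ℕ → ℝ) :=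
  {u | (Stl n u ≤ t ∧ t < Stl (n + 1) u) ∨ ((∀ k, Stl k u ≤ t) ∧ n = 0)}

lemma Dst_meas (t : ℝ) (n : ℕ) : MeasurableSet (Dst t n) := by
  have h : Dst t n = (({u | Stl n u ≤ t} ∩ {u | t < Stl (n + 1) u}) ∪
      ((⋂ k, {u | Stl k u ≤ t}) ∩ {_u : ℕ → ℝ | n = 0})) := by
    unfold Dst; ext u; simp only [Set.mem_setOf_eq, Set.mem_union, Set.mem_inter_iff,
      Set.mem_iInter]
  rw [h]
  apply MeasurableSet.union
  · exact (measurableSet_le (Stl_meas n) measurable_const).inter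
      (measurableSet_lt measurable_const (Stl_meas (n + 1)))
  · exact (MeasurableSet.iInter fun k =>
      measurableSet_le (Stl_meas k) measurable_const).inter (MeasurableSet.const _)

def Gtl : Set (ℕ → ℝ) := {u | ∀ r : ℕ, ∃ k, (r : ℝ) < Stl k u}

lemma Gtl_meas : MeasurableSet Gtl := by
  have h : Gtl = ⋂ r : ℕ, ⋃ k : ℕ, {u | (r : ℝ) < Stl k u} := by
    unfold Gtl; ext u; simp only [Set.mem_setOf_eq, Set.mem_iInter, Set.mem_iUnion]
  rw [h]
  refine MeasurableSet.iInter fun r => MeasurableSet.iUnion fun k => ?_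
  exact measurableSet_lt measurable_const (Stl_meas k)

open scoped ENNReal in
def Aset (m q : ℕ) (n : Fin m → ℕ) : Finset ℕ :=
  (Finset.range q).biUnion fun j =>
    if h : 2 * j + 1 < m then
      Finset.Ico (n ⟨2 * j, Nat.lt_of_succ_lt h⟩ + 1) (n ⟨2 * j + 1, h⟩ + 1)
    else ∅

/-- For the renewal reward process `T(t) = Σ_{l=0}^{L(t)} η_l`: if `m` is even and
`0 ≤ x₁ ≤ ⋯ ≤ x_m`, then
`E[(-1)^{Σ_j T(x_j)}] = P{L(x_{2j}) - L(x_{2j-1}) = 0 for all j = 1, …, m/2}`. -/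
theorem renewal_parity_expectation
    {Ω : Type*} [MeasurableSpace Ω] (P : Measure Ω) [IsProbabilityMeasure P]
    (U : ℕ → Ω → ℝ) (η : ℕ → Ω → ℕ)
    (hUmeas : ∀ m, Measurable (U m))
    (hUnonneg : ∀ m ω, 0 ≤ U m ω)
    (hUindep : iIndepFun (fun m => U (m + 1)) P)
    (hUident : ∀ m, IdentDistrib (U (m + 1)) (U 1) P P)
    (hU0 : P {ω | U 1 ω = 0} < 1)
    (hηmeas : ∀ m, Measurable (η m))
    (hηindep : iIndepFun η P)
    (hηbern : ∀ m, P {ω | η m ω = 1} = 1 / 2 ∧ P {ω | η m ω = 0} = 1 / 2)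
    (hUη : IndepFun (fun ω (m : ℕ) => U (m + 1) ω) (fun ω (m : ℕ) => η m ω) P)
    (S : ℕ → Ω → ℝ) (hS : ∀ k ω, S k ω = ∑ i ∈ Finset.range k, U (i + 1) ω)
    (L : ℝ → Ω → ℕ) (hL : ∀ t ω, L t ω = Nat.card {k : ℕ // 1 ≤ k ∧ S k ω ≤ t})
    (T : ℝ → Ω → ℕ) (hT : ∀ t ω, T t ω = ∑ l ∈ Finset.range (L t ω + 1), η l ω)
    (m : ℕ) (hm : Even m) (x : Fin m → ℝ) (hx0 : ∀ i, 0 ≤ x i) (hxmono : Monotone x) :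
    ∫ ω, (-1 : ℝ) ^ (∑ j, T (x j) ω) ∂P =
      (P {ω | ∀ j : ℕ, ∀ h : 2 * j + 1 < m,
          L (x ⟨2 * j + 1, h⟩) ω - L (x ⟨2 * j, Nat.lt_of_succ_lt h⟩) ω = 0}).toReal := by
  classical
  obtain ⟨q, hq⟩ := hm
  have hq2 : m = 2 * q := by omega
  -- basic facts about S
  have hSmeas : ∀ k, Measurable (S k) := by
    intro k
    have h : S k = fun ω => ∑ i ∈ Finset.range k, U (i + 1) ω := funext fun ω => hS k ω
    rw [h]; exact Finset.measurable_sum _ fun i _ => hUmeas _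
  have hSmono : ∀ ω, Monotone fun k => S k ω := by
    intro ω
    apply monotone_nat_of_le_succ
    intro k
    rw [hS, hS, Finset.sum_range_succ]
    have := hUnonneg (k + 1) ω
    linarith
  have hS0 : ∀ ω, S 0 ω = 0 := by intro ω; rw [hS]; simp
  -- sequence space picture
  set Uvec : Ω → ℕ → ℝ := fun ω k => U (k + 1) ω with hUvec_def
  have hUvecMeas : Measurable Uvec := measurable_pi_lambda _ fun k => hUmeas (k + 1)
  have hSU : ∀ k ω, S k ω = Stl k (Uvec ω) := fun k ω => hS k ω
  -- characterization of L values
  have hLchar : ∀ t : ℝ, 0 ≤ t → ∀ n ω, (L t ω = n ↔ Uvec ω ∈ Dst t n) := by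
    intro t ht n ω
    constructor
    · rintro rfl
      by_cases hex : ∃ k, t < S k ω
      · obtain ⟨n0, hn1, hn2⟩ := exists_step (fun k => S k ω) t (by show S 0 ω ≤ t; rw [hS0 ω]; exact ht) hex
        have hcard : L t ω = n0 := by rw [hL]; exact natCard_eq _ (hSmono ω) t n0 hn1 hn2
        rw [hcard]
        exact Or.inl ⟨by rw [← hSU]; exact hn1, by rw [← hSU]; exact hn2⟩
      · push_neg at hex
        have hcard : L t ω = 0 := by rw [hL]; exact natCard_eq_zero _ t hex
        rw [hcard]
        exact Or.inr ⟨fun k => by rw [← hSU]; exact hex k, rfl⟩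
    · rintro (⟨h1, h2⟩ | ⟨hall, rfl⟩)
      · rw [hL]
        exact natCard_eq _ (hSmono ω) t n (by rw [hSU]; exact h1) (by rw [hSU]; exact h2)
      · rw [hL]
        exact natCard_eq_zero _ t fun k => by rw [hSU]; exact hall k
  have hLmeas : ∀ t : ℝ, 0 ≤ t → Measurable (L t) := by
    intro t ht
    apply measurable_to_countable'
    intro n
    have h : L t ⁻¹' {n} = Uvec ⁻¹' Dst t n := by
      ext ω
      simp only [Set.mem_preimage, Set.mem_singleton_iff]
      exact hLchar t ht n ω
    rw [h]
    exact hUvecMeas (Dst_meas t n)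
  -- the good set
  set G : Set Ω := Uvec ⁻¹' Gtl with hG_def
  have hGmeas : MeasurableSet G := hUvecMeas Gtl_meas
  have hGood : ∀ ω ∈ G, ∀ t : ℝ, ∃ k, t < S k ω := by
    intro ω hω t
    obtain ⟨r, hr⟩ := exists_nat_gt t
    obtain ⟨k, hk⟩ := hω r
    refine ⟨k, lt_trans hr ?_⟩
    rw [hSU]; exact hk
  -- the good set has probability one
  have hGone : P G = 1 := by
    have hmeas0 : MeasurableSet {ω | U 1 ω = 0} := hUmeas 1 (measurableSet_singleton 0)
    have hpos : 0 < P {ω | 0 < U 1 ω} := by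
      have hc : {ω | 0 < U 1 ω} = {ω | U 1 ω = 0}ᶜ := by
        ext ω
        simp only [Set.mem_compl_iff, Set.mem_setOf_eq]
        constructor
        · intro h h'; rw [h'] at h; exact lt_irrefl 0 h
        · intro h; exact lt_of_le_of_ne (hUnonneg 1 ω) (Ne.symm h)
      rw [hc, prob_compl_eq_one_sub hmeas0]
      exact tsub_pos_of_lt hU0
    have hup : {ω | 0 < U 1 ω} = ⋃ j : ℕ, {ω | 1 / (j + 1 : ℝ) < U 1 ω} := by
      ext ω
      simp only [Set.mem_setOf_eq, Set.mem_iUnion]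
      constructor
      · intro h
        obtain ⟨j, hj⟩ := exists_nat_one_div_lt h
        exact ⟨j, hj⟩
      · rintro ⟨j, hj⟩
        exact lt_trans (by positivity) hj
    obtain ⟨j0, hj0⟩ : ∃ j : ℕ, P {ω | 1 / (j + 1 : ℝ) < U 1 ω} ≠ 0 := by
      by_contra hall
      push_neg at hall
      rw [hup] at hpos
      rw [measure_iUnion_null fun j => hall j] at hpos
      exact lt_irrefl 0 hpos
    set δ : ℝ := 1 / (j0 + 1 : ℝ) with hδ_def
    have hδpos : 0 < δ := by positivity
    set A : ℕ → Set Ω := fun k => {ω | δ < U (k + 1) ω} with hA_def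
    have hAmeas : ∀ k, MeasurableSet (A k) :=
      fun k => measurableSet_lt measurable_const (hUmeas (k + 1))
    have hAp : ∀ k, P (A k) = P {ω | δ < U 1 ω} := by
      intro k
      have h := (hUident k).measure_mem_eq (measurableSet_Ioi (a := δ))
      exact h
    have hAindep : iIndepSet A P := by
      rw [ProbabilityTheory.iIndepSet_iff_meas_biInter hAmeas]
      intro s
      exact hUindep.meas_biInter fun k _ => ⟨Set.Ioi δ, measurableSet_Ioi, rfl⟩
    have hAsum : (∑' k, P (A k)) = ∞ := by
      have hne : P {ω | δ < U 1 ω} ≠ 0 := hj0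
      calc (∑' k, P (A k)) = ∑' _k : ℕ, P {ω | δ < U 1 ω} := by
            exact tsum_congr fun k => hAp k
        _ = ∞ := ENNReal.tsum_const_eq_top_of_ne_zero hne
    have hlim := ProbabilityTheory.measure_limsup_eq_one hAmeas hAindep hAsum
    have hsub : Filter.limsup A Filter.atTop ⊆ G := by
      intro ω hω
      have hfreq : ∃ᶠ k in Filter.atTop, ω ∈ A k :=
        (Filter.mem_limsup_iff_frequently_mem).1 hω
      have hinf : {k : ℕ | ω ∈ A k}.Infinite := by
        apply Set.infinite_of_forall_exists_gt
        intro a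
        obtain ⟨b, hb, hb'⟩ := (Filter.frequently_atTop.1 hfreq) (a + 1)
        exact ⟨b, hb', by omega⟩
      intro r
      obtain ⟨M, hM⟩ := exists_nat_gt ((r : ℝ) / δ)
      obtain ⟨tf, htf_sub, htf_card⟩ := hinf.exists_subset_card_eq M
      refine ⟨tf.sup id + 1, ?_⟩
      have h1 : (r : ℝ) < M * δ := by
        rw [div_lt_iff₀ hδpos] at hM; linarith
      have h2 : (M : ℝ) * δ = ∑ _i ∈ tf, δ := by
        rw [Finset.sum_const, htf_card, nsmul_eq_mul]
      have h3 : ∑ _i ∈ tf, δ ≤ ∑ i ∈ tf, U (i + 1) ω := by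
        refine Finset.sum_le_sum fun i hi => ?_
        exact le_of_lt (htf_sub hi)
      have h4 : ∑ i ∈ tf, U (i + 1) ω ≤ ∑ i ∈ Finset.range (tf.sup id + 1), U (i + 1) ω := by
        refine Finset.sum_le_sum_of_subset_of_nonneg ?_ fun i _ _ => hUnonneg _ ω
        intro i hi
        exact Finset.mem_range.2 (Nat.lt_succ_of_le (Finset.le_sup (f := id) hi))
      have h5 : Stl (tf.sup id + 1) (Uvec ω) = ∑ i ∈ Finset.range (tf.sup id + 1), U (i + 1) ω :=
        rfl
      rw [h5]
      linarith
    exact le_antisymm prob_le_one (hlim ▸ measure_mono hsub)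
  have hGc : P Gᶜ = 0 := by
    rw [prob_compl_eq_zero_iff hGmeas]; exact hGone
  -- values of L at good points
  have hLval : ∀ ω ∈ G, ∀ t : ℝ, 0 ≤ t → S (L t ω) ω ≤ t ∧ t < S (L t ω + 1) ω := by
    intro ω hω t ht
    obtain ⟨n0, h1, h2⟩ := exists_step (fun k => S k ω) t (by show S 0 ω ≤ t; rw [hS0 ω]; exact ht) (hGood ω hω t)
    have h : L t ω = n0 := by rw [hL]; exact natCard_eq _ (hSmono ω) t n0 h1 h2
    rw [h]; exact ⟨h1, h2⟩
  have hLmono : ∀ ω ∈ G, ∀ s t : ℝ, 0 ≤ s → s ≤ t → L s ω ≤ L t ω := by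
    intro ω hω s t hs hst
    by_contra hcon
    push_neg at hcon
    have h1 := (hLval ω hω s hs).1
    have h2 := (hLval ω hω t (le_trans hs hst)).2
    have h3 : S (L t ω + 1) ω ≤ S (L s ω) ω := hSmono ω (by omega)
    linarith
  -- measurability of T and of the integrand
  have hTmeas : ∀ t : ℝ, 0 ≤ t → Measurable (T t) := by
    intro t ht
    have h : T t = fun ω =>
        (fun pr : Ω × ℕ => ∑ l ∈ Finset.range (pr.2 + 1), η l pr.1) (ω, L t ω) :=
      funext fun ω => hT t ω
    rw [h]
    have hm2 : Measurable fun pr : Ω × ℕ => ∑ l ∈ Finset.range (pr.2 + 1), η l pr.1 :=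
      measurable_from_prod_countable_left fun n =>
        Finset.measurable_sum (Finset.range (n + 1)) fun l _ => hηmeas l
    exact hm2.comp (measurable_id.prodMk (hLmeas t ht))
  have hfmeas : Measurable fun ω => (-1 : ℝ) ^ (∑ j : Fin m, T (x j) ω) :=
    measurable_from_nat.comp (Finset.measurable_sum _ fun j _ => hTmeas (x j) (hx0 j))
  have hprodmeas : ∀ s : Finset ℕ, Measurable fun ω => ∏ l ∈ s, (-1 : ℝ) ^ η l ω :=
    fun s => Finset.measurable_prod _ fun l _ => measurable_from_nat.comp (hηmeas l)
  have hprodint : ∀ s : Finset ℕ, Integrable (fun ω => ∏ l ∈ s, (-1 : ℝ) ^ η l ω) P := by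
    intro s
    refine Integrable.mono' (integrable_const (1 : ℝ)) (hprodmeas s).aestronglyMeasurable
      (Filter.Eventually.of_forall fun ω => ?_)
    have h : |∏ l ∈ s, (-1 : ℝ) ^ η l ω| = 1 := by
      rw [Finset.abs_prod]
      refine Finset.prod_eq_one fun l _ => ?_
      rw [abs_pow, abs_neg, abs_one, one_pow]
    rw [Real.norm_eq_abs, h]
  have hfint : Integrable (fun ω => (-1 : ℝ) ^ (∑ j : Fin m, T (x j) ω)) P := by
    refine Integrable.mono' (integrable_const (1 : ℝ)) hfmeas.aestronglyMeasurable
      (Filter.Eventually.of_forall fun ω => ?_)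
    rw [Real.norm_eq_abs, abs_pow, abs_neg, abs_one, one_pow]
  -- expectation of a single factor is zero
  have hint1 : ∀ l : ℕ, ∫ ω, (-1 : ℝ) ^ η l ω ∂P = 0 := by
    intro l
    obtain ⟨hb1, hb0⟩ := hηbern l
    have hs0 : MeasurableSet {ω | η l ω = 0} := hηmeas l (measurableSet_singleton 0)
    have hs1 : MeasurableSet {ω | η l ω = 1} := hηmeas l (measurableSet_singleton 1)
    have hdisj : Disjoint {ω | η l ω = 0} {ω | η l ω = 1} := by
      rw [Set.disjoint_left]
      intro ω h0 h1
      simp only [Set.mem_setOf_eq] at h0 h1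
      omega
    have hunion : P ({ω | η l ω = 0} ∪ {ω | η l ω = 1}) = 1 := by
      rw [measure_union hdisj hs1, hb0, hb1, ENNReal.add_halves]
    have hcompl : P ({ω | η l ω = 0} ∪ {ω | η l ω = 1})ᶜ = 0 := by
      rw [prob_compl_eq_zero_iff (hs0.union hs1)]; exact hunion
    have hint : Integrable (fun ω => (-1 : ℝ) ^ η l ω) P := by
      have h := hprodint {l}
      simpa using h
    have htr : ((1 : ℝ≥0∞) / 2).toReal = (1 : ℝ) / 2 := by
      rw [ENNReal.toReal_div]; simp
    calc ∫ ω, (-1 : ℝ) ^ η l ω ∂P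
        = (∫ ω in {ω | η l ω = 0} ∪ {ω | η l ω = 1}, (-1 : ℝ) ^ η l ω ∂P) +
          ∫ ω in ({ω | η l ω = 0} ∪ {ω | η l ω = 1})ᶜ, (-1 : ℝ) ^ η l ω ∂P :=
          (integral_add_compl (hs0.union hs1) hint).symm
      _ = (∫ ω in {ω | η l ω = 0} ∪ {ω | η l ω = 1}, (-1 : ℝ) ^ η l ω ∂P) + 0 := by
          rw [setIntegral_measure_zero _ hcompl]
      _ = (∫ ω in {ω | η l ω = 0}, (-1 : ℝ) ^ η l ω ∂P) +
          (∫ ω in {ω | η l ω = 1}, (-1 : ℝ) ^ η l ω ∂P) + 0 := by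
          rw [setIntegral_union hdisj hs1 hint.integrableOn hint.integrableOn]
      _ = 0 := by
          have h0 : ∫ ω in {ω | η l ω = 0}, (-1 : ℝ) ^ η l ω ∂P = 1 / 2 := by
            rw [setIntegral_congr_fun hs0 (g := fun _ => (1 : ℝ))
              (fun ω hω => by simp only [Set.mem_setOf_eq] at hω; rw [hω, pow_zero])]
            rw [setIntegral_const, measureReal_def, hb0, htr, smul_eq_mul, mul_one]
          have h1 : ∫ ω in {ω | η l ω = 1}, (-1 : ℝ) ^ η l ω ∂P = -(1 / 2) := by
            rw [setIntegral_congr_fun hs1 (g := fun _ => (-1 : ℝ))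
              (fun ω hω => by simp only [Set.mem_setOf_eq] at hω; rw [hω, pow_one])]
            rw [setIntegral_const, measureReal_def, hb1, htr, smul_eq_mul]
            ring
          rw [h0, h1]
          ring
  -- expectation of a product over a nonempty finset is zero
  have hprod0 : ∀ s : Finset ℕ, s.Nonempty →
      ∫ ω, ∏ l ∈ s, (-1 : ℝ) ^ η l ω ∂P = 0 := by
    rintro s ⟨l₀, hl₀⟩
    have hF : iIndepFun
        (fun l => (fun k : ℕ => (-1 : ℝ) ^ k) ∘ η l) P :=
      hηindep.comp (fun _ k => (-1 : ℝ) ^ k) fun _ => measurable_from_nat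
    have hFmeas : ∀ l : ℕ, Measurable ((fun k : ℕ => (-1 : ℝ) ^ k) ∘ η l) :=
      fun l => measurable_from_nat.comp (hηmeas l)
    have hindep := hF.indepFun_finset_prod_of_notMem hFmeas (Finset.notMem_erase l₀ s)
    have hre : (fun ω => ∏ l ∈ s, (-1 : ℝ) ^ η l ω) =
        (∏ j ∈ s.erase l₀, ((fun k : ℕ => (-1 : ℝ) ^ k) ∘ η j)) *
          ((fun k : ℕ => (-1 : ℝ) ^ k) ∘ η l₀) := by
      funext ω
      rw [Pi.mul_apply, Finset.prod_apply]
      exact (Finset.prod_erase_mul s _ hl₀).symm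
    have hmeas_pi : Measurable (∏ j ∈ s.erase l₀, ((fun k : ℕ => (-1 : ℝ) ^ k) ∘ η j)) := by
      have he : (∏ j ∈ s.erase l₀, ((fun k : ℕ => (-1 : ℝ) ^ k) ∘ η j)) =
          fun ω => ∏ l ∈ s.erase l₀, (-1 : ℝ) ^ η l ω := by
        funext ω; rw [Finset.prod_apply]; rfl
      rw [he]; exact hprodmeas _
    rw [hre, hindep.integral_mul_eq_mul_integral hmeas_pi.aestronglyMeasurable (hFmeas l₀).aestronglyMeasurable]
    have h := hint1 l₀
    rw [show ((fun k : ℕ => (-1 : ℝ) ^ k) ∘ η l₀) = fun ω => (-1 : ℝ) ^ η l₀ ω from rfl, h,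
      mul_zero]
    -- the partition of G according to the values of L
  set Bn : (Fin m → ℕ) → Set Ω := fun n => G ∩ {ω | ∀ i, L (x i) ω = n i} with hBn_def
  have hBmem : ∀ n ω, ω ∈ Bn n ↔ ω ∈ G ∧ ∀ i, L (x i) ω = n i := by
    intro n ω
    rw [hBn_def]
    exact Set.mem_inter_iff ω _ _
  have hBmeas : ∀ n, MeasurableSet (Bn n) := by
    intro n
    rw [hBn_def]
    refine hGmeas.inter ?_
    have h : {ω | ∀ i, L (x i) ω = n i} = ⋂ i, L (x i) ⁻¹' {n i} := by
      ext ω; simp [Set.mem_iInter]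
    rw [h]
    exact MeasurableSet.iInter fun i => hLmeas (x i) (hx0 i) (measurableSet_singleton _)
  have hBdisj : Pairwise (Function.onFun Disjoint Bn) := by
    intro n n' hne
    rw [Function.onFun, Set.disjoint_left]
    intro ω h1 h2
    rw [hBmem] at h1 h2
    exact hne (funext fun i => (h1.2 i).symm.trans (h2.2 i))
  have hBunion : (⋃ n : Fin m → ℕ, Bn n) = G := by
    ext ω
    simp only [Set.mem_iUnion]
    constructor
    · rintro ⟨n, hω⟩; exact ((hBmem n ω).1 hω).1
    · intro hωG
      exact ⟨fun i => L (x i) ω, (hBmem _ ω).2 ⟨hωG, fun i => rfl⟩⟩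
  have hBpre : ∀ n : Fin m → ℕ, Bn n = Uvec ⁻¹' (Gtl ∩ ⋂ i, Dst (x i) (n i)) := by
    intro n
    ext ω
    rw [hBmem]
    simp only [Set.mem_preimage, Set.mem_inter_iff, Set.mem_iInter]
    refine and_congr Iff.rfl (forall_congr' fun i => ?_)
    exact hLchar (x i) (hx0 i) (n i) ω
  -- the key pointwise identity on the good set
  set x' : ℕ → ℝ := fun j => if h : j < m then x ⟨j, h⟩ else 0 with hx'_def
  have hkey : ∀ ω ∈ G, (-1 : ℝ) ^ (∑ j : Fin m, T (x j) ω)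
      = ∏ l ∈ Aset m q (fun i => L (x i) ω), (-1 : ℝ) ^ η l ω := by
    intro ω hω
    have hNmono : ∀ i i' : Fin m, i ≤ i' → L (x i) ω ≤ L (x i') ω :=
      fun i i' h => hLmono ω hω _ _ (hx0 i) (hxmono h)
    have hs1 : ∑ j : Fin m, T (x j) ω = ∑ j ∈ Finset.range m, T (x' j) ω := by
      rw [← Fin.sum_univ_eq_sum_range (fun j => T (x' j) ω) m]
      refine Finset.sum_congr rfl fun i _ => ?_
      congr 1
      simp [hx'_def, i.isLt]
    have hs2 : ∑ j ∈ Finset.range m, T (x' j) ω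
        = ∑ j ∈ Finset.range q, (T (x' (2 * j)) ω + T (x' (2 * j + 1)) ω) := by
      rw [hq2]; exact sum_range_two_mul (fun i => T (x' i) ω) q
    rw [hs1, hs2, ← Finset.prod_pow_eq_pow_sum]
    have hdisj : (↑(Finset.range q) : Set ℕ).PairwiseDisjoint fun j =>
        if h : 2 * j + 1 < m then
          Finset.Ico (L (x ⟨2 * j, Nat.lt_of_succ_lt h⟩) ω + 1)
            (L (x ⟨2 * j + 1, h⟩) ω + 1) else ∅ := by
      have key : ∀ j j' : ℕ, j < j' → j' < q → Disjoint
          (if h : 2 * j + 1 < m then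
            Finset.Ico (L (x ⟨2 * j, Nat.lt_of_succ_lt h⟩) ω + 1)
              (L (x ⟨2 * j + 1, h⟩) ω + 1) else ∅)
          (if h : 2 * j' + 1 < m then
            Finset.Ico (L (x ⟨2 * j', Nat.lt_of_succ_lt h⟩) ω + 1)
              (L (x ⟨2 * j' + 1, h⟩) ω + 1) else ∅) := by
        intro j j' hjj' hj'
        have h1 : 2 * j + 1 < m := by omega
        have h2 : 2 * j' + 1 < m := by omega
        rw [dif_pos h1, dif_pos h2, Finset.disjoint_left]
        intro l hl hl'
        rw [Finset.mem_Ico] at hl hl'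
        have hmid : L (x ⟨2 * j + 1, h1⟩) ω ≤ L (x ⟨2 * j', Nat.lt_of_succ_lt h2⟩) ω :=
          hNmono _ _ (by rw [Fin.mk_le_mk]; omega)
        omega
      intro a ha b hb hab
      rcases lt_or_gt_of_ne hab with h | h
      · exact key a b h (by simpa using hb)
      · exact (key b a h (by simpa using ha)).symm
    simp only [Aset]
    rw [Finset.prod_biUnion hdisj]
    refine Finset.prod_congr rfl fun j hj => ?_
    have hjq : j < q := Finset.mem_range.1 hj
    have h2j : 2 * j + 1 < m := by omega
    rw [dif_pos h2j]
    have hxa : x' (2 * j) = x ⟨2 * j, Nat.lt_of_succ_lt h2j⟩ := by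
      simp [hx'_def, Nat.lt_of_succ_lt h2j]
    have hxb : x' (2 * j + 1) = x ⟨2 * j + 1, h2j⟩ := by
      simp [hx'_def, h2j]
    have hab : L (x ⟨2 * j, Nat.lt_of_succ_lt h2j⟩) ω ≤ L (x ⟨2 * j + 1, h2j⟩) ω :=
      hNmono _ _ (by rw [Fin.mk_le_mk]; omega)
    have hTb : T (x' (2 * j + 1)) ω
        = T (x' (2 * j)) ω + ∑ l ∈ Finset.Ico (L (x ⟨2 * j, Nat.lt_of_succ_lt h2j⟩) ω + 1)
            (L (x ⟨2 * j + 1, h2j⟩) ω + 1), η l ω := by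
      rw [hxa, hxb, hT, hT]
      exact (Finset.sum_range_add_sum_Ico _ (by omega)).symm
    rw [hTb]
    rw [show T (x' (2 * j)) ω + (T (x' (2 * j)) ω +
        ∑ l ∈ Finset.Ico (L (x ⟨2 * j, Nat.lt_of_succ_lt h2j⟩) ω + 1)
          (L (x ⟨2 * j + 1, h2j⟩) ω + 1), η l ω)
        = 2 * T (x' (2 * j)) ω +
          ∑ l ∈ Finset.Ico (L (x ⟨2 * j, Nat.lt_of_succ_lt h2j⟩) ω + 1)
            (L (x ⟨2 * j + 1, h2j⟩) ω + 1), η l ω by ring]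
    rw [pow_add, pow_mul, neg_one_sq, one_pow, one_mul, ← Finset.prod_pow_eq_pow_sum]
  -- relating the target event to emptiness of the exceptional set
  have hAE : ∀ ω : Ω, (∀ j : ℕ, ∀ h : 2 * j + 1 < m,
      L (x ⟨2 * j + 1, h⟩) ω - L (x ⟨2 * j, Nat.lt_of_succ_lt h⟩) ω = 0)
      ↔ Aset m q (fun i => L (x i) ω) = ∅ := by
    intro ω
    constructor
    · intro hE
      rw [Finset.eq_empty_iff_forall_notMem]
      intro l hl
      simp only [Aset, Finset.mem_biUnion] at hl
      obtain ⟨j, hj, hl⟩ := hl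
      have hjq : j < q := Finset.mem_range.1 hj
      have h2j : 2 * j + 1 < m := by omega
      rw [dif_pos h2j, Finset.mem_Ico] at hl
      have := hE j h2j
      omega
    · intro hA j h2j
      have hjq : j < q := by omega
      by_contra hne
      have hmem : L (x ⟨2 * j, Nat.lt_of_succ_lt h2j⟩) ω + 1
          ∈ Aset m q (fun i => L (x i) ω) := by
        simp only [Aset, Finset.mem_biUnion]
        refine ⟨j, Finset.mem_range.2 hjq, ?_⟩
        rw [dif_pos h2j, Finset.mem_Ico]
        omega
      rw [hA] at hmem
      exact absurd hmem (Finset.notMem_empty _)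
  -- the target event
  set Eset : Set Ω := {ω | ∀ j : ℕ, ∀ h : 2 * j + 1 < m,
      L (x ⟨2 * j + 1, h⟩) ω - L (x ⟨2 * j, Nat.lt_of_succ_lt h⟩) ω = 0} with hE_def
  have hEmem : ∀ ω, ω ∈ Eset ↔ Aset m q (fun i => L (x i) ω) = ∅ := by
    intro ω
    rw [hE_def]
    exact hAE ω
  have hEmeas : MeasurableSet Eset := by
    have h : Eset = ⋂ j : ℕ, (if h : 2 * j + 1 < m then
        {ω | L (x ⟨2 * j + 1, h⟩) ω - L (x ⟨2 * j, Nat.lt_of_succ_lt h⟩) ω = 0}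
        else Set.univ) := by
      ext ω
      rw [hE_def]
      simp only [Set.mem_setOf_eq, Set.mem_iInter]
      constructor
      · intro hE j
        by_cases h : 2 * j + 1 < m
        · rw [dif_pos h]; exact hE j h
        · rw [dif_neg h]; exact Set.mem_univ ω
      · intro hC j h
        have := hC j
        rw [dif_pos h] at this
        exact this
    rw [h]
    refine MeasurableSet.iInter fun j => ?_
    by_cases h : 2 * j + 1 < m
    · rw [dif_pos h]
      exact ((hLmeas _ (hx0 _)).sub (hLmeas _ (hx0 _))) (measurableSet_singleton 0)
    · rw [dif_neg h]; exact MeasurableSet.univ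
  -- integral over each piece
  have hinteg : ∀ n : Fin m → ℕ, ∫ ω in Bn n, (-1 : ℝ) ^ (∑ j : Fin m, T (x j) ω) ∂P
      = (P (Bn n)).toReal * (if Aset m q n = ∅ then (1 : ℝ) else 0) := by
    intro n
    have hcongr : ∫ ω in Bn n, (-1 : ℝ) ^ (∑ j : Fin m, T (x j) ω) ∂P
        = ∫ ω in Bn n, (∏ l ∈ Aset m q n, (-1 : ℝ) ^ η l ω) ∂P := by
      refine setIntegral_congr_fun (hBmeas n) fun ω hω => ?_
      obtain ⟨hωG, hωn⟩ := (hBmem n ω).1 hω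
      rw [hkey ω hωG, show (fun i => L (x i) ω) = n from funext hωn]
    rw [hcongr]
    have hDn : MeasurableSet (Gtl ∩ ⋂ i, Dst (x i) (n i)) :=
      Gtl_meas.inter (MeasurableSet.iInter fun i => Dst_meas _ _)
    have hφ : Measurable fun u : ℕ → ℝ =>
        (Gtl ∩ ⋂ i, Dst (x i) (n i)).indicator (fun _ => (1 : ℝ)) u :=
      measurable_const.indicator hDn
    have hψ : Measurable fun e : ℕ → ℕ => ∏ l ∈ Aset m q n, (-1 : ℝ) ^ e l :=
      Finset.measurable_prod _ fun l _ => measurable_from_nat.comp (measurable_pi_apply l)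
    have hIndep : IndepFun
        (fun ω => (Gtl ∩ ⋂ i, Dst (x i) (n i)).indicator (fun _ => (1 : ℝ)) (Uvec ω))
        (fun ω => ∏ l ∈ Aset m q n, (-1 : ℝ) ^ η l ω) P := hUη.comp hφ hψ
    have hiec : ∀ ω, (Bn n).indicator (fun _ => (1 : ℝ)) ω
        = (Gtl ∩ ⋂ i, Dst (x i) (n i)).indicator (fun _ => (1 : ℝ)) (Uvec ω) := by
      intro ω
      by_cases hω : ω ∈ Bn n
      · rw [Set.indicator_of_mem hω, Set.indicator_of_mem]
        rw [← Set.mem_preimage, ← hBpre n]; exact hω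
      · rw [Set.indicator_of_notMem hω, Set.indicator_of_notMem]
        rw [← Set.mem_preimage, ← hBpre n]; exact hω
    calc ∫ ω in Bn n, (∏ l ∈ Aset m q n, (-1 : ℝ) ^ η l ω) ∂P
        = ∫ ω, (Bn n).indicator (fun ω' => ∏ l ∈ Aset m q n, (-1 : ℝ) ^ η l ω') ω ∂P :=
          (integral_indicator (hBmeas n)).symm
      _ = ∫ ω, ((Bn n).indicator (fun _ => (1 : ℝ)) ω) *
            (∏ l ∈ Aset m q n, (-1 : ℝ) ^ η l ω) ∂P := by
          congr 1
          funext ω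
          by_cases hω : ω ∈ Bn n
          · rw [Set.indicator_of_mem hω, Set.indicator_of_mem hω, one_mul]
          · rw [Set.indicator_of_notMem hω, Set.indicator_of_notMem hω, zero_mul]
      _ = ∫ ω, ((Gtl ∩ ⋂ i, Dst (x i) (n i)).indicator (fun _ => (1 : ℝ)) (Uvec ω)) *
            (∏ l ∈ Aset m q n, (-1 : ℝ) ^ η l ω) ∂P := by
          congr 1
          funext ω
          rw [hiec ω]
      _ = (∫ ω, (Gtl ∩ ⋂ i, Dst (x i) (n i)).indicator (fun _ => (1 : ℝ)) (Uvec ω) ∂P) *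
            ∫ ω, ∏ l ∈ Aset m q n, (-1 : ℝ) ^ η l ω ∂P :=
          hIndep.integral_fun_mul_eq_mul_integral (hφ.comp hUvecMeas).aestronglyMeasurable
            (hprodmeas _).aestronglyMeasurable
      _ = (P (Bn n)).toReal * (if Aset m q n = ∅ then (1 : ℝ) else 0) := by
          congr 1
          · rw [show (fun ω => (Gtl ∩ ⋂ i, Dst (x i) (n i)).indicator
                (fun _ => (1 : ℝ)) (Uvec ω)) = fun ω => (Bn n).indicator (fun _ => (1 : ℝ)) ω
                from funext fun ω => (hiec ω).symm]
            rw [integral_indicator_const (1 : ℝ) (hBmeas n), smul_eq_mul, mul_one, measureReal_def]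
          · by_cases hA : Aset m q n = ∅
            · rw [if_pos hA, hA]
              simp
            · rw [if_neg hA]
              exact hprod0 _ (Finset.nonempty_iff_ne_empty.2 hA)
  -- assembling everything
  have hae : ∀ᵐ ω ∂P, ω ∈ G := by
    rw [ae_iff]
    exact hGc
  have hrestrict : P.restrict G = P := Measure.restrict_eq_self_of_ae_mem hae
  have hBEdisj : Pairwise (Function.onFun Disjoint fun n : Fin m → ℕ => Bn n ∩ Eset) := by
    intro n n' hne
    exact Disjoint.mono Set.inter_subset_left Set.inter_subset_left (hBdisj hne)
  calc ∫ ω, (-1 : ℝ) ^ (∑ j : Fin m, T (x j) ω) ∂P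
      = ∫ ω in ⋃ n : Fin m → ℕ, Bn n, (-1 : ℝ) ^ (∑ j : Fin m, T (x j) ω) ∂P := by
        rw [hBunion, hrestrict]
    _ = ∑' n : Fin m → ℕ, ∫ ω in Bn n, (-1 : ℝ) ^ (∑ j : Fin m, T (x j) ω) ∂P :=
        integral_iUnion hBmeas hBdisj hfint.integrableOn
    _ = ∑' n : Fin m → ℕ, (P (Bn n ∩ Eset)).toReal := by
        refine tsum_congr fun n => ?_
        rw [hinteg n]
        by_cases hA : Aset m q n = ∅
        · rw [if_pos hA, mul_one]
          congr 2
          symm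
          rw [Set.inter_eq_left]
          intro ω hω
          obtain ⟨hωG, hωn⟩ := (hBmem n ω).1 hω
          rw [hEmem]
          rw [show (fun i => L (x i) ω) = n from funext hωn]
          exact hA
        · rw [if_neg hA, mul_zero]
          symm
          have hempty : Bn n ∩ Eset = ∅ := by
            rw [Set.eq_empty_iff_forall_notMem]
            rintro ω ⟨hωB, hωE⟩
            obtain ⟨hωG, hωn⟩ := (hBmem n ω).1 hωB
            have h1 := (hEmem ω).1 hωE
            rw [show (fun i => L (x i) ω) = n from funext hωn] at h1
            exact hA h1
          rw [hempty]
          simp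
    _ = (∑' n : Fin m → ℕ, P (Bn n ∩ Eset)).toReal :=
        (ENNReal.tsum_toReal_eq fun n => measure_ne_top P _).symm
    _ = (P (⋃ n : Fin m → ℕ, Bn n ∩ Eset)).toReal := by
        congr 1
        exact (measure_iUnion hBEdisj fun n => (hBmeas n).inter hEmeas).symm
    _ = (P Eset).toReal := by
        congr 1
        have hU : (⋃ n : Fin m → ℕ, Bn n ∩ Eset) = G ∩ Eset := by
          rw [← Set.iUnion_inter, hBunion]
        rw [hU]
        refine le_antisymm (measure_mono Set.inter_subset_right) ?_
        calc P Eset = P ((G ∩ Eset) ∪ (Gᶜ ∩ Eset)) := by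
              rw [← Set.union_inter_distrib_right, Set.union_compl_self, Set.univ_inter]
          _ ≤ P (G ∩ Eset) + P (Gᶜ ∩ Eset) := measure_union_le _ _
          _ ≤ P (G ∩ Eset) + 0 := by
              refine add_le_add le_rfl ?_
              exact le_trans (measure_mono Set.inter_subset_left) (le_of_eq hGc)
          _ = P (G ∩ Eset) := add_zero _
end

section
/- Let 0 ≤ a_1 ≤ b_1 ≤ a_2 ≤ b_2 ≤ ⋯ ≤ a_k ≤ b_k and set A = {Σ_{j=1}^k (L(b_j) − L(a_j)) > 0}, i.e. the event that at least one renewal time S_l falls in ∪_{j=1}^k (a_j, b_j]. If ℙ(A) > 0, then E[(−1)^{Σ_{j=1}^k (T(b_j) − T(a_j))} | A] = 0. -/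
open MeasureTheory ProbabilityTheory Set

private lemma renewal_aux_sum_sub (x : ℕ → ℕ) (n m : ℕ) :
    (∑ l ∈ Finset.range (m + 1), x l) - (∑ l ∈ Finset.range (n + 1), x l)
      = ∑ l ∈ Finset.Ioc n m, x l := by
  rcases le_or_gt n m with h | h
  · have hIoc : Finset.Ioc n m = Finset.Ico (n + 1) (m + 1) := by
      ext l; simp only [Finset.mem_Ioc, Finset.mem_Ico]; omega
    have h1 : (∑ l ∈ Finset.Ico 0 (n + 1), x l) + ∑ l ∈ Finset.Ico (n + 1) (m + 1), x l
        = ∑ l ∈ Finset.Ico 0 (m + 1), x l :=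
      Finset.sum_Ico_consecutive _ (Nat.zero_le _) (by omega)
    rw [hIoc, Finset.range_eq_Ico, Finset.range_eq_Ico, ← h1]
    omega
  · have hsub : Finset.range (m + 1) ⊆ Finset.range (n + 1) :=
      Finset.range_subset_range.2 (by omega)
    have hle := Finset.sum_le_sum_of_subset hsub (f := x)
    rw [Finset.Ioc_eq_empty (by omega), Finset.sum_empty]
    omega

private lemma renewal_aux_card_eq_iff (f : ℕ → ℝ) (hf : Monotone f) (t : ℝ) (n : ℕ) :
    Nat.card {k : ℕ // 1 ≤ k ∧ f k ≤ t} = n ↔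
      (if n = 0 then (t < f 1 ∨ ∀ m, f (m + 1) ≤ t) else (f n ≤ t ∧ t < f (n + 1))) := by
  classical
  have hcardK : Nat.card {k : ℕ // 1 ≤ k ∧ f k ≤ t} = ({k : ℕ | 1 ≤ k ∧ f k ≤ t}).ncard :=
    Nat.card_coe_set_eq _
  by_cases hall : ∀ m, f (m + 1) ≤ t
  · have hKinf : ({k : ℕ | 1 ≤ k ∧ f k ≤ t}).Infinite := by
      apply infinite_of_injective_forall_mem (f := fun m : ℕ => m + 1)
      · intro a b hab; simpa using hab
      · intro m; exact ⟨by omega, hall m⟩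
    have h0 : Nat.card {k : ℕ // 1 ≤ k ∧ f k ≤ t} = 0 := by
      rw [hcardK]; exact hKinf.ncard
    rcases Nat.eq_zero_or_pos n with rfl | hn
    · simp [h0, hall]
    · rw [if_neg hn.ne', h0]
      constructor
      · intro h; omega
      · rintro ⟨-, h2⟩; exact absurd (hall n) (not_le.2 h2)
  · push_neg at hall
    have hex : ∃ m, t < f (m + 1) := hall
    set N := Nat.find hex with hN
    have hNspec : t < f (N + 1) := Nat.find_spec hex
    have hNmin : ∀ m, m < N → f (m + 1) ≤ t := fun m hm =>
      not_lt.1 (Nat.find_min hex hm)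
    have hKeq : {k : ℕ | 1 ≤ k ∧ f k ≤ t} = Set.Icc 1 N := by
      ext m
      simp only [Set.mem_setOf_eq, Set.mem_Icc]
      constructor
      · rintro ⟨h1, h2⟩
        refine ⟨h1, ?_⟩
        by_contra hgt
        push_neg at hgt
        exact absurd (le_trans (hf (by omega : N + 1 ≤ m)) h2) (not_le.2 hNspec)
      · rintro ⟨h1, h2⟩
        refine ⟨h1, ?_⟩
        have : f ((m - 1) + 1) ≤ t := hNmin _ (by omega)
        rwa [Nat.sub_add_cancel h1] at this
    have hcard : Nat.card {k : ℕ // 1 ≤ k ∧ f k ≤ t} = N := by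
      rw [hcardK, hKeq, ← Finset.coe_Icc, Set.ncard_coe_finset, Nat.card_Icc]
      omega
    rw [hcard]
    rcases Nat.eq_zero_or_pos n with rfl | hn
    · simp only [if_pos rfl]
      constructor
      · intro h
        left
        rw [h] at hNspec
        exact hNspec
      · rintro (h | h)
        · exact Nat.find_eq_zero hex |>.2 h
        · obtain ⟨m, hm⟩ := hall
          exact absurd (h m) (not_le.2 hm)
    · rw [if_neg hn.ne']
      constructor
      · rintro rfl
        refine ⟨?_, hNspec⟩
        have : f ((N - 1) + 1) ≤ t := hNmin _ (by omega)
        rwa [Nat.sub_add_cancel hn] at this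
      · rintro ⟨h1, h2⟩
        have hle : N ≤ n := Nat.find_le h2
        rcases eq_or_lt_of_le hle with heq | hlt
        · exact heq
        · exact absurd (le_trans (hf (by omega : N + 1 ≤ n)) h1) (not_le.2 hNspec)

private lemma renewal_aux_meas_card {α : Type*} [MeasurableSpace α] (f : ℕ → α → ℝ)
    (hmeas : ∀ k, Measurable (f k)) (hmono : ∀ x, Monotone fun k => f k x) (t : ℝ) :
    Measurable (fun x => Nat.card {k : ℕ // 1 ≤ k ∧ f k x ≤ t}) := by
  apply measurable_to_countable'
  intro n
  have hset : (fun x => Nat.card {k : ℕ // 1 ≤ k ∧ f k x ≤ t}) ⁻¹' {n}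
      = {x | if n = 0 then (t < f 1 x ∨ ∀ m, f (m + 1) x ≤ t)
          else (f n x ≤ t ∧ t < f (n + 1) x)} := by
    ext x
    simp only [Set.mem_preimage, Set.mem_singleton_iff, Set.mem_setOf_eq]
    exact renewal_aux_card_eq_iff (fun k => f k x) (hmono x) t n
  rw [hset]
  rcases Nat.eq_zero_or_pos n with rfl | hn
  · simp only [eq_self_iff_true, if_true]
    have : {x | t < f 1 x ∨ ∀ m, f (m + 1) x ≤ t}
        = {x | t < f 1 x} ∪ ⋂ m, {x | f (m + 1) x ≤ t} := by
      ext x; simp [Set.mem_iInter]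
    rw [this]
    exact (measurableSet_lt measurable_const (hmeas 1)).union
      (MeasurableSet.iInter fun m => measurableSet_le (hmeas (m + 1)) measurable_const)
  · simp only [if_neg hn.ne']
    exact (measurableSet_le (hmeas n) measurable_const).inter
      (measurableSet_lt measurable_const (hmeas (n + 1)))

private lemma renewal_aux_int_eta {Ω : Type*} [MeasurableSpace Ω] (P : Measure Ω)
    [IsProbabilityMeasure P] (g : Ω → ℕ) (hg : Measurable g)
    (h1 : P {ω | g ω = 1} = 1 / 2) (h0 : P {ω | g ω = 0} = 1 / 2) :
    ∫ ω, (-1 : ℝ) ^ (g ω) ∂P = 0 := by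
  have hm1 : MeasurableSet {ω | g ω = 1} := hg (measurableSet_singleton 1)
  have hm0 : MeasurableSet {ω | g ω = 0} := hg (measurableSet_singleton 0)
  have hdisj : Disjoint {ω | g ω = 0} {ω | g ω = 1} := by
    rw [Set.disjoint_left]
    rintro ω ha hb
    simp only [Set.mem_setOf_eq] at ha hb
    omega
  have hunion : P ({ω | g ω = 0} ∪ {ω | g ω = 1}) = 1 := by
    rw [measure_union hdisj hm1, h0, h1, ENNReal.add_halves]
  have hae : ∀ᵐ ω ∂P, ω ∈ {ω | g ω = 0} ∪ {ω | g ω = 1} := by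
    rw [ae_iff]
    have hc := measure_compl (hm0.union hm1) (measure_ne_top P _)
    rw [hunion, measure_univ, tsub_self] at hc
    exact hc
  have heq : (fun ω => (-1 : ℝ) ^ (g ω))
      =ᵐ[P] fun ω => 1 - 2 * Set.indicator {ω | g ω = 1} (fun _ => (1 : ℝ)) ω := by
    filter_upwards [hae] with ω hω
    rcases hω with h | h
    · simp only [Set.mem_setOf_eq] at h
      simp [Set.indicator_apply, h]
    · simp only [Set.mem_setOf_eq] at h
      simp [Set.indicator_apply, h]
      norm_num
  rw [integral_congr_ae heq]
  have hint : Integrable (Set.indicator {ω | g ω = 1} (fun _ => (1 : ℝ))) P :=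
    (integrable_const 1).indicator hm1
  rw [integral_sub (integrable_const 1) (hint.const_mul 2), integral_const_mul 2,
    integral_indicator_const (1 : ℝ) hm1, integral_const, measureReal_def, measureReal_def, h1]
  simp [ENNReal.toReal_div]

private lemma renewal_aux_int_prod {Ω : Type*} [MeasurableSpace Ω] (P : Measure Ω)
    [IsProbabilityMeasure P] (η : ℕ → Ω → ℕ) (hηmeas : ∀ m, Measurable (η m))
    (hηindep : iIndepFun η P)
    (hηbern : ∀ m, P {ω | η m ω = 1} = 1 / 2 ∧ P {ω | η m ω = 0} = 1 / 2)
    (I : Finset ℕ) (hI : I.Nonempty) :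
    ∫ ω, ∏ l ∈ I, (-1 : ℝ) ^ (η l ω) ∂P = 0 := by
  classical
  obtain ⟨l₀, hl₀⟩ := hI
  set g : ℕ → Ω → ℝ := fun l ω => (-1 : ℝ) ^ (η l ω) with hgdef
  have hgmeas : ∀ l, Measurable (g l) :=
    fun l => (Measurable.of_discrete (f := fun n : ℕ => (-1 : ℝ) ^ n)).comp (hηmeas l)
  have hgindep : iIndepFun g P :=
    hηindep.comp (fun _ (n : ℕ) => (-1 : ℝ) ^ n) (fun _ => Measurable.of_discrete)
  have hgabs : ∀ l ω, ‖g l ω‖ = 1 := by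
    intro l ω
    simp [hgdef, Real.norm_eq_abs, abs_pow]
  have happ : ∀ (s : Finset ℕ), (∏ l ∈ s, g l) = fun ω => ∏ l ∈ s, g l ω :=
    fun s => funext fun ω => Finset.prod_apply ω s g
  have hint : ∀ (s : Finset ℕ), Integrable (∏ l ∈ s, g l) P := by
    intro s
    refine Integrable.mono' (integrable_const 1) ?_ (ae_of_all _ ?_)
    · rw [happ]
      exact (Finset.measurable_prod s fun l _ => hgmeas l).aestronglyMeasurable
    · intro ω
      rw [happ]
      rw [Real.norm_eq_abs, Finset.abs_prod]
      calc ∏ l ∈ s, |g l ω| = ∏ l ∈ s, 1 := by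
            refine Finset.prod_congr rfl fun l _ => ?_
            rw [← Real.norm_eq_abs]
            exact hgabs l ω
        _ = 1 := Finset.prod_const_one
        _ ≤ 1 := le_refl 1
  have hIndep : IndepFun (∏ l ∈ I.erase l₀, g l) (g l₀) P :=
    hgindep.indepFun_finsetProd_of_notMem hgmeas (Finset.notMem_erase l₀ I)
  have hintg : Integrable (g l₀) P := by
    refine Integrable.mono' (integrable_const 1) (hgmeas l₀).aestronglyMeasurable
      (ae_of_all _ fun ω => le_of_eq (hgabs l₀ ω))
  have h0 : ∫ ω, g l₀ ω ∂P = 0 :=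
    renewal_aux_int_eta P (η l₀) (hηmeas l₀) (hηbern l₀).1 (hηbern l₀).2
  have hmain := hIndep.integral_mul_eq_mul_integral (hint _).aestronglyMeasurable hintg.aestronglyMeasurable
  have hprodeq : ((∏ l ∈ I.erase l₀, g l) * g l₀) = fun ω => ∏ l ∈ I, g l ω := by
    funext ω
    rw [Pi.mul_apply, Finset.prod_apply]
    exact Finset.prod_erase_mul I (fun l => g l ω) hl₀
  rw [hprodeq] at hmain
  rw [show (fun ω => ∏ l ∈ I, (-1 : ℝ) ^ (η l ω)) = fun ω => ∏ l ∈ I, g l ω from rfl] at *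
  rw [hmain, h0, mul_zero]
/-- For the renewal reward process `T(t) = Σ_{l=0}^{L(t)} η_l`: if
`0 ≤ a₁ ≤ b₁ ≤ a₂ ≤ ⋯ ≤ a_k ≤ b_k` and `A = {Σ_j (L(b_j) - L(a_j)) > 0}` (at least one
renewal time lies in `∪_j (a_j, b_j]`) has positive probability, then
`E[(-1)^{Σ_j (T(b_j) - T(a_j))} | A] = 0`. -/
theorem renewal_parity_cond_expectation_zero
    {Ω : Type*} [MeasurableSpace Ω] (P : Measure Ω) [IsProbabilityMeasure P]
    (U : ℕ → Ω → ℝ) (η : ℕ → Ω → ℕ)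
    (hUmeas : ∀ m, Measurable (U m))
    (hUnonneg : ∀ m ω, 0 ≤ U m ω)
    (hUindep : iIndepFun (fun m => U (m + 1)) P)
    (hUident : ∀ m, IdentDistrib (U (m + 1)) (U 1) P P)
    (hU0 : P {ω | U 1 ω = 0} < 1)
    (hηmeas : ∀ m, Measurable (η m))
    (hηindep : iIndepFun η P)
    (hηbern : ∀ m, P {ω | η m ω = 1} = 1 / 2 ∧ P {ω | η m ω = 0} = 1 / 2)
    (hUη : IndepFun (fun ω (m : ℕ) => U (m + 1) ω) (fun ω (m : ℕ) => η m ω) P)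
    (S : ℕ → Ω → ℝ) (hS : ∀ k ω, S k ω = ∑ i ∈ Finset.range k, U (i + 1) ω)
    (L : ℝ → Ω → ℕ) (hL : ∀ t ω, L t ω = Nat.card {k : ℕ // 1 ≤ k ∧ S k ω ≤ t})
    (T : ℝ → Ω → ℕ) (hT : ∀ t ω, T t ω = ∑ l ∈ Finset.range (L t ω + 1), η l ω)
    (k : ℕ) (a b : Fin k → ℝ)
    (ha0 : ∀ j, 0 ≤ a j)
    (hab : ∀ j, a j ≤ b j)
    (hba : ∀ j : Fin k, ∀ h : (j : ℕ) + 1 < k, b j ≤ a ⟨(j : ℕ) + 1, h⟩)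
    (hA : 0 < P {ω | 0 < ∑ j, (L (b j) ω - L (a j) ω)}) :
    ∫ ω, (-1 : ℝ) ^ (∑ j, (T (b j) ω - T (a j) ω))
        ∂(P[|{ω | 0 < ∑ j, (L (b j) ω - L (a j) ω)}]) = 0 := by
  classical
  set A := {ω | 0 < ∑ j, (L (b j) ω - L (a j) ω)} with hAdef
  have hSmono : ∀ ω, Monotone fun n => S n ω := by
    intro ω m n hmn
    show S m ω ≤ S n ω
    rw [hS, hS]
    exact Finset.sum_le_sum_of_subset_of_nonneg (Finset.range_subset_range.2 hmn)
      (fun i _ _ => hUnonneg _ ω)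
  have hSmeas : ∀ n, Measurable (S n) := by
    intro n
    have h2 : S n = fun ω => ∑ i ∈ Finset.range n, U (i + 1) ω := funext fun ω => hS n ω
    rw [h2]
    exact Finset.measurable_sum _ fun i _ => hUmeas _
  have hLmeas : ∀ t, Measurable (L t) := by
    intro t
    have h2 : L t = fun ω => Nat.card {k : ℕ // 1 ≤ k ∧ S k ω ≤ t} := funext fun ω => hL t ω
    rw [h2]
    exact renewal_aux_meas_card S hSmeas hSmono t
  set LF : ℝ → (ℕ → ℝ) → ℕ := fun t u =>
    Nat.card {k : ℕ // 1 ≤ k ∧ (∑ i ∈ Finset.range k, max (u i) 0) ≤ t} with hLFdef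
  have hLFmeas : ∀ t, Measurable (LF t) := by
    intro t
    apply renewal_aux_meas_card
    · intro n
      exact Finset.measurable_sum _ fun i _ => (measurable_pi_apply i).max measurable_const
    · intro u m n hmn
      exact Finset.sum_le_sum_of_subset_of_nonneg (Finset.range_subset_range.2 hmn)
        (fun i _ _ => le_max_right _ _)
  have hLcomp : ∀ t ω, L t ω = LF t (fun m => U (m + 1) ω) := by
    intro t ω
    rw [hL]
    apply Nat.card_congr
    apply Equiv.subtypeEquivRight
    intro n
    have h2 : S n ω = ∑ i ∈ Finset.range n, max (U (i + 1) ω) 0 := by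
      rw [hS]
      exact Finset.sum_congr rfl fun i _ => (max_eq_left (hUnonneg _ ω)).symm
    rw [h2]
  have hLK : ∀ t ω, L t ω = ({m : ℕ | 1 ≤ m ∧ S m ω ≤ t}).ncard := by
    intro t ω; rw [hL]; exact Nat.card_coe_set_eq _
  have hKmono : ∀ (ω : Ω) {s t : ℝ}, s ≤ t →
      {m : ℕ | 1 ≤ m ∧ S m ω ≤ s} ⊆ {m : ℕ | 1 ≤ m ∧ S m ω ≤ t} :=
    fun ω s t hst m hm => ⟨hm.1, hm.2.trans hst⟩
  have hchain : ∀ j j' : Fin k, (j : ℕ) < (j' : ℕ) → b j ≤ a j' := by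
    have key : ∀ n : ℕ, ∀ j j' : Fin k, (j' : ℕ) = (j : ℕ) + 1 + n → b j ≤ a j' := by
      intro n
      induction n with
      | zero =>
        intro j j' hjj'
        have hlt : (j : ℕ) + 1 < k := by have := j'.isLt; omega
        have he : j' = ⟨(j : ℕ) + 1, hlt⟩ := Fin.ext (by simp; omega)
        rw [he]
        exact hba j hlt
      | succ n ih =>
        intro j j' hjj'
        have hlt2 : (j : ℕ) + 1 + n < k := by have := j'.isLt; omega
        have h1 : b j ≤ a ⟨(j : ℕ) + 1 + n, hlt2⟩ := ih j _ rfl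
        have hlt3 : (j : ℕ) + 1 + n + 1 < k := by have := j'.isLt; omega
        have he : j' = ⟨(j : ℕ) + 1 + n + 1, hlt3⟩ := Fin.ext (by simp; omega)
        rw [he]
        exact h1.trans ((hab _).trans (hba ⟨(j : ℕ) + 1 + n, hlt2⟩ hlt3))
    intro j j' h
    exact key ((j' : ℕ) - (j : ℕ) - 1) j j' (by omega)
  have hdisjIoc : ∀ (ω : Ω) (j j' : Fin k), (j : ℕ) < (j' : ℕ) →
      ∀ l, l ∈ Finset.Ioc (L (a j) ω) (L (b j) ω) →
        l ∉ Finset.Ioc (L (a j') ω) (L (b j') ω) := by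
    intro ω j j' hlt l hl hl'
    rw [Finset.mem_Ioc] at hl hl'
    have hfin : ({m : ℕ | 1 ≤ m ∧ S m ω ≤ a j'}).Finite := by
      by_contra hinf
      have hinf' : ({m : ℕ | 1 ≤ m ∧ S m ω ≤ a j'}).Infinite := hinf
      have h2 : ({m : ℕ | 1 ≤ m ∧ S m ω ≤ b j'}).Infinite :=
        hinf'.mono (hKmono ω (hab j'))
      have h3 : L (b j') ω = 0 := by rw [hLK]; exact h2.ncard
      omega
    have hle : L (b j) ω ≤ L (a j') ω := by
      rw [hLK, hLK]
      exact Set.ncard_le_ncard (hKmono ω (hchain j j' hlt)) hfin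
    omega
  have hTmeas : ∀ t, Measurable (T t) := by
    intro t
    have h2 : T t = fun ω => ∑ l ∈ Finset.range (L t ω + 1), η l ω := funext fun ω => hT t ω
    rw [h2]
    apply measurable_to_countable'
    intro m
    have hset : (fun ω => ∑ l ∈ Finset.range (L t ω + 1), η l ω) ⁻¹' {m}
        = ⋃ n : ℕ, ({ω | L t ω = n} ∩ {ω | (∑ l ∈ Finset.range (n + 1), η l ω) = m}) := by
      ext ω
      simp only [Set.mem_preimage, Set.mem_singleton_iff, Set.mem_iUnion, Set.mem_inter_iff,
        Set.mem_setOf_eq]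
      constructor
      · intro h; exact ⟨L t ω, rfl, h⟩
      · rintro ⟨n, hn, h⟩; rw [hn]; exact h
    rw [hset]
    refine MeasurableSet.iUnion fun n => ((hLmeas t) (measurableSet_singleton n)).inter ?_
    exact (Finset.measurable_sum _ fun l _ => hηmeas l) (measurableSet_singleton m)
  set X : Ω → ℕ := fun ω => ∑ j, (T (b j) ω - T (a j) ω) with hXdef
  have hXmeas : Measurable X :=
    Finset.measurable_sum _ fun j _ => (hTmeas (b j)).sub (hTmeas (a j))
  have hfmeas : Measurable fun ω => (-1 : ℝ) ^ (X ω) :=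
    (Measurable.of_discrete (f := fun n : ℕ => (-1 : ℝ) ^ n)).comp hXmeas
  have hfint : Integrable (fun ω => (-1 : ℝ) ^ (X ω)) P :=
    Integrable.mono' (integrable_const 1) hfmeas.aestronglyMeasurable
      (ae_of_all _ fun ω => by simp [Real.norm_eq_abs, abs_pow])
  have hYmeas : Measurable fun ω => ∑ j, (L (b j) ω - L (a j) ω) :=
    Finset.measurable_sum _ fun j _ => (hLmeas (b j)).sub (hLmeas (a j))
  have hAmeas : MeasurableSet A := measurableSet_lt measurable_const hYmeas
  set s : (Fin k → ℕ × ℕ) → Set Ω :=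
    fun v => {ω | ∀ j, L (a j) ω = (v j).1 ∧ L (b j) ω = (v j).2} ∩ A with hsdef
  have hsmeas : ∀ v, MeasurableSet (s v) := by
    intro v
    refine MeasurableSet.inter ?_ hAmeas
    have h2 : {ω | ∀ j, L (a j) ω = (v j).1 ∧ L (b j) ω = (v j).2}
        = ⋂ j, ({ω | L (a j) ω = (v j).1} ∩ {ω | L (b j) ω = (v j).2}) := by
      ext ω; simp only [Set.mem_setOf_eq, Set.mem_iInter, Set.mem_inter_iff]
    rw [h2]
    exact MeasurableSet.iInter fun j =>
      ((hLmeas (a j)) (measurableSet_singleton _)).inter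
        ((hLmeas (b j)) (measurableSet_singleton _))
  have hcover : (⋃ v, s v) = A := by
    apply Set.Subset.antisymm
    · exact Set.iUnion_subset fun v => Set.inter_subset_right
    · intro ω hω
      exact Set.mem_iUnion.2 ⟨fun j => (L (a j) ω, L (b j) ω), ⟨fun j => ⟨rfl, rfl⟩, hω⟩⟩
  have hpair : Pairwise (Function.onFun Disjoint s) := by
    intro v v' hvv'
    rw [Function.onFun, Set.disjoint_left]
    rintro ω ⟨h1, -⟩ ⟨h2, -⟩
    apply hvv'
    funext j
    obtain ⟨ha1, hb1⟩ := h1 j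
    obtain ⟨ha2, hb2⟩ := h2 j
    have e1 : (L (a j) ω, L (b j) ω) = v j := by rw [ha1, hb1]
    have e2 : (L (a j) ω, L (b j) ω) = v' j := by rw [ha2, hb2]
    rw [← e1, ← e2]
  have hz : ∀ v, ∫ ω in s v, (-1 : ℝ) ^ (X ω) ∂P = 0 := by
    intro v
    rcases Set.eq_empty_or_nonempty (s v) with he | ⟨ω₀, hω₀⟩
    · rw [he]; exact setIntegral_empty
    obtain ⟨hω₀v, hω₀A⟩ := hω₀
    set I : Finset ℕ := Finset.univ.biUnion (fun j : Fin k => Finset.Ioc (v j).1 (v j).2)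
      with hIdef
    have hA0 : 0 < ∑ j, (L (b j) ω₀ - L (a j) ω₀) := hω₀A
    have hIne : I.Nonempty := by
      have hex : ∃ j, (v j).1 < (v j).2 := by
        by_contra hc
        push_neg at hc
        have hzz : ∀ j : Fin k, L (b j) ω₀ - L (a j) ω₀ = 0 := by
          intro j
          have h1 := (hω₀v j).1
          have h2 := (hω₀v j).2
          have h3 := hc j
          omega
        rw [Finset.sum_congr rfl fun j _ => hzz j, Finset.sum_const, smul_eq_mul,
          mul_zero] at hA0
        exact absurd hA0 (lt_irrefl 0)
      obtain ⟨j, hj⟩ := hex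
      exact ⟨(v j).2, Finset.mem_biUnion.2 ⟨j, Finset.mem_univ j,
        Finset.mem_Ioc.2 ⟨hj, le_rfl⟩⟩⟩
    have eIoc : ∀ j : Fin k, Finset.Ioc (v j).1 (v j).2
        = Finset.Ioc (L (a j) ω₀) (L (b j) ω₀) := by
      intro j; rw [(hω₀v j).1, (hω₀v j).2]
    have hpd : (↑(Finset.univ : Finset (Fin k)) : Set (Fin k)).PairwiseDisjoint
        (fun j => Finset.Ioc (v j).1 (v j).2) := by
      intro j _ j' _ hne
      rw [Function.onFun, Finset.disjoint_left]
      intro l hl hl'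
      rw [eIoc j] at hl
      rw [eIoc j'] at hl'
      have hne' : (j : ℕ) ≠ (j' : ℕ) := fun h => hne (Fin.ext h)
      rcases hne'.lt_or_gt with h | h
      · exact hdisjIoc ω₀ j j' h l hl hl'
      · exact hdisjIoc ω₀ j' j h l hl' hl
    have hexp : ∀ ω ∈ s v, (-1 : ℝ) ^ (X ω) = ∏ l ∈ I, (-1 : ℝ) ^ (η l ω) := by
      intro ω hω
      obtain ⟨hωv, -⟩ := hω
      have hterm : ∀ j : Fin k, T (b j) ω - T (a j) ω
          = ∑ l ∈ Finset.Ioc (v j).1 (v j).2, η l ω := by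
        intro j
        rw [hT, hT, (hωv j).1, (hωv j).2]
        exact renewal_aux_sum_sub (fun l => η l ω) _ _
      have h1 : X ω = ∑ l ∈ I, η l ω := by
        show (∑ j, (T (b j) ω - T (a j) ω)) = _
        rw [Finset.sum_congr rfl fun j _ => hterm j]
        exact (Finset.sum_biUnion hpd).symm
      rw [h1, ← Finset.prod_pow_eq_pow_sum]
    rw [setIntegral_congr_fun (hsmeas v) hexp]
    have hsv : s v = {ω | ∀ j, L (a j) ω = (v j).1 ∧ L (b j) ω = (v j).2} := by
      apply Set.Subset.antisymm Set.inter_subset_left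
      intro ω hω
      refine ⟨hω, ?_⟩
      show 0 < ∑ j, (L (b j) ω - L (a j) ω)
      have heq : ∀ j : Fin k, L (b j) ω - L (a j) ω = L (b j) ω₀ - L (a j) ω₀ := by
        intro j; rw [(hω j).1, (hω j).2, (hω₀v j).1, (hω₀v j).2]
      rw [Finset.sum_congr rfl fun j _ => heq j]
      exact hA0
    set φ : (ℕ → ℝ) → ℝ := fun u =>
      if (∀ j : Fin k, LF (a j) u = (v j).1 ∧ LF (b j) u = (v j).2) then 1 else 0 with hφdef
    set ψ : (ℕ → ℕ) → ℝ := fun e => ∏ l ∈ I, (-1 : ℝ) ^ (e l) with hψdef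
    have hφmeas : Measurable φ := by
      refine Measurable.ite ?_ measurable_const measurable_const
      have h2 : {u : ℕ → ℝ | ∀ j : Fin k, LF (a j) u = (v j).1 ∧ LF (b j) u = (v j).2}
          = ⋂ j : Fin k, ({u | LF (a j) u = (v j).1} ∩ {u | LF (b j) u = (v j).2}) := by
        ext u; simp only [Set.mem_setOf_eq, Set.mem_iInter, Set.mem_inter_iff]
      rw [h2]
      exact MeasurableSet.iInter fun j =>
        ((hLFmeas (a j)) (measurableSet_singleton _)).inter
          ((hLFmeas (b j)) (measurableSet_singleton _))
    have hψmeas : Measurable ψ :=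
      Finset.measurable_prod _ fun l _ =>
        (Measurable.of_discrete (f := fun n : ℕ => (-1 : ℝ) ^ n)).comp (measurable_pi_apply l)
    have hindep : IndepFun (φ ∘ fun ω (m : ℕ) => U (m + 1) ω)
        (ψ ∘ fun ω (m : ℕ) => η m ω) P := hUη.comp hφmeas hψmeas
    have hUvecmeas : Measurable fun ω (m : ℕ) => U (m + 1) ω :=
      measurable_pi_lambda _ fun m => hUmeas (m + 1)
    have hηvecmeas : Measurable fun ω (m : ℕ) => η m ω :=
      measurable_pi_lambda _ fun m => hηmeas m
    have hφint : Integrable (φ ∘ fun ω (m : ℕ) => U (m + 1) ω) P := by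
      refine Integrable.mono' (integrable_const 1)
        ((hφmeas.comp hUvecmeas).aestronglyMeasurable) (ae_of_all _ fun ω => ?_)
      simp only [Function.comp_apply, hφdef]
      split_ifs <;> simp
    have hψint : Integrable (ψ ∘ fun ω (m : ℕ) => η m ω) P := by
      refine Integrable.mono' (integrable_const 1)
        ((hψmeas.comp hηvecmeas).aestronglyMeasurable) (ae_of_all _ fun ω => ?_)
      simp only [Function.comp_apply, hψdef]
      rw [Real.norm_eq_abs, Finset.abs_prod]
      calc ∏ l ∈ I, |(-1 : ℝ) ^ (η l ω)| = ∏ l ∈ I, 1 := by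
            refine Finset.prod_congr rfl fun l _ => ?_
            rw [abs_pow, abs_neg, abs_one, one_pow]
        _ = 1 := Finset.prod_const_one
        _ ≤ 1 := le_refl 1
    have hmul := hindep.integral_mul_eq_mul_integral hφint.aestronglyMeasurable hψint.aestronglyMeasurable
    have hφeq : (φ ∘ fun ω (m : ℕ) => U (m + 1) ω)
        = Set.indicator (s v) (fun _ => (1 : ℝ)) := by
      funext ω
      rw [hsv]
      simp only [Function.comp_apply, Set.indicator_apply, Set.mem_setOf_eq, hφdef]
      by_cases hc : ∀ j : Fin k, L (a j) ω = (v j).1 ∧ L (b j) ω = (v j).2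
      · rw [if_pos hc, if_pos]
        intro j
        rw [← hLcomp, ← hLcomp]
        exact hc j
      · rw [if_neg hc, if_neg]
        intro hcc
        apply hc
        intro j
        rw [hLcomp, hLcomp]
        exact hcc j
    have hindic : (s v).indicator (fun ω => ∏ l ∈ I, (-1 : ℝ) ^ (η l ω))
        = (φ ∘ fun ω (m : ℕ) => U (m + 1) ω) * (ψ ∘ fun ω (m : ℕ) => η m ω) := by
      funext ω
      rw [Pi.mul_apply, hφeq]
      simp only [Set.indicator_apply]
      split_ifs with h
      · rw [one_mul]; rfl
      · rw [zero_mul]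
    rw [← integral_indicator (hsmeas v), hindic]
    have hψ0 : ∫ ω, (ψ ∘ fun ω (m : ℕ) => η m ω) ω ∂P = 0 := by
      show ∫ ω, ∏ l ∈ I, (-1 : ℝ) ^ (η l ω) ∂P = 0
      exact renewal_aux_int_prod P η hηmeas hηindep hηbern I hIne
    rw [show ((φ ∘ fun ω (m : ℕ) => U (m + 1) ω) * (ψ ∘ fun ω (m : ℕ) => η m ω))
        = fun ω => ((φ ∘ fun ω (m : ℕ) => U (m + 1) ω) * (ψ ∘ fun ω (m : ℕ) => η m ω)) ω
        from rfl]
    rw [hmul, hψ0, mul_zero]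
  show ∫ ω, (-1 : ℝ) ^ (X ω) ∂(P[|A]) = 0
  have hcond : P[|A] = (P A)⁻¹ • P.restrict A := rfl
  rw [hcond, integral_smul_measure]
  have hrestrict : ∫ ω in A, (-1 : ℝ) ^ (X ω) ∂P = 0 := by
    rw [← hcover, integral_iUnion hsmeas hpair (by rw [hcover]; exact hfint.integrableOn)]
    rw [tsum_congr hz]
    exact tsum_zero
  rw [hrestrict, smul_zero]
end

section
/- For every k ≥ 1 and all real numbers 0 ≤ s_1 ≤ t_1 ≤ s_2 ≤ t_2 ≤ ⋯ ≤ s_k ≤ t_k, we have ℙ{L(t_j) − L(s_j) = 0 for all j = 1, …, k} ≤ exp(−λ Σ_{j=1}^k (t_j − s_j)). -/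
open MeasureTheory ProbabilityTheory Set

/-- `expNegE x = exp (-x)` for `x ∈ [0, ∞]`, with the convention `exp (-∞) = 0`. -/
noncomputable def expNegE (x : ENNReal) : ENNReal :=
  if x = ⊤ then 0 else ENNReal.ofReal (Real.exp (-x.toReal))

section AuxRenewal

variable {Ω : Type*}


noncomputable def pS (V : ℕ → Ω → ℝ) (n : ℕ) (ω : Ω) : ℝ := ∑ i ∈ Finset.range n, V i ω

noncomputable def fS {n : ℕ} (x : Fin n → ℝ) (m : ℕ) : ℝ :=
  ∑ i : Fin n, if (i : ℕ) < m then x i else 0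

lemma fS_meas {n m : ℕ} : Measurable (fun x : Fin n → ℝ => fS x m) := by
  apply Finset.measurable_sum
  intro i _
  by_cases h : (i : ℕ) < m
  · simpa [h] using measurable_pi_apply i
  · simpa [h] using (measurable_const : Measurable fun _ : Fin n → ℝ => (0:ℝ))

lemma fS_apply (V : ℕ → Ω → ℝ) {n m : ℕ} (h : m ≤ n) (ω : Ω) :
    fS (fun i : Fin n => V i ω) m = pS V m ω := by
  unfold fS pS
  rw [Fin.sum_univ_eq_sum_range (fun i => if i < m then V i ω else 0) n,
    ← Finset.sum_filter]
  congr 1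
  ext i
  simp only [Finset.mem_filter, Finset.mem_range]
  omega

lemma fS_top {n : ℕ} (x : Fin n → ℝ) : fS x n = ∑ i : Fin n, x i := by
  unfold fS
  exact Finset.sum_congr rfl fun i _ => if_pos i.isLt

lemma pS_zero (V : ℕ → Ω → ℝ) (ω : Ω) : pS V 0 ω = 0 := by simp [pS]

lemma pS_succ (V : ℕ → Ω → ℝ) (n : ℕ) (ω : Ω) :
    pS V (n + 1) ω = pS V n ω + V n ω := Finset.sum_range_succ _ _

lemma pS_mono {V : ℕ → Ω → ℝ} (hV : ∀ m ω, 0 ≤ V m ω) (ω : Ω) :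
    Monotone fun n => pS V n ω := by
  intro a b hab
  exact Finset.sum_le_sum_of_subset_of_nonneg (Finset.range_subset_range.mpr hab)
    fun i _ _ => hV i ω

lemma pS_sum_univ (V : ℕ → Ω → ℝ) (n : ℕ) (ω : Ω) :
    (∑ i : Fin n, V i ω) = pS V n ω :=
  Fin.sum_univ_eq_sum_range (fun i => V i ω) n

/-- Key independence/Fubini computation. -/
lemma keyA [MeasurableSpace Ω] (P : Measure Ω) [IsProbabilityMeasure P]
    (V : ℕ → Ω → ℝ) (hmeas : ∀ m, Measurable (V m))
    (hindep : iIndepFun V P)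
    (n : ℕ) {D : Set (Fin n → ℝ)} (hD : MeasurableSet D) (c : ℝ) :
    P {ω | (fun i : Fin n => V i ω) ∈ D ∧ c < (∑ i : Fin n, V i ω) + V n ω}
      = ∫⁻ x in D, (P.map (V n)) (Ioi (c - ∑ i : Fin n, x i))
          ∂(P.map (fun ω (i : Fin n) => V i ω)) := by
  classical
  set W : Ω → (Fin n → ℝ) := fun ω i => V i ω with hWdef
  have hWmeas : Measurable W := measurable_pi_lambda _ fun i => hmeas i
  have hYmeas : Measurable (V n) := hmeas n
  have hWY : IndepFun W (V n) P := by
    have hdisj : Disjoint (Finset.range n) ({n} : Finset ℕ) := by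
      simp [Finset.disjoint_singleton_right]
    have h := hindep.indepFun_finset (Finset.range n) {n} hdisj hmeas
    have hφ : Measurable (fun x : (↥(Finset.range n) → ℝ) =>
        (fun i : Fin n => x ⟨(i : ℕ), Finset.mem_range.mpr i.isLt⟩)) :=
      measurable_pi_lambda _ fun i => measurable_pi_apply _
    have hψ : Measurable (fun x : (↥(({n} : Finset ℕ)) → ℝ) =>
        x ⟨n, Finset.mem_singleton_self n⟩) := measurable_pi_apply _
    exact h.comp hφ hψ
  have hmap := (indepFun_iff_map_prod_eq_prod_map_map hWmeas.aemeasurable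
    hYmeas.aemeasurable).mp hWY
  set Tset : Set ((Fin n → ℝ) × ℝ) := {p | p.1 ∈ D ∧ c < (∑ i : Fin n, p.1 i) + p.2}
    with hTdef
  have hsum : Measurable fun p : (Fin n → ℝ) × ℝ => (∑ i : Fin n, p.1 i) + p.2 := by
    apply Measurable.add _ measurable_snd
    exact Finset.measurable_sum _ fun i _ => (measurable_pi_apply i).comp measurable_fst
  have hTmeas : MeasurableSet Tset := by
    apply MeasurableSet.inter
    · exact hD.preimage measurable_fst
    · exact measurableSet_lt measurable_const hsum
  have hevent : {ω | W ω ∈ D ∧ c < (∑ i : Fin n, V i ω) + V n ω}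
      = (fun ω => (W ω, V n ω)) ⁻¹' Tset := rfl
  rw [hevent, ← Measure.map_apply (hWmeas.prodMk hYmeas) hTmeas, hmap,
    Measure.prod_apply hTmeas]
  have hslice : ∀ x : Fin n → ℝ,
      (P.map (V n)) (Prod.mk x ⁻¹' Tset)
        = D.indicator (fun x => (P.map (V n)) (Ioi (c - ∑ i : Fin n, x i))) x := by
    intro x
    by_cases hx : x ∈ D
    · have : Prod.mk x ⁻¹' Tset = Ioi (c - ∑ i : Fin n, x i) := by
        ext y
        simp only [hTdef, Set.mem_preimage, Set.mem_setOf_eq, Set.mem_Ioi, hx, true_and]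
        constructor
        · intro h; linarith
        · intro h; linarith
      rw [this, Set.indicator_of_mem hx]
    · have : Prod.mk x ⁻¹' Tset = ∅ := by
        ext y; simp [hTdef, hx]
      rw [this, Set.indicator_of_notMem hx]
      simp
  rw [lintegral_congr hslice, lintegral_indicator hD]


/-- chain of interval endpoints -/
lemma chain_le {k : ℕ} {s t : ℕ → ℝ} (hst : ∀ j, j < k → s j ≤ t j)
    (hts : ∀ j, j + 1 < k → t j ≤ s (j + 1)) :
    ∀ j', j' < k → ∀ j, j < j' → t j ≤ s j' := by
  intro j'
  induction j' with
  | zero => intro _ j hj; omega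
  | succ a iha =>
    intro ha j hj
    rcases Nat.lt_succ_iff_lt_or_eq.mp hj with h | h
    · exact le_trans (iha (by omega) j h) (le_trans (hst a (by omega)) (hts a ha))
    · exact h ▸ hts j (h ▸ ha)

lemma core [MeasurableSpace Ω] (P : Measure Ω) [IsProbabilityMeasure P]
    (V : ℕ → Ω → ℝ) (hmeas : ∀ m, Measurable (V m)) (hnonneg : ∀ m ω, 0 ≤ V m ω)
    (hindep : iIndepFun V P)
    (ν : Measure ℝ) (hident : ∀ i, P.map (V i) = ν) (lam : ℝ)
    (hG : ∀ a b : ℝ, 0 ≤ a → 0 ≤ b →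
      ν (Ioi (a + b)) ≤ ENNReal.ofReal (Real.exp (-lam * b)) * ν (Ioi a)) :
    ∀ (k : ℕ) (s t : ℕ → ℝ) (B : ℝ), (0 < k → 0 ≤ s 0) →
      (∀ j, j < k → s j ≤ t j) → (∀ j, j + 1 < k → t j ≤ s (j + 1)) →
      (∀ j, j < k → t j ≤ B) →
      P ({ω | ∀ m j, j < k → pS V (m + 1) ω ∉ Set.Ioc (s j) (t j)}
          ∩ {ω | ∃ m, B < pS V m ω})
        ≤ ∏ j ∈ Finset.range k, ENNReal.ofReal (Real.exp (-lam * (t j - s j))) := by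
  intro k
  induction k with
  | zero =>
    intro s t B _ _ _ _
    simpa using prob_le_one
  | succ k ih =>
    intro s t B hs0 hst hts hB
    classical
    have hchain := chain_le hst hts
    have hsnn : ∀ j, j < k + 1 → 0 ≤ s j := by
      intro j hj
      rcases Nat.eq_zero_or_pos j with h | h
      · exact h ▸ hs0 (Nat.succ_pos k)
      · exact le_trans (hs0 (Nat.succ_pos k))
          (le_trans (hst 0 (Nat.succ_pos k)) (hchain j hj 0 h))
    have hsk : 0 ≤ s k := hsnn k (Nat.lt_succ_self k)
    have hstk : s k ≤ t k := hst k (Nat.lt_succ_self k)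
    set D : (n : ℕ) → Set (Fin n → ℝ) := fun n =>
      {x | fS x n ≤ s k ∧ ∀ m, m ≤ n → ∀ j, j < k + 1 → fS x m ∉ Set.Ioc (s j) (t j)}
      with hDdef
    have hDmeas : ∀ n, MeasurableSet (D n) := by
      intro n
      have hDeq : D n = {x : Fin n → ℝ | fS x n ≤ s k}
          ∩ ⋂ m, ⋂ (_ : m ≤ n), ⋂ j, ⋂ (_ : j < k + 1),
            (fun x : Fin n → ℝ => fS x m) ⁻¹' (Set.Ioc (s j) (t j))ᶜ := by
        ext x
        simp only [hDdef, Set.mem_setOf_eq, Set.mem_inter_iff, Set.mem_iInter,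
          Set.mem_preimage, Set.mem_compl_iff]
      rw [hDeq]
      refine MeasurableSet.inter (measurableSet_le fS_meas measurable_const) ?_
      exact MeasurableSet.iInter fun m => MeasurableSet.iInter fun _ =>
        MeasurableSet.iInter fun j => MeasurableSet.iInter fun _ =>
          fS_meas measurableSet_Ioc.compl
    set E : ℕ → Set Ω := fun n =>
      {ω | (fun i : Fin n => V i ω) ∈ D n ∧ t k < (∑ i : Fin n, V i ω) + V n ω} with hEdef
    set F : ℕ → Set Ω := fun n =>
      {ω | (fun i : Fin n => V i ω) ∈ D n ∧ s k < (∑ i : Fin n, V i ω) + V n ω} with hFdef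
    -- membership facts
    have hDmem : ∀ n ω, (fun i : Fin n => V i ω) ∈ D n →
        pS V n ω ≤ s k ∧ ∀ m, m ≤ n → ∀ j, j < k + 1 →
          pS V m ω ∉ Set.Ioc (s j) (t j) := by
      intro n ω hω
      obtain ⟨h1, h2⟩ := hω
      rw [fS_apply V (le_refl n)] at h1
      refine ⟨h1, fun m hm j hj => ?_⟩
      have := h2 m hm j hj
      rwa [fS_apply V hm] at this
    have hFloc : ∀ n ω, ω ∈ F n → pS V n ω ≤ s k ∧ s k < pS V (n + 1) ω := by
      intro n ω hω
      obtain ⟨h1, h2⟩ := hω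
      refine ⟨(hDmem n ω h1).1, ?_⟩
      rw [pS_succ, ← pS_sum_univ V n ω]
      exact h2
    have hFdisj : Pairwise (Function.onFun Disjoint F) := by
      intro a b hab
      wlog h : a < b generalizing a b
      · exact (this hab.symm (by omega)).symm
      refine Set.disjoint_left.mpr fun ω hωa hωb => ?_
      have ha := hFloc a ω hωa
      have hb := hFloc b ω hωb
      have : pS V (a + 1) ω ≤ pS V b ω := pS_mono hnonneg ω (by omega)
      linarith [ha.2, hb.1]
    have hFmeas : ∀ n, MeasurableSet (F n) := by
      intro n
      have : F n = ((fun ω (i : Fin n) => V i ω) ⁻¹' (D n))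
          ∩ {ω | s k < (∑ i : Fin n, V i ω) + V n ω} := rfl
      rw [this]
      refine MeasurableSet.inter
        ((measurable_pi_lambda _ fun i : Fin n => hmeas i) (hDmeas n)) ?_
      exact measurableSet_lt measurable_const
        (Measurable.add (Finset.measurable_sum _ fun i _ => hmeas i) (hmeas n))
    -- cover
    have hcover : ({ω | ∀ m j, j < k + 1 → pS V (m + 1) ω ∉ Set.Ioc (s j) (t j)}
        ∩ {ω | ∃ m, B < pS V m ω}) ⊆ ⋃ n, E n := by
      rintro ω ⟨hA, m₀, hm₀⟩
      have hQ0 : pS V 0 ω ≤ s k := by rw [pS_zero]; exact hsk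
      have hQm₀ : ¬ pS V m₀ ω ≤ s k := by
        push_neg
        exact lt_of_le_of_lt (le_trans hstk (hB k (Nat.lt_succ_self k))) hm₀
      obtain ⟨n, hn, hn1⟩ : ∃ n, pS V n ω ≤ s k ∧ ¬ pS V (n + 1) ω ≤ s k := by
        refine ⟨Nat.findGreatest (fun m => pS V m ω ≤ s k) m₀,
          Nat.findGreatest_spec (P := fun m => pS V m ω ≤ s k) (Nat.zero_le m₀) hQ0, ?_⟩
        have hQG := Nat.findGreatest_spec (P := fun m => pS V m ω ≤ s k)
          (Nat.zero_le m₀) hQ0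
        have hle : Nat.findGreatest (fun m => pS V m ω ≤ s k) m₀ ≤ m₀ := Nat.findGreatest_le m₀
        have hne : Nat.findGreatest (fun m => pS V m ω ≤ s k) m₀ ≠ m₀ := by
          intro h
          exact hQm₀ (h ▸ hQG)
        exact Nat.findGreatest_is_greatest (P := fun m => pS V m ω ≤ s k) (n := m₀) (Nat.lt_succ_self _) (by omega)
      have hgt : s k < pS V (n + 1) ω := not_le.mp hn1
      have htk : t k < pS V (n + 1) ω := by
        have h := hA n k (Nat.lt_succ_self k)
        rw [Set.mem_Ioc] at h
        push_neg at h
        exact h hgt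
      refine Set.mem_iUnion.mpr ⟨n, ?_, ?_⟩
      · refine ⟨?_, ?_⟩
        · rw [fS_apply V (le_refl n)]; exact hn
        · intro m hm j hj
          rw [fS_apply V hm]
          rcases Nat.eq_zero_or_pos m with h | h
          · subst h
            rw [pS_zero]
            rw [Set.mem_Ioc]
            push_neg
            intro habs
            exact absurd habs (not_lt.mpr (hsnn j hj))
          · obtain ⟨m', rfl⟩ := Nat.exists_eq_succ_of_ne_zero (n := m) (by omega)
            exact hA m' j hj
      · rw [pS_sum_univ V n ω, ← pS_succ]
        exact htk
    -- single-n estimate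
    have hEF : ∀ n, P (E n) ≤ ENNReal.ofReal (Real.exp (-lam * (t k - s k))) * P (F n) := by
      intro n
      rw [hEdef, hFdef]
      simp only
      rw [keyA P V hmeas hindep n (hDmeas n) (t k),
        keyA P V hmeas hindep n (hDmeas n) (s k), hident n]
      have hνanti : Measurable fun x : Fin n → ℝ => ν (Ioi (s k - ∑ i : Fin n, x i)) := by
        have h1 : Antitone fun u : ℝ => ν (Ioi u) := by
          intro a b hab
          exact measure_mono (Ioi_subset_Ioi hab)
        have hmono : Monotone fun u : ℝ => ν (Ioi (s k - u)) := by
          intro a b hab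
          exact h1 (by linarith)
        exact (hmono.measurable).comp
          (Finset.measurable_sum _ fun i _ => measurable_pi_apply i)
      calc ∫⁻ x in D n, ν (Ioi (t k - ∑ i : Fin n, x i))
            ∂(P.map (fun ω (i : Fin n) => V i ω))
          ≤ ∫⁻ x in D n, ENNReal.ofReal (Real.exp (-lam * (t k - s k)))
              * ν (Ioi (s k - ∑ i : Fin n, x i))
              ∂(P.map (fun ω (i : Fin n) => V i ω)) := by
            apply setLIntegral_mono (hνanti.const_mul _)
            intro x hx
            have hxs : (∑ i : Fin n, x i) ≤ s k := by
              have := hx.1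
              rwa [fS_top] at this
            have habeq : t k - ∑ i : Fin n, x i
                = (s k - ∑ i : Fin n, x i) + (t k - s k) := by ring
            rw [habeq]
            exact hG _ _ (by linarith) (by linarith)
        _ = ENNReal.ofReal (Real.exp (-lam * (t k - s k)))
              * ∫⁻ x in D n, ν (Ioi (s k - ∑ i : Fin n, x i))
                ∂(P.map (fun ω (i : Fin n) => V i ω)) :=
            lintegral_const_mul _ hνanti
    -- F union bound
    have hFsub : (⋃ n, F n) ⊆
        ({ω | ∀ m j, j < k → pS V (m + 1) ω ∉ Set.Ioc (s j) (t j)}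
          ∩ {ω | ∃ m, s k < pS V m ω}) := by
      rintro ω hω
      obtain ⟨n, hn⟩ := Set.mem_iUnion.mp hω
      obtain ⟨hD1, hD2⟩ := hDmem n ω hn.1
      have hgt : s k < pS V (n + 1) ω := (hFloc n ω hn).2
      constructor
      · intro m j hj
        rcases le_or_gt (m + 1) n with h | h
        · exact hD2 (m + 1) h j (by omega)
        · have : pS V (n + 1) ω ≤ pS V (m + 1) ω := pS_mono hnonneg ω (by omega)
          rw [Set.mem_Ioc]
          push_neg
          intro _
          have htj : t j ≤ s k := hchain k (Nat.lt_succ_self k) j hj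
          linarith
      · exact ⟨n + 1, hgt⟩
    -- combine
    calc P ({ω | ∀ m j, j < k + 1 → pS V (m + 1) ω ∉ Set.Ioc (s j) (t j)}
          ∩ {ω | ∃ m, B < pS V m ω})
        ≤ P (⋃ n, E n) := measure_mono hcover
      _ ≤ ∑' n, P (E n) := measure_iUnion_le E
      _ ≤ ∑' n, ENNReal.ofReal (Real.exp (-lam * (t k - s k))) * P (F n) :=
          ENNReal.tsum_le_tsum hEF
      _ = ENNReal.ofReal (Real.exp (-lam * (t k - s k))) * ∑' n, P (F n) :=
          ENNReal.tsum_mul_left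
      _ = ENNReal.ofReal (Real.exp (-lam * (t k - s k))) * P (⋃ n, F n) := by
          rw [measure_iUnion hFdisj hFmeas]
      _ ≤ ENNReal.ofReal (Real.exp (-lam * (t k - s k)))
            * ∏ j ∈ Finset.range k, ENNReal.ofReal (Real.exp (-lam * (t j - s j))) := by
          apply mul_le_mul_right
          refine le_trans (measure_mono hFsub) ?_
          exact ih s t (s k) (fun _ => hs0 (Nat.succ_pos k))
            (fun j hj => hst j (by omega)) (fun j hj => hts j (by omega))
            (fun j hj => hchain k (Nat.lt_succ_self k) j hj)
      _ = ∏ j ∈ Finset.range (k + 1), ENNReal.ofReal (Real.exp (-lam * (t j - s j))) := by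
          rw [Finset.prod_range_succ, mul_comm]

lemma null_lemma [MeasurableSpace Ω] (P : Measure Ω) [IsProbabilityMeasure P]
    (V : ℕ → Ω → ℝ) (hmeas : ∀ m, Measurable (V m)) (hnonneg : ∀ m ω, 0 ≤ V m ω)
    (hindep : iIndepFun V P)
    (ν : Measure ℝ) (hident : ∀ i, P.map (V i) = ν) (hν : ν (Set.Ioi (0:ℝ)) = 1)
    (T : ℝ) : P {ω | ∀ m, pS V m ω ≤ T} = 0 := by
  classical
  rcases lt_or_ge T 0 with hT | hT
  · have : {ω : Ω | ∀ m, pS V m ω ≤ T} = ∅ := by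
      ext ω
      simp only [Set.mem_setOf_eq, Set.mem_empty_iff_false, iff_false]
      push_neg
      exact ⟨0, by rw [pS_zero]; exact hT⟩
    rw [this, measure_empty]
  -- find ε with positive mass
  have hmapIoi : ∀ (i : ℕ) (c : ℝ), P (V i ⁻¹' Set.Ioi c) = ν (Set.Ioi c) := by
    intro i c
    rw [← hident i, Measure.map_apply (hmeas i) measurableSet_Ioi]
  obtain ⟨ε, hε, hp0⟩ : ∃ ε : ℝ, 0 < ε ∧ ν (Set.Ioi ε) ≠ 0 := by
    by_contra h
    push_neg at h
    have hsub : Set.Ioi (0:ℝ) ⊆ ⋃ n : ℕ, Set.Ioi (1 / (n + 1) : ℝ) := by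
      intro u hu
      obtain ⟨n, hn⟩ := exists_nat_one_div_lt (K := ℝ) hu
      exact Set.mem_iUnion.mpr ⟨n, hn⟩
    have : ν (Set.Ioi (0:ℝ)) = 0 := by
      refine measure_mono_null hsub (measure_iUnion_null fun n => ?_)
      exact h (1 / (n + 1)) (by positivity)
    rw [hν] at this
    exact one_ne_zero this
  set p := ν (Set.Ioi ε) with hpdef
  obtain ⟨N, hN⟩ : ∃ N : ℕ, T < N * ε := by
    obtain ⟨N, h⟩ := exists_nat_gt (T / ε)
    exact ⟨N, by rwa [div_lt_iff₀ hε] at h⟩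
  -- blocks
  set Bev : ℕ → Set Ω := fun b => ⋂ i ∈ Finset.Ico (b * N) ((b + 1) * N), V i ⁻¹' Set.Ioi ε
    with hBevdef
  have hBevMeas : ∀ b, MeasurableSet (Bev b) :=
    fun b => Finset.measurableSet_biInter _ fun i _ => (hmeas i) measurableSet_Ioi
  have hcard : ∀ b : ℕ, (Finset.Ico (b * N) ((b + 1) * N)).card = N := by
    intro b; rw [Nat.card_Ico]; ring_nf; omega
  have hBevP : ∀ b, P (Bev b) = p ^ N := by
    intro b
    have := hindep.measure_inter_preimage_eq_mul (Finset.Ico (b * N) ((b + 1) * N))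
      (sets := fun _ => Set.Ioi ε) (fun i _ => measurableSet_Ioi)
    rw [hBevdef]
    simp only
    rw [this]
    rw [Finset.prod_congr rfl fun i _ => hmapIoi i ε]
    rw [Finset.prod_const, hcard]
  -- the intersections
  have hBevmem : ∀ b (ω : Ω), ω ∈ Bev b ↔
      ∀ i ∈ Finset.Ico (b * N) ((b + 1) * N), ε < V i ω := by
    intro b ω
    simp only [hBevdef, Set.mem_iInter, Set.mem_preimage, Set.mem_Ioi]
  set Q : ℕ → Set Ω := fun m => ⋂ b ∈ Finset.range m, (Bev b)ᶜ with hQdef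
  have hQmem : ∀ m' (ω : Ω), ω ∈ Q m' ↔ ∀ b, b < m' → ω ∉ Bev b := by
    intro m' ω
    simp only [hQdef, Set.mem_iInter, Finset.mem_range, Set.mem_compl_iff]
  have hQbound : ∀ m, P (Q m) ≤ (1 - p ^ N) ^ m := by
    intro m
    induction m with
    | zero => simp [hQdef]
    | succ m ihm =>
      have hQsucc : Q (m + 1) = Q m ∩ (Bev m)ᶜ := by
        rw [hQdef]
        simp only
        rw [Finset.range_add_one, Finset.set_biInter_insert, Set.inter_comm]
      have hdisj : Disjoint (Finset.range (m * N)) (Finset.Ico (m * N) ((m + 1) * N)) := by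
        refine Finset.disjoint_left.mpr fun a ha hb => ?_
        simp only [Finset.mem_range] at ha
        simp only [Finset.mem_Ico] at hb
        omega
      have hWZ := hindep.indepFun_finset (Finset.range (m * N))
        (Finset.Ico (m * N) ((m + 1) * N)) hdisj hmeas
      set Wf : Ω → (↥(Finset.range (m * N)) → ℝ) :=
        fun ω i => V i ω with hWfdef
      set Zf : Ω → (↥(Finset.Ico (m * N) ((m + 1) * N)) → ℝ) :=
        fun ω i => V i ω with hZfdef
      set Am : Set (↥(Finset.range (m * N)) → ℝ) :=
        {x | ∀ b, b < m → ∃ i : ↥(Finset.range (m * N)),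
          ((i : ℕ) ∈ Finset.Ico (b * N) ((b + 1) * N)) ∧ x i ≤ ε} with hAmdef
      set Bm : Set (↥(Finset.Ico (m * N) ((m + 1) * N)) → ℝ) :=
        {z | ∃ i, z i ≤ ε} with hBmdef
      have hAmMeas : MeasurableSet Am := by
        have : Am = ⋂ b, ⋂ (_ : b < m), ⋃ i : ↥(Finset.range (m * N)),
            ⋃ (_ : (i : ℕ) ∈ Finset.Ico (b * N) ((b + 1) * N)),
              (fun x : ↥(Finset.range (m * N)) → ℝ => x i) ⁻¹' Set.Iic ε := by
          ext x
          simp only [hAmdef, Set.mem_setOf_eq, Set.mem_iInter, Set.mem_iUnion,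
            Set.mem_preimage, Set.mem_Iic]
          constructor
          · intro h b hb
            obtain ⟨i, h1, h2⟩ := h b hb
            exact ⟨i, h1, h2⟩
          · intro h b hb
            obtain ⟨i, h1, h2⟩ := h b hb
            exact ⟨i, h1, h2⟩
        rw [this]
        exact MeasurableSet.iInter fun b => MeasurableSet.iInter fun _ =>
          MeasurableSet.iUnion fun i => MeasurableSet.iUnion fun _ =>
            (measurable_pi_apply i) measurableSet_Iic
      have hBmMeas : MeasurableSet Bm := by
        have : Bm = ⋃ i : ↥(Finset.Ico (m * N) ((m + 1) * N)),
            (fun z : ↥(Finset.Ico (m * N) ((m + 1) * N)) → ℝ => z i) ⁻¹' Set.Iic ε := by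
          ext z
          simp only [hBmdef, Set.mem_setOf_eq, Set.mem_iUnion, Set.mem_preimage, Set.mem_Iic]
        rw [this]
        exact MeasurableSet.iUnion fun i => (measurable_pi_apply i) measurableSet_Iic
      have hQeq : Q m = Wf ⁻¹' Am := by
        ext ω
        rw [hQmem]
        simp only [hWfdef, Set.mem_preimage, hAmdef, Set.mem_setOf_eq]
        constructor
        · intro h b hb
          have hnot := h b hb
          rw [hBevmem] at hnot
          push_neg at hnot
          obtain ⟨i, hi1, hi2⟩ := hnot
          have him : i ∈ Finset.range (m * N) := by
            rw [Finset.mem_Ico] at hi1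
            refine Finset.mem_range.mpr ?_
            have : (b + 1) * N ≤ m * N := Nat.mul_le_mul_right N (by omega)
            omega
          exact ⟨⟨i, him⟩, hi1, hi2⟩
        · intro h b hb
          rw [hBevmem]
          push_neg
          obtain ⟨i, hi1, hi2⟩ := h b hb
          exact ⟨(i : ℕ), hi1, hi2⟩
      have hBeq : (Bev m)ᶜ = Zf ⁻¹' Bm := by
        ext ω
        simp only [Set.mem_compl_iff, Set.mem_preimage, hZfdef, hBmdef, Set.mem_setOf_eq]
        rw [hBevmem]
        push_neg
        constructor
        · rintro ⟨i, hi1, hi2⟩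
          exact ⟨⟨i, hi1⟩, hi2⟩
        · rintro ⟨i, hi⟩
          exact ⟨(i : ℕ), i.2, hi⟩
      have hprod : P (Wf ⁻¹' Am ∩ Zf ⁻¹' Bm) = P (Wf ⁻¹' Am) * P (Zf ⁻¹' Bm) :=
        hWZ.measure_inter_preimage_eq_mul Am Bm hAmMeas hBmMeas
      have hZB : P (Zf ⁻¹' Bm) = 1 - p ^ N := by
        rw [← hBeq, measure_compl (hBevMeas m) (measure_ne_top P _), measure_univ, hBevP]
      rw [hQsucc, hQeq, hBeq, hprod, hZB, ← hQeq]
      rw [pow_succ]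
      exact mul_le_mul ihm (le_refl _) zero_le zero_le
  -- event ⊆ Q m
  have hsubQ : ∀ m, {ω : Ω | ∀ m', pS V m' ω ≤ T} ⊆ Q m := by
    intro m ω hω
    rw [hQmem]
    intro b _ hBev
    rw [hBevmem] at hBev
    have hsum : (N : ℝ) * ε ≤ ∑ i ∈ Finset.Ico (b * N) ((b + 1) * N), V i ω := by
      have h1 : ∀ i ∈ Finset.Ico (b * N) ((b + 1) * N), ε ≤ V i ω :=
        fun i hi => le_of_lt (hBev i hi)
      calc (N : ℝ) * ε = ∑ _i ∈ Finset.Ico (b * N) ((b + 1) * N), ε := by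
            rw [Finset.sum_const, hcard, nsmul_eq_mul]
        _ ≤ ∑ i ∈ Finset.Ico (b * N) ((b + 1) * N), V i ω := Finset.sum_le_sum h1
    have hle : ∑ i ∈ Finset.Ico (b * N) ((b + 1) * N), V i ω ≤ pS V ((b + 1) * N) ω := by
      unfold pS
      apply Finset.sum_le_sum_of_subset_of_nonneg
      · intro i hi
        simp only [Finset.mem_Ico] at hi
        simp only [Finset.mem_range]
        omega
      · intro i _ _
        exact hnonneg i ω
    have := hω ((b + 1) * N)
    linarith
  -- conclude
  have hq1 : (1 : ENNReal) - p ^ N < 1 := by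
    apply ENNReal.sub_lt_self ENNReal.one_ne_top one_ne_zero
    exact pow_ne_zero N hp0
  have htend : Filter.Tendsto (fun m => ((1 : ENNReal) - p ^ N) ^ m) Filter.atTop (nhds 0) :=
    ENNReal.tendsto_pow_atTop_nhds_zero_of_lt_one hq1
  have hle : ∀ m, P {ω : Ω | ∀ m', pS V m' ω ≤ T} ≤ ((1 : ENNReal) - p ^ N) ^ m :=
    fun m => le_trans (measure_mono (hsubQ m)) (hQbound m)
  have : P {ω : Ω | ∀ m', pS V m' ω ≤ T} ≤ 0 :=
    le_of_tendsto_of_tendsto' tendsto_const_nhds htend hle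
  exact le_antisymm this zero_le

end AuxRenewal

/-- If the interarrival distribution has a failure rate function `r ≥ λ > 0`
(hypothesis (G)), then for `0 ≤ s₁ ≤ t₁ ≤ s₂ ≤ ⋯ ≤ s_k ≤ t_k`,
`P{L(t_j) - L(s_j) = 0, j = 1,…,k} ≤ exp(-λ Σ_j (t_j - s_j))`. -/
theorem renewal_no_jump_exponential_bound
    {Ω : Type*} [MeasurableSpace Ω] (P : Measure Ω) [IsProbabilityMeasure P]
    (U : ℕ → Ω → ℝ)
    (hUmeas : ∀ m, Measurable (U m))
    (hUnonneg : ∀ m ω, 0 ≤ U m ω)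
    (hUindep : iIndepFun (fun m => U (m + 1)) P)
    (hUident : ∀ m, IdentDistrib (U (m + 1)) (U 1) P P)
    (S : ℕ → Ω → ℝ) (hS : ∀ k ω, S k ω = ∑ i ∈ Finset.range k, U (i + 1) ω)
    (L : ℝ → Ω → ℕ) (hL : ∀ t ω, L t ω = Nat.card {k : ℕ // 1 ≤ k ∧ S k ω ≤ t})
    (r : ℝ → ℝ) (hrmeas : Measurable r) (hrnonneg : ∀ s, 0 ≤ s → 0 ≤ r s)
    (lam : ℝ) (hlam : 0 < lam) (hrlam : ∀ s, 0 ≤ s → lam ≤ r s)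
    (hrdiv : ∫⁻ s in Set.Ioi (0 : ℝ), ENNReal.ofReal (r s) = ⊤)
    (hGdist : ∀ t : ℝ, 0 ≤ t →
      P {ω | t < U 1 ω} = expNegE (∫⁻ s in Set.Ioc (0 : ℝ) t, ENNReal.ofReal (r s)))
    (k : ℕ) (hk : 1 ≤ k) (s t : Fin k → ℝ)
    (hs0 : 0 ≤ s ⟨0, hk⟩)
    (hst : ∀ j, s j ≤ t j)
    (hts : ∀ j : Fin k, ∀ h : (j : ℕ) + 1 < k, t j ≤ s ⟨(j : ℕ) + 1, h⟩) :
    P {ω | ∀ j, L (t j) ω - L (s j) ω = 0} ≤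
      ENNReal.ofReal (Real.exp (-lam * ∑ j, (t j - s j))) := by
  classical
  set V : ℕ → Ω → ℝ := fun m => U (m + 1) with hVdef
  have hVmeas : ∀ m, Measurable (V m) := fun m => hUmeas (m + 1)
  have hVnonneg : ∀ m ω, 0 ≤ V m ω := fun m ω => hUnonneg (m + 1) ω
  have hVindep : iIndepFun V P := hUindep
  set ν := P.map (U 1) with hνdef
  have hident : ∀ i, P.map (V i) = ν := fun i => (hUident i).map_eq
  have hνIoi : ∀ c : ℝ, ν (Set.Ioi c) = P {ω | c < U 1 ω} := by
    intro c
    rw [hνdef, Measure.map_apply (hUmeas 1) measurableSet_Ioi]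
    rfl
  -- expNegE facts
  have hanti : ∀ x y : ENNReal, x ≤ y → expNegE y ≤ expNegE x := by
    intro x y h
    by_cases hy : y = ⊤
    · simp [expNegE, hy]
    · have hx : x ≠ ⊤ := fun hx => hy (top_le_iff.mp (hx ▸ h))
      simp only [expNegE, if_neg hx, if_neg hy]
      exact ENNReal.ofReal_le_ofReal
        (Real.exp_le_exp.mpr (neg_le_neg (ENNReal.toReal_mono hy h)))
  have hmulE : ∀ (x : ENNReal) (c : ℝ), 0 ≤ c →
      expNegE (x + ENNReal.ofReal c) = ENNReal.ofReal (Real.exp (-c)) * expNegE x := by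
    intro x c hc
    by_cases hx : x = ⊤
    · simp [expNegE, hx, top_add]
    · have hxc : x + ENNReal.ofReal c ≠ ⊤ := by
        simp [ENNReal.add_ne_top, hx, ENNReal.ofReal_ne_top]
      simp only [expNegE, if_neg hx, if_neg hxc]
      rw [ENNReal.toReal_add hx ENNReal.ofReal_ne_top, ENNReal.toReal_ofReal hc,
        neg_add, Real.exp_add, ENNReal.ofReal_mul (le_of_lt (Real.exp_pos _)), mul_comm]
  -- hazard rate bound
  have hG : ∀ a b : ℝ, 0 ≤ a → 0 ≤ b →
      ν (Set.Ioi (a + b)) ≤ ENNReal.ofReal (Real.exp (-lam * b)) * ν (Set.Ioi a) := by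
    intro a b ha hb
    rw [hνIoi, hνIoi, hGdist a ha, hGdist (a + b) (by linarith)]
    have hdisj : Disjoint (Set.Ioc (0:ℝ) a) (Set.Ioc a (a + b)) := by
      rw [Set.disjoint_left]
      rintro u ⟨_, hu2⟩ ⟨hu3, _⟩
      exact absurd hu3 (not_lt.mpr hu2)
    have hsplit : (∫⁻ u in Set.Ioc (0:ℝ) (a + b), ENNReal.ofReal (r u))
        = (∫⁻ u in Set.Ioc (0:ℝ) a, ENNReal.ofReal (r u))
          + ∫⁻ u in Set.Ioc a (a + b), ENNReal.ofReal (r u) := by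
      rw [← lintegral_union measurableSet_Ioc hdisj,
        Set.Ioc_union_Ioc_eq_Ioc ha (by linarith)]
    have hlow : ENNReal.ofReal (lam * b)
        ≤ ∫⁻ u in Set.Ioc a (a + b), ENNReal.ofReal (r u) := by
      have h1 : (∫⁻ _u in Set.Ioc a (a + b), ENNReal.ofReal lam)
          ≤ ∫⁻ u in Set.Ioc a (a + b), ENNReal.ofReal (r u) := by
        apply setLIntegral_mono hrmeas.ennreal_ofReal
        intro u hu
        exact ENNReal.ofReal_le_ofReal (hrlam u (le_trans ha (le_of_lt hu.1)))
      rw [setLIntegral_const, Real.volume_Ioc, show a + b - a = b by ring,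
        ← ENNReal.ofReal_mul (le_of_lt hlam)] at h1
      exact h1
    calc expNegE (∫⁻ u in Set.Ioc (0:ℝ) (a + b), ENNReal.ofReal (r u))
        ≤ expNegE ((∫⁻ u in Set.Ioc (0:ℝ) a, ENNReal.ofReal (r u))
            + ENNReal.ofReal (lam * b)) := by
          apply hanti
          rw [hsplit]
          exact add_le_add le_rfl hlow
      _ = ENNReal.ofReal (Real.exp (-(lam * b)))
            * expNegE (∫⁻ u in Set.Ioc (0:ℝ) a, ENNReal.ofReal (r u)) :=
          hmulE _ _ (by positivity)
      _ = ENNReal.ofReal (Real.exp (-lam * b))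
            * expNegE (∫⁻ u in Set.Ioc (0:ℝ) a, ENNReal.ofReal (r u)) := by
          rw [neg_mul]
  have hν0 : ν (Set.Ioi (0:ℝ)) = 1 := by
    rw [hνIoi 0, hGdist 0 le_rfl]
    have h0 : (∫⁻ u in Set.Ioc (0:ℝ) 0, ENNReal.ofReal (r u)) = 0 := by
      rw [Set.Ioc_self]
      simp
    rw [h0]
    simp [expNegE]
  -- extended interval endpoints
  set sN : ℕ → ℝ := fun j => if h : j < k then s ⟨j, h⟩ else 0 with hsN
  set tN : ℕ → ℝ := fun j => if h : j < k then t ⟨j, h⟩ else 0 with htN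
  have hstN : ∀ j, j < k → sN j ≤ tN j := by
    intro j hj
    simp only [hsN, htN, dif_pos hj]
    exact hst _
  have htsN : ∀ j, j + 1 < k → tN j ≤ sN (j + 1) := by
    intro j hj
    have hj' : j < k := by omega
    simp only [hsN, htN, dif_pos hj, dif_pos hj']
    exact hts ⟨j, hj'⟩ hj
  have hs0N : 0 < k → 0 ≤ sN 0 := by
    intro _
    have h0 : sN 0 = s ⟨0, hk⟩ := by
      simp only [hsN]
      exact dif_pos hk
    rw [h0]
    exact hs0
  have hchainN := chain_le hstN htsN
  set B : ℝ := tN (k - 1) with hBdef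
  have hBN : ∀ j, j < k → tN j ≤ B := by
    intro j hj
    rcases eq_or_lt_of_le (by omega : j ≤ k - 1) with h | h
    · rw [h]
    · exact le_trans (hchainN (k - 1) (by omega) j h) (hstN (k - 1) (by omega))
  have hpS_S : ∀ n ω, S n ω = pS V n ω := by
    intro n ω
    rw [hS]
    rfl
  set Aev : Set Ω := {ω | ∀ m j, j < k → pS V (m + 1) ω ∉ Set.Ioc (sN j) (tN j)}
    with hAevdef
  set Gev : Set Ω := {ω | ∃ m, B < pS V m ω} with hGevdef
  set Nev : Set Ω := {ω | ∀ m, pS V m ω ≤ B} with hNevdef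
  have hincl : {ω | ∀ j, L (t j) ω - L (s j) ω = 0} ⊆ (Aev ∩ Gev) ∪ Nev := by
    intro ω hω
    by_cases hNmem : ω ∈ Nev
    · exact Or.inr hNmem
    have hGm : ∃ m, B < pS V m ω := by
      simp only [hNevdef, Set.mem_setOf_eq] at hNmem
      push_neg at hNmem
      exact hNmem
    obtain ⟨m₀, hm₀⟩ := hGm
    refine Or.inl ⟨?_, ⟨m₀, hm₀⟩⟩
    intro m j hj hmem
    rw [Set.mem_Ioc] at hmem
    set jF : Fin k := ⟨j, hj⟩ with hjF
    have hsj : sN j = s jF := by simp only [hsN, dif_pos hj, hjF]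
    have htj : tN j = t jF := by simp only [htN, dif_pos hj, hjF]
    rw [hsj, htj] at hmem
    have htjB : t jF ≤ B := htj ▸ hBN j hj
    have hfin : ∀ x : ℝ, x ≤ B → {k' : ℕ | 1 ≤ k' ∧ pS V k' ω ≤ x}.Finite := by
      intro x hx
      apply Set.Finite.subset (Set.finite_Iio m₀)
      intro k' hk'
      simp only [Set.mem_Iio]
      by_contra hge
      have : pS V m₀ ω ≤ pS V k' ω := pS_mono hVnonneg ω (by omega)
      have := hk'.2
      linarith
    have hLcard : ∀ x : ℝ, L x ω = {k' : ℕ | 1 ≤ k' ∧ pS V k' ω ≤ x}.ncard := by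
      intro x
      rw [hL]
      rw [Nat.card_congr (Equiv.subtypeEquivRight (fun k' => by rw [hpS_S]))]
      exact Nat.card_coe_set_eq _
    have hsets : {k' : ℕ | 1 ≤ k' ∧ pS V k' ω ≤ s jF}
        ⊂ {k' : ℕ | 1 ≤ k' ∧ pS V k' ω ≤ t jF} := by
      have hsub : {k' : ℕ | 1 ≤ k' ∧ pS V k' ω ≤ s jF}
          ⊆ {k' : ℕ | 1 ≤ k' ∧ pS V k' ω ≤ t jF} := by
        intro k' hk'
        exact ⟨hk'.1, le_trans hk'.2 (hst jF)⟩
      refine (Set.ssubset_iff_of_subset hsub).mpr ?_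
      refine ⟨m + 1, ?_, fun hc => ?_⟩
      · exact ⟨by omega, hmem.2⟩
      · exact absurd hc.2 (not_le.mpr hmem.1)
    have hlt : L (s jF) ω < L (t jF) ω := by
      rw [hLcard, hLcard]
      exact Set.ncard_lt_ncard hsets (hfin (t jF) htjB)
    have := hω jF
    omega
  calc P {ω | ∀ j, L (t j) ω - L (s j) ω = 0}
      ≤ P ((Aev ∩ Gev) ∪ Nev) := measure_mono hincl
    _ ≤ P (Aev ∩ Gev) + P Nev := measure_union_le _ _
    _ ≤ (∏ j ∈ Finset.range k, ENNReal.ofReal (Real.exp (-lam * (tN j - sN j)))) + 0 := by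
        apply add_le_add
        · exact core P V hVmeas hVnonneg hVindep ν hident lam hG k sN tN B
            hs0N hstN htsN hBN
        · exact le_of_eq (null_lemma P V hVmeas hVnonneg hVindep ν hident hν0 B)
    _ = ENNReal.ofReal (Real.exp (-lam * ∑ j, (t j - s j))) := by
        rw [add_zero,
          ← ENNReal.ofReal_prod_of_nonneg (fun i _ => le_of_lt (Real.exp_pos _)),
          ← Real.exp_sum]
        congr 1
        rw [Finset.mul_sum,
          ← Fin.sum_univ_eq_sum_range (fun j => -lam * (tN j - sN j)) k]
        congr 1
        apply Finset.sum_congr rfl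
        intro j _
        have h1 : sN (j : ℕ) = s j := by
          simp only [hsN, dif_pos j.isLt]
        have h2 : tN (j : ℕ) = t j := by
          simp only [htN, dif_pos j.isLt]
        rw [h1, h2]
end

section
/- For any real numbers 0 ≤ s ≤ t and any m, n ∈ ℕ₀ with m ≤ ⌊s⌋ and n ≤ ⌊t⌋ − ⌊s⌋, we have ℙ{L(s) = m, L(t) − L(s) = n} = C(⌊s⌋, m) · C(⌊t⌋ − ⌊s⌋, n) · q^{⌊t⌋} · (p/q)^{m+n}, where C(a,b) denotes the binomial coefficient and ⌊·⌋ the integer part. -/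
open MeasureTheory ProbabilityTheory Set

namespace GeomRenewal


/-- extension of a `Fin k`-tuple to `ℕ` by zero -/
def pvext {k : ℕ} (v : Fin k → ℕ) (i : ℕ) : ℕ := if h : i < k then v ⟨i, h⟩ else 0

/-- partial sums of a tuple -/
def ppsum {k : ℕ} (v : Fin k → ℕ) (j : ℕ) : ℕ := ∑ i ∈ Finset.range j, pvext v i

lemma ppsum_zero {k : ℕ} (v : Fin k → ℕ) : ppsum v 0 = 0 := rfl

lemma ppsum_succ {k : ℕ} (v : Fin k → ℕ) (j : ℕ) :
    ppsum v (j + 1) = ppsum v j + pvext v j := Finset.sum_range_succ _ _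

lemma pvext_lt {k : ℕ} (v : Fin k → ℕ) {i : ℕ} (h : i < k) : pvext v i = v ⟨i, h⟩ := dif_pos h

lemma ppsum_top {k : ℕ} (v : Fin k → ℕ) : ppsum v k = ∑ i, v i := by
  rw [ppsum, ← Fin.sum_univ_eq_sum_range (fun i => pvext v i) k]
  exact Finset.sum_congr rfl fun i _ => by rw [pvext_lt v i.isLt]

lemma ppsum_mono {k : ℕ} (v : Fin k → ℕ) {j j' : ℕ} (h : j ≤ j') : ppsum v j ≤ ppsum v j' :=
  Finset.sum_le_sum_of_subset (Finset.range_subset_range.2 h)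

lemma pvext_le_ppsum {k : ℕ} (v : Fin k → ℕ) {i j : ℕ} (h : i < j) :
    pvext v i ≤ ppsum v j :=
  Finset.single_le_sum (fun _ _ => Nat.zero_le _) (Finset.mem_range.2 h)

lemma ppsum_strict {k : ℕ} (v : Fin k → ℕ) (hv : ∀ i, 1 ≤ v i) {j j' : ℕ} (h : j < j')
    (h' : j < k) : ppsum v j < ppsum v j' := by
  have h1 : ppsum v (j+1) ≤ ppsum v j' := ppsum_mono v h
  have h2 : ppsum v (j+1) = ppsum v j + pvext v j := ppsum_succ v j
  have h3 : 1 ≤ pvext v j := by rw [pvext_lt v h']; exact hv _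
  omega

lemma le_ppsum {k : ℕ} (v : Fin k → ℕ) (hv : ∀ i, 1 ≤ v i) {j : ℕ} (h : j ≤ k) :
    j ≤ ppsum v j := by
  induction j with
  | zero => simp [ppsum_zero]
  | succ j ih =>
    have := ih (by omega)
    have h3 : 1 ≤ pvext v j := by rw [pvext_lt v (by omega : j < k)]; exact hv _
    rw [ppsum_succ]; omega

/-- the number of `k`-tuples of positive integers with sum at most `c` is `c.choose k`. -/
lemma card_comps (c k : ℕ) :
    ((Fintype.piFinset fun _ : Fin k => Finset.Icc 1 c).filter fun v => ∑ i, v i ≤ c).card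
      = c.choose k := by
  have hIcc : (Finset.Icc 1 c).card = c := by rw [Nat.card_Icc]; omega
  have key : ((Fintype.piFinset fun _ : Fin k => Finset.Icc 1 c).filter
      fun v => ∑ i, v i ≤ c).card = (Finset.powersetCard k (Finset.Icc 1 c)).card := by
    apply Finset.card_bij (fun v _ => Finset.image (fun i : Fin k => ppsum v (i + 1)) Finset.univ)
    · -- membership
      intro v hv
      simp only [Finset.mem_filter, Fintype.mem_piFinset, Finset.mem_Icc] at hv
      obtain ⟨hbox, hsum⟩ := hv
      have hone : ∀ i, 1 ≤ v i := fun i => (hbox i).1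
      have hsm : StrictMono fun i : Fin k => ppsum v (i+1) := fun i i' hii' =>
        ppsum_strict v hone (by omega) (by omega)
      rw [Finset.mem_powersetCard]
      constructor
      · intro x hx
        simp only [Finset.mem_image, Finset.mem_univ, true_and] at hx
        obtain ⟨i, rfl⟩ := hx
        rw [Finset.mem_Icc]
        constructor
        · have h1 := pvext_le_ppsum v (show (i:ℕ) < (i:ℕ)+1 by omega)
          have h2 := pvext_lt v i.isLt
          have h3 := hone i
          have h4 : (⟨(i : ℕ), i.isLt⟩ : Fin k) = i := by ext; rfl
          rw [h4] at h2
          omega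
        · calc ppsum v (i+1) ≤ ppsum v k := ppsum_mono v i.isLt
            _ = ∑ i, v i := ppsum_top v
            _ ≤ c := hsum
      · rw [Finset.card_image_of_injective _ hsm.injective, Finset.card_univ, Fintype.card_fin]
    · -- injectivity
      intro v hv w hw himg
      simp only [Finset.mem_filter, Fintype.mem_piFinset, Finset.mem_Icc] at hv hw
      have honev : ∀ i, 1 ≤ v i := fun i => (hv.1 i).1
      have honew : ∀ i, 1 ≤ w i := fun i => (hw.1 i).1
      have hsmv : StrictMono fun i : Fin k => ppsum v (i+1) := fun i i' hii' =>
        ppsum_strict v honev (by omega) (by omega)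
      have hsmw : StrictMono fun i : Fin k => ppsum w (i+1) := fun i i' hii' =>
        ppsum_strict w honew (by omega) (by omega)
      have hcard : (Finset.image (fun i : Fin k => ppsum v (i + 1)) Finset.univ).card = k := by
        rw [Finset.card_image_of_injective _ hsmv.injective, Finset.card_univ, Fintype.card_fin]
      have h1 := Finset.orderEmbOfFin_unique hcard
        (f := fun i : Fin k => ppsum v (i+1))
        (fun i => Finset.mem_image_of_mem _ (Finset.mem_univ i)) hsmv
      have h2 := Finset.orderEmbOfFin_unique hcard
        (f := fun i : Fin k => ppsum w (i+1))
        (fun i => by rw [himg]; exact Finset.mem_image_of_mem _ (Finset.mem_univ i)) hsmw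
      have heq : ∀ i : Fin k, ppsum v (i+1) = ppsum w (i+1) := by
        intro i
        rw [congrFun h1 i, congrFun h2 i]
      have hpeq : ∀ j, j ≤ k → ppsum v j = ppsum w j := by
        intro j hj
        match j, hj with
        | 0, _ => rfl
        | (j+1), hj => exact heq ⟨j, by omega⟩
      funext i
      have ha := hpeq i (by omega)
      have hb := hpeq (i+1) (by omega)
      have hc := ppsum_succ v i
      have hd := ppsum_succ w i
      have he := pvext_lt v i.isLt
      have hf := pvext_lt w i.isLt
      have hg : (⟨(i : ℕ), i.isLt⟩ : Fin k) = i := by ext; rfl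
      rw [hg] at he hf
      omega
    · -- surjectivity
      intro s hs
      rw [Finset.mem_powersetCard] at hs
      obtain ⟨hsub, hcard⟩ := hs
      set e := s.orderEmbOfFin hcard with he
      have hemem : ∀ i, e i ∈ Finset.Icc 1 c := fun i => hsub (s.orderEmbOfFin_mem hcard i)
      set v : Fin k → ℕ := fun i =>
        e i - (if h0 : (i : ℕ) = 0 then 0 else e ⟨(i : ℕ) - 1, by omega⟩) with hvdef
      have hvone : ∀ i, 1 ≤ v i := by
        intro i
        rw [hvdef]
        simp only
        split_ifs with h0
        · have := (Finset.mem_Icc.1 (hemem i)).1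
          omega
        · have hlt : (⟨(i:ℕ) - 1, by omega⟩ : Fin k) < i := by
            rw [Fin.lt_def]; simp; omega
          have := e.strictMono hlt
          omega
      have hps : ∀ j (hj : j < k), ppsum v (j + 1) = e ⟨j, hj⟩ := by
        intro j
        induction j with
        | zero =>
          intro hj
          rw [ppsum_succ, ppsum_zero, pvext_lt v hj, hvdef]
          simp
        | succ j ih =>
          intro hj
          rw [ppsum_succ, pvext_lt v hj, ih (by omega), hvdef]
          simp only [Nat.add_eq_zero, Nat.succ_ne_zero, false_and, dif_neg, not_false_iff]
          have hlt : (⟨j, by omega⟩ : Fin k) < ⟨j + 1, hj⟩ := by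
            rw [Fin.lt_def]; simp
          have := e.strictMono hlt
          have hco : (⟨j + 1 - 1, by omega⟩ : Fin k) = ⟨j, by omega⟩ := by ext; simp
          rw [hco]
          omega
      refine ⟨v, ?_, ?_⟩
      · simp only [Finset.mem_filter, Fintype.mem_piFinset, Finset.mem_Icc]
        have hsum : ∑ i, v i ≤ c := by
          rw [← ppsum_top]
          rcases Nat.eq_zero_or_pos k with hk | hk
          · subst hk; rw [ppsum_zero]; omega
          · have : ppsum v k = e ⟨k - 1, by omega⟩ := by
              have := hps (k-1) (by omega)
              rw [show k - 1 + 1 = k by omega] at this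
              exact this
            rw [this]
            exact (Finset.mem_Icc.1 (hemem _)).2
        refine ⟨fun i => ⟨hvone i, ?_⟩, hsum⟩
        have hpv : pvext v (i:ℕ) = v i := by
          rw [pvext_lt v i.isLt]
        calc v i = pvext v (i:ℕ) := hpv.symm
          _ ≤ ppsum v k := pvext_le_ppsum v i.isLt
          _ = ∑ i, v i := ppsum_top v
          _ ≤ c := hsum
      · apply Finset.coe_injective
        rw [Finset.coe_image, Finset.coe_univ, Set.image_univ]
        have : (fun i : Fin k => ppsum v (i+1)) = e := by
          funext i
          rw [hps i i.isLt]
        rw [this, he]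
        exact Finset.range_orderEmbOfFin s hcard
  rw [key, Finset.card_powersetCard, hIcc]

lemma ppsum_congr {k k' : ℕ} (v : Fin k → ℕ) (w : Fin k' → ℕ) {j : ℕ} (hj : j ≤ k) (hj' : j ≤ k')
    (h : ∀ i (h1 : i < k) (h2 : i < k'), i < j → v ⟨i, h1⟩ = w ⟨i, h2⟩) :
    ppsum v j = ppsum w j := by
  apply Finset.sum_congr rfl
  intro i hi
  rw [Finset.mem_range] at hi
  rw [pvext_lt v (by omega), pvext_lt w (by omega)]
  exact h i (by omega) (by omega) hi

/-- splitting map, forward -/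
def splitFwd (a m n : ℕ) (v : Fin (m + n) → ℕ) : (Fin m → ℕ) × (Fin n → ℕ) :=
  (fun i : Fin m => v (Fin.castAdd n i),
   fun j : Fin n => if (j : ℕ) = 0 then ppsum v (m + 1) - a
     else v ⟨m + j, by have := j.isLt; omega⟩)

/-- splitting map, backward -/
def splitBwd (a m n : ℕ) (xw : (Fin m → ℕ) × (Fin n → ℕ)) : Fin (m + n) → ℕ :=
  fun i : Fin (m + n) =>
    if h : (i : ℕ) < m then xw.1 ⟨i, h⟩
    else if h2 : (i : ℕ) = m then a - (∑ j, xw.1 j) + xw.2 ⟨0, by have := i.isLt; omega⟩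
    else xw.2 ⟨(i : ℕ) - m, by have := i.isLt; omega⟩

lemma fin_arg_eq {k : ℕ} (v : Fin k → ℕ) {i j : Fin k} (h : (i : ℕ) = (j : ℕ)) : v i = v j := by
  congr 1
  exact Fin.ext h

lemma splitFwd_fst (a m n : ℕ) (v : Fin (m + n) → ℕ) (i : Fin m) :
    (splitFwd a m n v).1 i = v ⟨(i : ℕ), by have := i.isLt; omega⟩ := by
  show v (Fin.castAdd n i) = _
  exact fin_arg_eq v (by simp)

lemma splitFwd_snd_zero (a m n : ℕ) (v : Fin (m + n) → ℕ) (j : Fin n) (h : (j : ℕ) = 0) :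
    (splitFwd a m n v).2 j = ppsum v (m + 1) - a := by
  show (if (j : ℕ) = 0 then _ else _) = _
  rw [if_pos h]

lemma splitFwd_snd_pos (a m n : ℕ) (v : Fin (m + n) → ℕ) (j : Fin n) (h : (j : ℕ) ≠ 0) :
    (splitFwd a m n v).2 j = v ⟨m + (j : ℕ), by have := j.isLt; omega⟩ := by
  show (if (j : ℕ) = 0 then _ else _) = _
  rw [if_neg h]

lemma splitBwd_lt (a m n : ℕ) (xw : (Fin m → ℕ) × (Fin n → ℕ)) (i : Fin (m + n))
    (h : (i : ℕ) < m) : splitBwd a m n xw i = xw.1 ⟨(i : ℕ), h⟩ := by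
  unfold splitBwd
  rw [dif_pos h]

lemma splitBwd_eq (a m n : ℕ) (xw : (Fin m → ℕ) × (Fin n → ℕ)) (i : Fin (m + n))
    (h : (i : ℕ) = m) :
    splitBwd a m n xw i = a - (∑ j, xw.1 j) + xw.2 ⟨0, by have := i.isLt; omega⟩ := by
  unfold splitBwd
  rw [dif_neg (by omega), dif_pos h]

lemma splitBwd_gt (a m n : ℕ) (xw : (Fin m → ℕ) × (Fin n → ℕ)) (i : Fin (m + n))
    (h : m < (i : ℕ)) :
    splitBwd a m n xw i = xw.2 ⟨(i : ℕ) - m, by have := i.isLt; omega⟩ := by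
  unfold splitBwd
  rw [dif_neg (by omega), dif_neg (by omega)]

lemma ppsum_one {k : ℕ} (v : Fin k → ℕ) (h : 0 < k) : ppsum v 1 = v ⟨0, h⟩ := by
  have h1 : ppsum v 1 = ppsum v 0 + pvext v 0 := by simpa using ppsum_succ v 0
  have h2 : ppsum v 0 = 0 := ppsum_zero v
  have h3 : pvext v 0 = v ⟨0, h⟩ := pvext_lt v h
  omega

/-- partial sums of splitBwd below m -/
lemma splitBwd_ppsum_le (a m n : ℕ) (xw : (Fin m → ℕ) × (Fin n → ℕ)) {j : ℕ} (hj : j ≤ m) :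
    ppsum (splitBwd a m n xw) j = ppsum xw.1 j := by
  apply ppsum_congr _ _ (by omega) hj
  intro i h1 h2 hij
  exact splitBwd_lt a m n xw ⟨i, h1⟩ h2

/-- partial sums of splitBwd above m -/
lemma splitBwd_ppsum_gt (a m n : ℕ) (xw : (Fin m → ℕ) × (Fin n → ℕ))
    (hxa : ∑ j, xw.1 j ≤ a) {l : ℕ} (hl1 : 1 ≤ l) (hln : l ≤ n) :
    ppsum (splitBwd a m n xw) (m + l) = a + ppsum xw.2 l := by
  induction l with
  | zero => omega
  | succ l ih =>
    rcases Nat.eq_zero_or_pos l with hl0 | hl0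
    · subst hl0
      have h0n : 0 < n := by omega
      have h0 : ppsum (splitBwd a m n xw) (m + (0 + 1)) = ppsum (splitBwd a m n xw) (m + 1) := by
        norm_num
      have h1 : ppsum (splitBwd a m n xw) (m + 1)
          = ppsum (splitBwd a m n xw) m + pvext (splitBwd a m n xw) m := ppsum_succ _ m
      have h2 : pvext (splitBwd a m n xw) m = a - (∑ j, xw.1 j) + xw.2 ⟨0, h0n⟩ := by
        rw [pvext_lt _ (show m < m + n by omega)]
        rw [splitBwd_eq a m n xw ⟨m, by omega⟩ rfl]
      have h4 := splitBwd_ppsum_le a m n xw (le_refl m)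
      have h5 : ppsum xw.1 m = ∑ j, xw.1 j := ppsum_top _
      have h6 : ppsum xw.2 (0 + 1) = ppsum xw.2 1 := by norm_num
      have h7 := ppsum_one xw.2 h0n
      omega
    · have ih' := ih (by omega) (by omega)
      have hln : l < n := by omega
      have h0 : ppsum (splitBwd a m n xw) (m + (l + 1))
          = ppsum (splitBwd a m n xw) (m + l + 1) := by rw [Nat.add_assoc]
      have h1 : ppsum (splitBwd a m n xw) (m + l + 1)
          = ppsum (splitBwd a m n xw) (m + l) + pvext (splitBwd a m n xw) (m + l) :=
        ppsum_succ _ _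
      have h2 : pvext (splitBwd a m n xw) (m + l) = xw.2 ⟨l, hln⟩ := by
        rw [pvext_lt _ (show m + l < m + n by omega)]
        rw [splitBwd_gt a m n xw ⟨m + l, by omega⟩ (by simp; omega)]
        exact fin_arg_eq _ (by simp)
      have h4 : ppsum xw.2 (l + 1) = ppsum xw.2 l + pvext xw.2 l := ppsum_succ _ l
      have h5 : pvext xw.2 l = xw.2 ⟨l, hln⟩ := pvext_lt _ hln
      omega

set_option maxHeartbeats 1000000 in
/-- the main counting lemma -/
lemma card_T (a b m n : ℕ) :
    ((Fintype.piFinset fun _ : Fin (m + n) => Finset.Icc 1 (a + b)).filter fun v =>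
        ppsum v m ≤ a ∧ ∀ i ≤ m + n, m < i → (a < ppsum v i ∧ ppsum v i ≤ a + b)).card
      = a.choose m * b.choose n := by
  rw [← card_comps a m, ← card_comps b n, ← Finset.card_product]
  apply Finset.card_nbij' (i := splitFwd a m n) (j := splitBwd a m n)
  · -- forward membership
    intro v hv
    simp only [Finset.mem_coe, Finset.mem_filter, Fintype.mem_piFinset, Finset.mem_Icc] at hv
    obtain ⟨hbox, hpm, hmid⟩ := hv
    have hone : ∀ i, 1 ≤ v i := fun i => (hbox i).1
    have hx : ∀ j, j ≤ m → ppsum (splitFwd a m n v).1 j = ppsum v j := by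
      intro j hj
      apply ppsum_congr _ _ hj (by omega)
      intro i h1 h2 _
      exact splitFwd_fst a m n v ⟨i, h1⟩
    have hw : ∀ l, 1 ≤ l → l ≤ n → a + ppsum (splitFwd a m n v).2 l = ppsum v (m + l) := by
      intro l hl1 hln
      induction l with
      | zero => omega
      | succ l ih =>
        rcases Nat.eq_zero_or_pos l with hl0 | hl0
        · subst hl0
          have h0n : 0 < n := by omega
          have h00 : ppsum (splitFwd a m n v).2 (0 + 1) = ppsum (splitFwd a m n v).2 1 := by
            norm_num
          have h01 : ppsum v (m + (0 + 1)) = ppsum v (m + 1) := by norm_num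
          have h1 := ppsum_one (splitFwd a m n v).2 h0n
          have h2 := splitFwd_snd_zero a m n v ⟨0, h0n⟩ rfl
          have h3 := (hmid (m + 1) (by omega) (by omega)).1
          omega
        · have ih' := ih (by omega) (by omega)
          have hln : l < n := by omega
          have hmln : m + l < m + n := by omega
          have h0 : ppsum v (m + (l + 1)) = ppsum v (m + l + 1) := by rw [Nat.add_assoc]
          have h1 : ppsum (splitFwd a m n v).2 (l + 1)
              = ppsum (splitFwd a m n v).2 l + pvext (splitFwd a m n v).2 l := ppsum_succ _ l
          have h2 : pvext (splitFwd a m n v).2 l = v ⟨m + l, hmln⟩ := by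
            rw [pvext_lt _ hln, splitFwd_snd_pos a m n v ⟨l, hln⟩ (by simp; omega)]
          have h4 : ppsum v (m + l + 1) = ppsum v (m + l) + pvext v (m + l) := ppsum_succ v _
          have h5 : pvext v (m + l) = v ⟨m + l, hmln⟩ := pvext_lt v hmln
          omega
    simp only [Finset.mem_coe, Finset.mem_product, Finset.mem_filter, Fintype.mem_piFinset, Finset.mem_Icc]
    have hxa : ∑ i, (splitFwd a m n v).1 i ≤ a := by
      rw [← ppsum_top, hx m le_rfl]; exact hpm
    have hfst : ∀ i : Fin m, 1 ≤ (splitFwd a m n v).1 i ∧ (splitFwd a m n v).1 i ≤ a := by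
      intro i
      rw [splitFwd_fst]
      refine ⟨hone _, ?_⟩
      have h1 := pvext_le_ppsum v (show (i : ℕ) < m from i.isLt)
      have h2 : pvext v (i : ℕ) = v ⟨(i : ℕ), by have := i.isLt; omega⟩ := pvext_lt v _
      omega
    rcases Nat.eq_zero_or_pos n with hn0 | hn0
    · refine ⟨⟨hfst, hxa⟩, ?_, ?_⟩
      · intro j; exact absurd j.isLt (by omega)
      · have hemp : (Finset.univ : Finset (Fin n)) = ∅ :=
          Finset.univ_eq_empty_iff.2 ⟨fun j => absurd j.isLt (by omega)⟩
        rw [hemp, Finset.sum_empty]; omega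
    · have hsumw : a + ∑ j, (splitFwd a m n v).2 j = ppsum v (m + n) := by
        rw [← ppsum_top]; exact hw n hn0 le_rfl
      have hKle := (hmid (m + n) le_rfl (by omega)).2
      have hwb : ∑ j, (splitFwd a m n v).2 j ≤ b := by omega
      refine ⟨⟨hfst, hxa⟩, ?_, hwb⟩
      intro j
      have hwle : (splitFwd a m n v).2 j ≤ ∑ j', (splitFwd a m n v).2 j' :=
        Finset.single_le_sum (fun _ _ => Nat.zero_le _) (Finset.mem_univ j)
      constructor
      · rcases Nat.eq_zero_or_pos (j : ℕ) with h0 | h0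
        · rw [splitFwd_snd_zero a m n v j h0]
          have := (hmid (m + 1) (by omega) (by omega)).1
          omega
        · rw [splitFwd_snd_pos a m n v j (by omega)]
          exact hone _
      · omega
  · -- backward membership
    intro xw hxw
    simp only [Finset.mem_coe, Finset.mem_product, Finset.mem_filter, Fintype.mem_piFinset, Finset.mem_Icc] at hxw
    obtain ⟨⟨hxbox, hxsum⟩, hwbox, hwsum⟩ := hxw
    have hum : ppsum (splitBwd a m n xw) m = ∑ j, xw.1 j := by
      rw [splitBwd_ppsum_le a m n xw le_rfl, ppsum_top]
    have hwpos : ∀ l, 1 ≤ l → l ≤ n → 1 ≤ ppsum xw.2 l := by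
      intro l hl1 hln
      have h1 := ppsum_one xw.2 (by omega : 0 < n)
      have h2 := ppsum_mono xw.2 hl1
      have h3 := (hwbox ⟨0, by omega⟩).1
      omega
    have hwtop : ∀ l, l ≤ n → ppsum xw.2 l ≤ b := by
      intro l hl
      have h1 := ppsum_mono xw.2 hl
      rw [ppsum_top] at h1
      omega
    simp only [Finset.mem_coe, Finset.mem_filter, Fintype.mem_piFinset, Finset.mem_Icc]
    refine ⟨?_, ?_, ?_⟩
    · intro i
      rcases lt_trichotomy ((i : ℕ)) m with h | h | h
      · rw [splitBwd_lt a m n xw i h]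
        have := hxbox ⟨(i : ℕ), h⟩
        omega
      · rw [splitBwd_eq a m n xw i h]
        have h1 := hwbox ⟨0, by have := i.isLt; omega⟩
        omega
      · rw [splitBwd_gt a m n xw i h]
        have h1 := hwbox ⟨(i : ℕ) - m, by have := i.isLt; omega⟩
        omega
    · rw [hum]; omega
    · intro i hiK hmi
      have h2 := splitBwd_ppsum_gt a m n xw hxsum (show 1 ≤ i - m by omega)
        (show i - m ≤ n by omega)
      rw [show m + (i - m) = i by omega] at h2
      have h3 := hwpos (i - m) (by omega) (by omega)
      have h4 := hwtop (i - m) (by omega)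
      omega
  · -- left inverse
    intro v hv
    simp only [Finset.mem_coe, Finset.mem_filter, Fintype.mem_piFinset, Finset.mem_Icc] at hv
    obtain ⟨hbox, hpm, hmid⟩ := hv
    funext i
    rcases lt_trichotomy ((i : ℕ)) m with h | h | h
    · rw [splitBwd_lt a m n (splitFwd a m n v) i h, splitFwd_fst]
    · have hn0 : 0 < n := by have := i.isLt; omega
      rw [splitBwd_eq a m n (splitFwd a m n v) i h,
        splitFwd_snd_zero a m n v ⟨0, hn0⟩ rfl]
      have hxsum : ∑ j, (splitFwd a m n v).1 j = ppsum v m := by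
        rw [← ppsum_top]
        apply ppsum_congr _ _ le_rfl (by omega)
        intro i' ha hb _
        exact splitFwd_fst a m n v ⟨i', ha⟩
      have hm1 := (hmid (m + 1) (by omega) (by omega)).1
      have hps : ppsum v (m + 1) = ppsum v m + pvext v m := ppsum_succ v m
      have hpe : pvext v m = v ⟨m, by omega⟩ := pvext_lt v (by omega)
      have hvi : v i = v ⟨m, by omega⟩ := fin_arg_eq v (by simp [h])
      rw [hxsum, hvi]
      omega
    · have hn0 : 0 < n := by have := i.isLt; omega
      rw [splitBwd_gt a m n (splitFwd a m n v) i h,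
        splitFwd_snd_pos a m n v ⟨(i : ℕ) - m, by have := i.isLt; omega⟩ (by simp; omega)]
      exact (fin_arg_eq v (by simp; omega)).symm
  · -- right inverse
    intro xw hxw
    simp only [Finset.mem_coe, Finset.mem_product, Finset.mem_filter, Fintype.mem_piFinset, Finset.mem_Icc] at hxw
    obtain ⟨⟨hxbox, hxsum⟩, hwbox, hwsum⟩ := hxw
    have hum : ppsum (splitBwd a m n xw) m = ∑ j, xw.1 j := by
      rw [splitBwd_ppsum_le a m n xw le_rfl, ppsum_top]
    refine Prod.ext ?_ ?_
    · funext i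
      rw [splitFwd_fst]
      rw [splitBwd_lt a m n xw ⟨(i : ℕ), by have := i.isLt; omega⟩ i.isLt]
    · funext j
      rcases Nat.eq_zero_or_pos (j : ℕ) with h0 | h0
      · rw [splitFwd_snd_zero a m n (splitBwd a m n xw) j h0]
        have h1 := splitBwd_ppsum_gt a m n xw hxsum (le_refl 1) (by have := j.isLt; omega)
        have h2 := ppsum_one xw.2 (by have := j.isLt; omega : 0 < n)
        have h3 : xw.2 ⟨0, by have := j.isLt; omega⟩ = xw.2 j := fin_arg_eq _ (by simp [h0])
        omega
      · rw [splitFwd_snd_pos a m n (splitBwd a m n xw) j (by omega)]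
        rw [splitBwd_gt a m n xw ⟨m + (j : ℕ), by have := j.isLt; omega⟩ (by simp; omega)]
        exact fin_arg_eq _ (by simp)

end GeomRenewal

open GeomRenewal

set_option maxHeartbeats 1000000 in
/-- For a renewal counting process `L` with i.i.d. geometric interarrival times of
parameter `p`, for `0 ≤ s ≤ t`, `m ≤ ⌊s⌋`, `n ≤ ⌊t⌋ - ⌊s⌋`:
`P{L(s) = m, L(t) - L(s) = n} = C(⌊s⌋,m) C(⌊t⌋-⌊s⌋,n) q^⌊t⌋ (p/q)^{m+n}`. -/
theorem geom_renewal_joint_law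
    {Ω : Type*} [MeasurableSpace Ω] (P : Measure Ω) [IsProbabilityMeasure P]
    (p q : ℝ) (hp : p ∈ Set.Ioo (0 : ℝ) 1) (hq : q = 1 - p)
    (U : ℕ → Ω → ℕ)
    (hUmeas : ∀ m, Measurable (U m))
    (hUindep : iIndepFun (fun m => U (m + 1)) P)
    (hUgeom : ∀ m, 1 ≤ m → ∀ k, 1 ≤ k →
      P {ω | U m ω = k} = ENNReal.ofReal (p * q ^ (k - 1)))
    (S : ℕ → Ω → ℕ) (hS : ∀ k ω, S k ω = ∑ i ∈ Finset.range k, U (i + 1) ω)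
    (L : ℝ → Ω → ℕ)
    (hL : ∀ t ω, L t ω = Nat.card {k : ℕ // 1 ≤ k ∧ (S k ω : ℝ) ≤ t})
    (s t : ℝ) (hs : 0 ≤ s) (hst : s ≤ t)
    (m n : ℕ) (hm : m ≤ Nat.floor s) (hn : n ≤ Nat.floor t - Nat.floor s) :
    (P {ω | L s ω = m ∧ L t ω - L s ω = n}).toReal =
      (Nat.choose (Nat.floor s) m : ℝ) * (Nat.choose (Nat.floor t - Nat.floor s) n : ℝ) *
        q ^ (Nat.floor t) * (p / q) ^ (m + n) := by
  obtain ⟨hp0, hp1⟩ := hp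
  have hq0 : 0 < q := by rw [hq]; linarith
  have hq1 : q < 1 := by rw [hq]; linarith
  have ht0 : 0 ≤ t := le_trans hs hst
  set a := Nat.floor s with ha
  set c := Nat.floor t with hc
  have hac : a ≤ c := Nat.floor_le_floor hst
  set b := c - a with hb
  have habc : a + b = c := by omega
  have hKc : m + n ≤ c := by omega
  -- geometric tail probabilities
  have htail : ∀ j r : ℕ, 1 ≤ j → 1 ≤ r →
      P {ω | r ≤ U j ω} = ENNReal.ofReal (q ^ (r - 1)) := by
    intro j r hj hr
    have hset : {ω | r ≤ U j ω} = ⋃ i : ℕ, {ω | U j ω = r + i} := by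
      ext ω
      simp only [Set.mem_setOf_eq, Set.mem_iUnion]
      constructor
      · intro h; exact ⟨U j ω - r, by omega⟩
      · rintro ⟨i, hi⟩; omega
    have hdisj : Pairwise (Function.onFun Disjoint fun i : ℕ => {ω | U j ω = r + i}) := by
      intro i i' hii'
      apply Set.disjoint_left.2
      intro ω h1 h2
      simp only [Set.mem_setOf_eq] at h1 h2
      omega
    have hmeas : ∀ i : ℕ, MeasurableSet {ω | U j ω = r + i} := fun i =>
      hUmeas j (measurableSet_singleton (r + i))
    rw [hset, measure_iUnion hdisj hmeas]
    have hterm : ∀ i : ℕ, P {ω | U j ω = r + i}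
        = ENNReal.ofReal (p * q ^ (r - 1) * q ^ i) := by
      intro i
      rw [hUgeom j hj (r + i) (by omega)]
      congr 1
      rw [show r + i - 1 = (r - 1) + i by omega, pow_add]
      ring
    rw [tsum_congr hterm]
    have hsummable : Summable fun i : ℕ => p * q ^ (r - 1) * q ^ i :=
      (summable_geometric_of_lt_one hq0.le hq1).mul_left _
    rw [← ENNReal.ofReal_tsum_of_nonneg (fun i => by positivity) hsummable]
    congr 1
    rw [tsum_mul_left, tsum_geometric_of_lt_one hq0.le hq1]
    have hqp : 1 - q = p := by rw [hq]; ring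
    rw [hqp]
    field_simp
  -- P(U j = 0) = 0
  have hzero : ∀ j : ℕ, 1 ≤ j → P {ω | U j ω = 0} = 0 := by
    intro j hj
    have hsplit : (Set.univ : Set Ω) = {ω | U j ω = 0} ∪ {ω | 1 ≤ U j ω} := by
      ext ω; simp only [Set.mem_univ, Set.mem_union, Set.mem_setOf_eq, true_iff]; omega
    have hdisj : Disjoint {ω | U j ω = 0} {ω | 1 ≤ U j ω} := by
      apply Set.disjoint_left.2
      intro ω h1 h2
      simp only [Set.mem_setOf_eq] at h1 h2
      omega
    have hmeas2 : MeasurableSet {ω | 1 ≤ U j ω} := hUmeas j measurableSet_Ici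
    have h1 : (1 : ENNReal) = P {ω | U j ω = 0} + P {ω | 1 ≤ U j ω} := by
      rw [← measure_union hdisj hmeas2, ← hsplit, measure_univ]
    rw [htail j 1 hj le_rfl] at h1
    simp only [Nat.sub_self, pow_zero, ENNReal.ofReal_one] at h1
    have h2 : P {ω | U j ω = 0} + 1 = 0 + 1 := by rw [← h1, zero_add]
    exact (ENNReal.add_left_inj ENNReal.one_ne_top).1 h2
  -- the null set
  set N : Set Ω := ⋃ j : ℕ, {ω | U (j + 1) ω = 0} with hNdef
  have hN : P N = 0 := measure_iUnion_null fun j => hzero (j + 1) (by omega)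
  have hgood : ∀ ω, ω ∉ N → ∀ j : ℕ, 1 ≤ U (j + 1) ω := by
    intro ω hω j
    simp only [hNdef, Set.mem_iUnion, Set.mem_setOf_eq, not_exists] at hω
    have := hω j
    omega
  -- basic facts about S
  have hSsucc : ∀ ω k, S (k + 1) ω = S k ω + U (k + 1) ω := fun ω k => by
    rw [hS, hS, Finset.sum_range_succ]
  have hS0 : ∀ ω, S 0 ω = 0 := fun ω => by rw [hS]; exact Finset.sum_range_zero _
  have hstep : ∀ ω, ω ∉ N → ∀ k, S k ω < S (k + 1) ω := by
    intro ω hω k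
    have h1 := hgood ω hω k
    have h2 := hSsucc ω k
    omega
  have hSmono : ∀ ω, ω ∉ N → ∀ k k', k ≤ k' → S k ω ≤ S k' ω := by
    intro ω hω k k' hkk'
    exact monotone_nat_of_le_succ (fun j => (hstep ω hω j).le) hkk'
  have hSge : ∀ ω, ω ∉ N → ∀ k, k ≤ S k ω := by
    intro ω hω k
    induction k with
    | zero => exact Nat.zero_le _
    | succ k ih =>
      have := hstep ω hω k
      omega
  -- value of L
  have hLval : ∀ ω, ω ∉ N → ∀ (r : ℝ), 0 ≤ r → ∀ mm : ℕ,
      S mm ω ≤ Nat.floor r → Nat.floor r < S (mm + 1) ω → L r ω = mm := by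
    intro ω hω r hr mm h1 h2
    rw [hL]
    have hiff : ∀ k : ℕ, (1 ≤ k ∧ (S k ω : ℝ) ≤ r) ↔ k ∈ Finset.Icc 1 mm := by
      intro k
      rw [Finset.mem_Icc]
      constructor
      · rintro ⟨hk1, hk2⟩
        refine ⟨hk1, ?_⟩
        have hkfl : S k ω ≤ Nat.floor r := Nat.le_floor hk2
        by_contra hcon
        have hge : S (mm + 1) ω ≤ S k ω := hSmono ω hω _ _ (by omega)
        omega
      · rintro ⟨hk1, hk2⟩
        refine ⟨hk1, ?_⟩
        have hle : S k ω ≤ Nat.floor r := le_trans (hSmono ω hω _ _ hk2) h1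
        calc (S k ω : ℝ) ≤ (Nat.floor r : ℝ) := by exact_mod_cast hle
          _ ≤ r := Nat.floor_le hr
    calc Nat.card {k : ℕ // 1 ≤ k ∧ (S k ω : ℝ) ≤ r}
        = Nat.card {k : ℕ // k ∈ Finset.Icc 1 mm} :=
          Nat.card_congr (Equiv.subtypeEquivRight hiff)
      _ = (Finset.Icc 1 mm).card := Nat.card_eq_finsetCard _
      _ = mm := by rw [Nat.card_Icc]; omega
  -- characterization of L
  have hLchar : ∀ ω, ω ∉ N → ∀ (r : ℝ), 0 ≤ r →
      S (L r ω) ω ≤ Nat.floor r ∧ Nat.floor r < S (L r ω + 1) ω := by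
    intro ω hω r hr
    have hex : ∃ k, Nat.floor r < S k ω :=
      ⟨Nat.floor r + 1, by have := hSge ω hω (Nat.floor r + 1); omega⟩
    obtain ⟨k0, hk0, hmin0⟩ : ∃ k0, (Nat.floor r < S k0 ω) ∧ ∀ j, j < k0 → ¬(Nat.floor r < S j ω) :=
      ⟨Nat.find hex, Nat.find_spec hex, fun j hj => Nat.find_min hex hj⟩
    have hk0pos : k0 ≠ 0 := by
      rintro rfl
      have := hS0 ω
      omega
    have hmin : ¬ (Nat.floor r < S (k0 - 1) ω) := hmin0 (k0 - 1) (by omega)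
    have hval := hLval ω hω r hr (k0 - 1) (by omega)
      (by rw [show k0 - 1 + 1 = k0 by omega]; exact hk0)
    rw [hval, show k0 - 1 + 1 = k0 by omega]
    exact ⟨by omega, hk0⟩
  -- the cylinder sets
  set msets : (Fin (m + n) → ℕ) → ℕ → Set ℕ := fun v i =>
    if i < m + n then {pvext v i} else Set.Ici (a + b + 1 - ppsum v (m + n)) with hmsets
  set Cyl : (Fin (m + n) → ℕ) → Set Ω := fun v =>
    ⋂ i ∈ Finset.range (m + n + 1), U (i + 1) ⁻¹' msets v i with hCyl
  have hmsets_meas : ∀ v i, MeasurableSet (msets v i) := by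
    intro v i
    rw [hmsets]
    by_cases h : i < m + n
    · simp only [if_pos h]; exact measurableSet_singleton _
    · simp only [if_neg h]; exact measurableSet_Ici
  have hCylmem : ∀ v ω, ω ∈ Cyl v ↔
      ((∀ i, i < m + n → U (i + 1) ω = pvext v i) ∧
        a + b + 1 - ppsum v (m + n) ≤ U (m + n + 1) ω) := by
    intro v ω
    rw [hCyl]
    simp only [Set.mem_iInter, Set.mem_preimage, Finset.mem_range]
    constructor
    · intro h
      constructor
      · intro i hi
        have := h i (by omega)
        rw [hmsets] at this
        simp only [if_pos hi, Set.mem_singleton_iff] at this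
        exact this
      · have := h (m + n) (by omega)
        rw [hmsets] at this
        simp only [if_neg (lt_irrefl (m + n)), Set.mem_Ici] at this
        exact this
    · rintro ⟨h1, h2⟩ i hi
      rw [hmsets]
      by_cases hiK : i < m + n
      · simp only [if_pos hiK, Set.mem_singleton_iff]
        exact h1 i hiK
      · have hieq : i = m + n := by omega
        simp only [if_neg hiK, Set.mem_Ici]
        rw [hieq]
        exact h2
  have hCylmeas : ∀ v, MeasurableSet (Cyl v) := by
    intro v
    rw [hCyl]
    exact Finset.measurableSet_biInter _ fun i _ => hUmeas (i + 1) (hmsets_meas v i)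
  -- the index Finset
  set T : Finset (Fin (m + n) → ℕ) :=
    (Fintype.piFinset fun _ : Fin (m + n) => Finset.Icc 1 (a + b)).filter fun v =>
      ppsum v m ≤ a ∧ ∀ i ≤ m + n, m < i → (a < ppsum v i ∧ ppsum v i ≤ a + b) with hT
  have hTmem : ∀ v, v ∈ T ↔ ((∀ i, 1 ≤ v i ∧ v i ≤ a + b) ∧ ppsum v m ≤ a ∧
      ∀ i ≤ m + n, m < i → (a < ppsum v i ∧ ppsum v i ≤ a + b)) := by
    intro v
    rw [hT]
    simp only [Finset.mem_filter, Fintype.mem_piFinset, Finset.mem_Icc]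
  -- probability of a cylinder
  have hPCyl : ∀ v ∈ T, P (Cyl v) = ENNReal.ofReal (p ^ (m + n) * q ^ (a + b - (m + n))) := by
    intro v hv
    rw [hTmem] at hv
    obtain ⟨hbox, hpm, hmid⟩ := hv
    have hvone : ∀ i, 1 ≤ v i := fun i => (hbox i).1
    have hKsum : ppsum v (m + n) ≤ a + b := by
      rcases Nat.eq_zero_or_pos n with h | h
      · have h2 : ppsum v (m + n) ≤ ppsum v m := ppsum_mono v (by omega)
        omega
      · exact (hmid (m + n) le_rfl (by omega)).2
    have hKK : m + n ≤ ppsum v (m + n) := le_ppsum v hvone le_rfl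
    have hind := hUindep.measure_inter_preimage_eq_mul (ι := ℕ)
      (S := Finset.range (m + n + 1)) (sets := msets v) (fun i _ => hmsets_meas v i)
    rw [hCyl]
    simp only
    rw [hind, Finset.prod_range_succ]
    have hlast : P ((fun ω => U (m + n + 1) ω) ⁻¹' msets v (m + n))
        = ENNReal.ofReal (q ^ (a + b - ppsum v (m + n))) := by
      have hset : (fun ω => U (m + n + 1) ω) ⁻¹' msets v (m + n)
          = {ω | a + b + 1 - ppsum v (m + n) ≤ U (m + n + 1) ω} := by
        rw [hmsets]
        simp only [if_neg (lt_irrefl (m + n))]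
        rfl
      rw [hset, htail (m + n + 1) (a + b + 1 - ppsum v (m + n)) (by omega) (by omega)]
      congr 2
      omega
    have hterm : ∀ i ∈ Finset.range (m + n), P ((fun ω => U (i + 1) ω) ⁻¹' msets v i)
        = ENNReal.ofReal (p * q ^ (pvext v i - 1)) := by
      intro i hi
      rw [Finset.mem_range] at hi
      have hset : (fun ω => U (i + 1) ω) ⁻¹' msets v i = {ω | U (i + 1) ω = pvext v i} := by
        rw [hmsets]
        simp only [if_pos hi]
        rfl
      have hvpos : 1 ≤ pvext v i := by rw [pvext_lt v hi]; exact hvone _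
      rw [hset, hUgeom (i + 1) (by omega) (pvext v i) hvpos]
    rw [Finset.prod_congr rfl hterm, hlast]
    have hprodnn : ∀ i ∈ Finset.range (m + n), 0 ≤ p * q ^ (pvext v i - 1) := by
      intro i _; positivity
    rw [← ENNReal.ofReal_prod_of_nonneg hprodnn, ← ENNReal.ofReal_mul (by positivity)]
    congr 1
    have hpv : ∀ i ∈ Finset.range (m + n), 1 ≤ pvext v i := by
      intro i hi
      rw [Finset.mem_range] at hi
      rw [pvext_lt v hi]
      exact hvone _
    have hexp : ∑ i ∈ Finset.range (m + n), (pvext v i - 1) = ppsum v (m + n) - (m + n) := by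
      have h1 : ∑ i ∈ Finset.range (m + n), (pvext v i - 1 + 1)
          = ∑ i ∈ Finset.range (m + n), (pvext v i - 1) + ∑ i ∈ Finset.range (m + n), 1 :=
        Finset.sum_add_distrib
      have h2 : ∑ i ∈ Finset.range (m + n), (pvext v i - 1 + 1)
          = ∑ i ∈ Finset.range (m + n), pvext v i :=
        Finset.sum_congr rfl fun i hi => by have := hpv i hi; omega
      have h3 : (∑ i ∈ Finset.range (m + n), pvext v i) = ppsum v (m + n) := rfl
      have h4 : ∑ i ∈ Finset.range (m + n), (1 : ℕ) = m + n := by simp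
      omega
    rw [Finset.prod_mul_distrib, Finset.prod_const, Finset.card_range,
      Finset.prod_pow_eq_pow_sum, hexp, mul_assoc, ← pow_add]
    congr 2
    omega
  -- the event, up to null set
  set E : Set Ω := {ω | L s ω = m ∧ L t ω - L s ω = n} with hE
  set EU : Set Ω := ⋃ v ∈ T, Cyl v with hEU
  have hps_eq : ∀ ω, (∀ i, i < m + n → U (i + 1) ω = pvext (fun i' : Fin (m+n) => U (i' + 1) ω) i) := by
    intro ω i hi
    rw [pvext_lt _ hi]
  -- partial sums equal S for cylinder-compatible v
  have hpsS : ∀ v : Fin (m + n) → ℕ, ∀ ω, (∀ i, i < m + n → U (i + 1) ω = pvext v i) →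
      ∀ j, j ≤ m + n → ppsum v j = S j ω := by
    intro v ω hvU j hj
    induction j with
    | zero => rw [ppsum_zero, hS0]
    | succ j ih =>
      rw [ppsum_succ, ih (by omega), hSsucc, ← hvU j (by omega)]
  have hEN : E ∪ N = EU ∪ N := by
    ext ω
    by_cases hω : ω ∈ N
    · simp [hω]
    · simp only [Set.mem_union, hω, or_false]
      constructor
      · rintro ⟨hLs, hLtn⟩
        have hchars := hLchar ω hω s hs
        have hchart := hLchar ω hω t ht0
        rw [hLs] at hchars
        obtain ⟨h1, h2⟩ := hchars
        obtain ⟨h3, h4⟩ := hchart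
        have hge : m ≤ L t ω := by
          by_contra hcon
          have := hSmono ω hω (L t ω + 1) m (by omega)
          omega
        have hLt : L t ω = m + n := by omega
        rw [hLt] at h3 h4
        set v : Fin (m + n) → ℕ := fun i => U ((i : ℕ) + 1) ω with hv
        have hvU : ∀ i, i < m + n → U (i + 1) ω = pvext v i := by
          intro i hi
          rw [pvext_lt _ hi]
        have hps := hpsS v ω hvU
        have hvT : v ∈ T := by
          rw [hTmem]
          refine ⟨?_, ?_, ?_⟩
          · intro i
            constructor
            · exact hgood ω hω _
            · have h5 : pvext v (i : ℕ) ≤ ppsum v (m + n) := pvext_le_ppsum v i.isLt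
              have h6 : pvext v (i : ℕ) = v i := by
                rw [pvext_lt v i.isLt]
              have h7 := hps (m + n) le_rfl
              omega
          · have := hps m (by omega)
            omega
          · intro i hiK hmi
            have h5 := hps i hiK
            have h6 := hSmono ω hω (m + 1) i (by omega)
            have h7 := hSmono ω hω i (m + n) hiK
            omega
        refine Set.mem_biUnion hvT ?_
        rw [hCylmem]
        refine ⟨hvU, ?_⟩
        have h8 := hps (m + n) le_rfl
        have h9 := hSsucc ω (m + n)
        omega
      · intro hmem
        obtain ⟨v, hvT, hcyl⟩ := Set.mem_iUnion₂.1 hmem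
        rw [hCylmem] at hcyl
        obtain ⟨hvU, hvtail⟩ := hcyl
        rw [hTmem] at hvT
        obtain ⟨hbox, hpm, hmid⟩ := hvT
        have hps := hpsS v ω hvU
        have hSm : S m ω ≤ a := by have := hps m (by omega); omega
        have hKsum : ppsum v (m + n) ≤ a + b := by
          rcases Nat.eq_zero_or_pos n with h | h
          · have h2 : ppsum v (m + n) ≤ ppsum v m := ppsum_mono v (by omega)
            omega
          · exact (hmid (m + n) le_rfl (by omega)).2
        have hSK : S (m + n) ω ≤ c := by have := hps (m + n) le_rfl; omega
        have hSK1 : c < S (m + n + 1) ω := by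
          have h8 := hps (m + n) le_rfl
          have h9 := hSsucc ω (m + n)
          omega
        have hSm1 : a < S (m + 1) ω := by
          rcases Nat.eq_zero_or_pos n with h | h
          · have h9 := hSmono ω hω (m + n + 1) (m + 1) (by omega)
            omega
          · have h5 := (hmid (m + 1) (by omega) (by omega)).1
            have := hps (m + 1) (by omega)
            omega
        have hLs : L s ω = m := hLval ω hω s hs m hSm hSm1
        have hLt : L t ω = m + n := hLval ω hω t ht0 (m + n) hSK hSK1
        rw [hE]
        refine ⟨hLs, by omega⟩
  -- put it together
  have hPE : P E = P EU := by
    apply le_antisymm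
    · calc P E ≤ P (E ∪ N) := measure_mono Set.subset_union_left
        _ = P (EU ∪ N) := by rw [hEN]
        _ ≤ P EU + P N := measure_union_le _ _
        _ = P EU := by rw [hN, add_zero]
    · calc P EU ≤ P (EU ∪ N) := measure_mono Set.subset_union_left
        _ = P (E ∪ N) := by rw [hEN]
        _ ≤ P E + P N := measure_union_le _ _
        _ = P E := by rw [hN, add_zero]
  have hdisjT : (T : Set (Fin (m + n) → ℕ)).PairwiseDisjoint Cyl := by
    intro v hv w hw hvw
    apply Set.disjoint_left.2
    intro ω h1 h2
    rw [hCylmem] at h1 h2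
    obtain ⟨i, hi⟩ := Function.ne_iff.1 hvw
    have e1 := h1.1 i i.isLt
    have e2 := h2.1 i i.isLt
    rw [pvext_lt v i.isLt] at e1
    rw [pvext_lt w i.isLt] at e2
    apply hi
    have hco : (⟨(i : ℕ), i.isLt⟩ : Fin (m + n)) = i := by ext; rfl
    rw [hco] at e1 e2
    omega
  have hPEU : P EU = ∑ v ∈ T, P (Cyl v) := by
    rw [hEU]
    exact measure_biUnion_finset hdisjT fun v _ => hCylmeas v
  have hsum : ∑ v ∈ T, P (Cyl v)
      = T.card • ENNReal.ofReal (p ^ (m + n) * q ^ (a + b - (m + n))) := by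
    rw [Finset.sum_congr rfl hPCyl, Finset.sum_const]
  -- final计算
  have hcardT : T.card = a.choose m * b.choose n := by
    rw [hT]
    exact card_T a b m n
  have hfinal : P E = (a.choose m * b.choose n : ℕ)
      • ENNReal.ofReal (p ^ (m + n) * q ^ (a + b - (m + n))) := by
    rw [hPE, hPEU, hsum, hcardT]
  rw [hE] at hfinal
  rw [hfinal]
  rw [nsmul_eq_mul, ENNReal.toReal_mul, ENNReal.toReal_natCast,
    ENNReal.toReal_ofReal (by positivity)]
  push_cast
  rw [habc]
  rw [div_pow]
  have hqK : (q : ℝ) ^ (m + n) ≠ 0 := pow_ne_zero _ (ne_of_gt hq0)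
  have hqc : q ^ c = q ^ (c - (m + n)) * q ^ (m + n) := by
    rw [← pow_add]
    congr 1
    omega
  rw [hqc]
  field_simp
end

section
/- For all real numbers 0 ≤ s ≤ t, the random variables L(s) and L(t) − L(s) are independent; that is, for all m, n ∈ ℕ₀, ℙ{L(s) = m, L(t) − L(s) = n} = ℙ{L(s) = m} · ℙ{L(t) − L(s) = n}. -/
open MeasureTheory ProbabilityTheory Set

namespace GeomRenewal

/-! ### Combinatorial layer -/

def sig (u : ℕ → ℕ) (k : ℕ) : ℕ := ∑ i ∈ Finset.range k, u i
lemma sig_zero (u : ℕ → ℕ) : sig u 0 = 0 := rfl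
lemma sig_succ (u : ℕ → ℕ) (k : ℕ) : sig u (k+1) = sig u k + u k := Finset.sum_range_succ _ _
lemma sig_mono (u : ℕ → ℕ) {j k : ℕ} (h : j ≤ k) : sig u j ≤ sig u k :=
  Finset.sum_le_sum_of_subset (Finset.range_subset_range.2 h)
lemma sig_strictMonoOn (u : ℕ → ℕ) {T : ℕ} (h1 : ∀ i, i < T → 1 ≤ u i)
    {j k : ℕ} (hjk : j < k) (hk : k ≤ T) : sig u j < sig u k := by
  have : sig u j + 1 ≤ sig u (j+1) := by
    rw [sig_succ]; exact Nat.add_le_add_left (h1 j (lt_of_lt_of_le hjk hk)) _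
  exact lt_of_lt_of_le (Nat.lt_of_lt_of_le (Nat.lt_succ_self _) this) (sig_mono u hjk)
lemma le_sig (u : ℕ → ℕ) {T : ℕ} (h1 : ∀ i, i < T → 1 ≤ u i) {k : ℕ} (hk : k ≤ T) :
    k ≤ sig u k := by
  induction k with
  | zero => simp [sig_zero]
  | succ j ih =>
    rw [sig_succ]
    have := ih (le_trans (Nat.le_succ _) hk)
    have h2 := h1 j (lt_of_lt_of_le (Nat.lt_succ_self _) hk)
    omega

def SM (k lo hi : ℕ) : Type :=
  {f : Fin k → ℕ // StrictMono f ∧ ∀ i, f i ∈ Finset.Icc lo hi}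

noncomputable def smEquiv (k lo hi : ℕ) :
    SM k lo hi ≃ {s // s ∈ Finset.powersetCard k (Finset.Icc lo hi)} where
  toFun f := ⟨Finset.image f.1 Finset.univ, by
    rw [Finset.mem_powersetCard]
    refine ⟨fun x hx => ?_, ?_⟩
    · rcases Finset.mem_image.1 hx with ⟨i, _, rfl⟩
      exact f.2.2 i
    · rw [Finset.card_image_of_injective _ f.2.1.injective, Finset.card_univ,
        Fintype.card_fin]⟩
  invFun s := by
    have h := (Finset.mem_powersetCard.1 s.2)
    exact ⟨s.1.orderEmbOfFin h.2, (s.1.orderEmbOfFin h.2).strictMono,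
      fun i => h.1 (Finset.orderEmbOfFin_mem s.1 h.2 i)⟩
  left_inv f := by
    apply Subtype.ext
    exact (Finset.orderEmbOfFin_unique _ (fun x => Finset.mem_image_of_mem _ (Finset.mem_univ x))
      f.2.1).symm
  right_inv s := by
    apply Subtype.ext
    have h := (Finset.mem_powersetCard.1 s.2)
    have := Finset.range_orderEmbOfFin s.1 h.2
    rw [← Finset.coe_inj, Finset.coe_image, Finset.coe_univ, Set.image_univ]
    exact this

instance (k lo hi : ℕ) : Finite (SM k lo hi) := Finite.of_equiv _ (smEquiv k lo hi).symm

lemma card_SM (k lo hi : ℕ) : Nat.card (SM k lo hi) = (hi + 1 - lo).choose k := by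
  rw [Nat.card_congr (smEquiv k lo hi)]
  rw [Nat.card_eq_finsetCard]
  rw [Finset.card_powersetCard, Nat.card_Icc]

/-- the set of valid increment tuples -/
def Valid (m n a b : ℕ) : Set (ℕ → ℕ) :=
  {u | (∀ i, i < m + n → 1 ≤ u i) ∧ (∀ i, m + n ≤ i → u i = 0) ∧
       sig u m ≤ a ∧ (∀ k, k ≤ m + n → m < k → a < sig u k) ∧ sig u (m + n) ≤ b}

/-- the concatenated value sequence -/
def cfun (m n : ℕ) (f : Fin m → ℕ) (g : Fin n → ℕ) (k : ℕ) : ℕ :=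
  if h : 1 ≤ k ∧ k ≤ m then f ⟨k - 1, by omega⟩
  else if h2 : m + 1 ≤ k ∧ k ≤ m + n then g ⟨k - 1 - m, by omega⟩
  else 0

section equivsec
variable {m n a b : ℕ} {f : Fin m → ℕ} {g : Fin n → ℕ}

lemma cfun_zero : cfun m n f g 0 = 0 := by
  unfold cfun; rw [dif_neg (by omega), dif_neg (by omega)]

lemma cfun_eq_f {k : ℕ} (hk1 : 1 ≤ k) (hk2 : k ≤ m) :
    cfun m n f g k = f ⟨k - 1, by omega⟩ := by
  unfold cfun; rw [dif_pos ⟨hk1, hk2⟩]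

lemma cfun_eq_g {k : ℕ} (hk1 : m + 1 ≤ k) (hk2 : k ≤ m + n) :
    cfun m n f g k = g ⟨k - 1 - m, by omega⟩ := by
  unfold cfun; rw [dif_neg (by omega), dif_pos ⟨hk1, hk2⟩]

lemma cfun_lt (hf : StrictMono f ∧ ∀ i, f i ∈ Finset.Icc 1 a)
    (hg : StrictMono g ∧ ∀ i, g i ∈ Finset.Icc (a+1) b)
    {k : ℕ} (hk : k < m + n) : cfun m n f g k < cfun m n f g (k+1) := by
  have hfle : ∀ i, 1 ≤ f i ∧ f i ≤ a := fun i => Finset.mem_Icc.1 (hf.2 i)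
  have hgle : ∀ i, a + 1 ≤ g i ∧ g i ≤ b := fun i => Finset.mem_Icc.1 (hg.2 i)
  rcases Nat.lt_or_ge k m with hkm | hkm
  · rw [cfun_eq_f (k := k + 1) (by omega) (by omega)]
    rcases Nat.eq_zero_or_pos k with rfl | hk0
    · rw [cfun_zero]
      exact lt_of_lt_of_le Nat.zero_lt_one (hfle _).1
    · rw [cfun_eq_f (k := k) hk0 (by omega)]
      exact hf.1 (Fin.mk_lt_mk.2 (by omega))
  · rw [cfun_eq_g (k := k + 1) (by omega) (by omega)]
    rcases Nat.lt_or_ge m k with hkm' | hkm'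
    · rw [cfun_eq_g (k := k) (by omega) (by omega)]
      exact hg.1 (Fin.mk_lt_mk.2 (by omega))
    · have hmk : m = k := by omega
      rcases Nat.eq_zero_or_pos m with hm0 | hm0
      · have : k = 0 := by omega
        subst this
        rw [cfun_zero]
        exact lt_of_lt_of_le (by omega) (hgle _).1
      · rw [cfun_eq_f (k := k) (by omega) (by omega)]
        exact lt_of_le_of_lt (hfle _).2 (lt_of_lt_of_le (Nat.lt_succ_self a) (hgle _).1)

lemma invu_sig_aux (hf : StrictMono f ∧ ∀ i, f i ∈ Finset.Icc 1 a)
    (hg : StrictMono g ∧ ∀ i, g i ∈ Finset.Icc (a+1) b)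
    {k : ℕ} (hk : k ≤ m + n) :
    sig (fun i => if i < m + n then cfun m n f g (i+1) - cfun m n f g i else 0) k
      = cfun m n f g k := by
  induction k with
  | zero => rw [sig_zero, cfun_zero]
  | succ l ih =>
    rw [sig_succ, ih (by omega)]
    simp only [if_pos (show l < m + n by omega)]
    have := cfun_lt hf hg (show l < m + n by omega)
    omega

end equivsec

noncomputable def validEquiv (m n a b : ℕ) (hab : a ≤ b) :
    ↥(Valid m n a b) ≃ SM m 1 a × SM n (a+1) b where
  toFun u :=
    ⟨⟨fun i => sig u.1 (i+1), by
      intro i j hij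
      exact sig_strictMonoOn u.1 u.2.1 (by omega : (i:ℕ)+1 < (j:ℕ)+1) (by omega), by
      intro i
      have h1 := u.2.1; have h3 := u.2.2.2.1
      show sig u.1 ((i:ℕ)+1) ∈ Finset.Icc 1 a
      rw [Finset.mem_Icc]
      have hi := i.isLt
      constructor
      · have := le_sig u.1 h1 (show (i:ℕ)+1 ≤ m + n by omega); omega
      · exact le_trans (sig_mono u.1 (by omega)) h3⟩,
     ⟨fun j => sig u.1 (m+1+j), by
      intro i j hij
      exact sig_strictMonoOn u.1 u.2.1 (by omega : m+1+(i:ℕ) < m+1+(j:ℕ)) (by omega), by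
      intro j
      have h4 := u.2.2.2.2.1; have h5 := u.2.2.2.2.2
      show sig u.1 (m+1+(j:ℕ)) ∈ Finset.Icc (a+1) b
      rw [Finset.mem_Icc]
      have hj := j.isLt
      constructor
      · have := h4 (m+1+(j:ℕ)) (by omega) (by omega); omega
      · exact le_trans (sig_mono u.1 (by omega)) h5⟩⟩
  invFun fg :=
    ⟨fun i => if i < m + n then cfun m n fg.1.1 fg.2.1 (i+1) - cfun m n fg.1.1 fg.2.1 i else 0, by
      refine ⟨?_, ?_, ?_, ?_, ?_⟩
      · intro i hi
        have := cfun_lt fg.1.2 fg.2.2 hi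
        simp only [if_pos hi]; omega
      · intro i hi; simp only [if_neg (show ¬ i < m + n by omega)]
      · rw [invu_sig_aux fg.1.2 fg.2.2 (by omega)]
        rcases Nat.eq_zero_or_pos m with hm0 | hm0
        · subst hm0; rw [cfun_zero]; omega
        · rw [cfun_eq_f (k := m) hm0 (le_refl m)]
          exact (Finset.mem_Icc.1 (fg.1.2.2 _)).2
      · intro k hk hmk
        rw [invu_sig_aux fg.1.2 fg.2.2 hk, cfun_eq_g (k := k) (by omega) hk]
        have := (Finset.mem_Icc.1 (fg.2.2.2 ⟨k - 1 - m, by omega⟩)).1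
        omega
      · rw [invu_sig_aux fg.1.2 fg.2.2 (le_refl _)]
        rcases Nat.eq_zero_or_pos n with hn0 | hn0
        · subst hn0
          rcases Nat.eq_zero_or_pos m with hm0 | hm0
          · subst hm0; rw [cfun_zero]; omega
          · rw [cfun_eq_f (k := m + 0) (by omega) (by omega)]
            have := (Finset.mem_Icc.1 (fg.1.2.2 ⟨m + 0 - 1, by omega⟩)).2
            omega
        · rw [cfun_eq_g (k := m + n) (by omega) (le_refl _)]
          exact (Finset.mem_Icc.1 (fg.2.2.2 _)).2⟩
  left_inv u := by
    apply Subtype.ext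
    funext i
    have h1 := u.2.1; have h2 := u.2.2.1
    show (if i < m + n then
        cfun m n (fun i : Fin m => sig u.1 ((i:ℕ)+1)) (fun j : Fin n => sig u.1 (m+1+(j:ℕ))) (i+1)
        - cfun m n (fun i : Fin m => sig u.1 ((i:ℕ)+1)) (fun j : Fin n => sig u.1 (m+1+(j:ℕ))) i
      else 0) = u.1 i
    have hc : ∀ k, k ≤ m + n → cfun m n (fun i : Fin m => sig u.1 ((i:ℕ)+1))
        (fun j : Fin n => sig u.1 (m+1+(j:ℕ))) k = sig u.1 k := by
      intro k hk
      rcases Nat.eq_zero_or_pos k with rfl | hk0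
      · rw [cfun_zero, sig_zero]
      · rcases le_or_gt k m with hkm | hkm
        · rw [cfun_eq_f (k := k) hk0 hkm]
          show sig u.1 (k - 1 + 1) = sig u.1 k
          congr 1; omega
        · rw [cfun_eq_g (k := k) (by omega) hk]
          show sig u.1 (m + 1 + (k - 1 - m)) = sig u.1 k
          congr 1; omega
    by_cases hi : i < m + n
    · rw [if_pos hi, hc (i+1) (by omega), hc i (by omega), sig_succ]
      omega
    · rw [if_neg hi, h2 i (by omega)]
  right_inv fg := by
    refine Prod.ext (Subtype.ext (funext fun i => ?_)) (Subtype.ext (funext fun j => ?_))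
    · show sig (fun i => if i < m + n then cfun m n fg.1.1 fg.2.1 (i+1)
        - cfun m n fg.1.1 fg.2.1 i else 0) ((i:ℕ)+1) = fg.1.1 i
      rw [invu_sig_aux fg.1.2 fg.2.2 (by omega), cfun_eq_f (k := (i:ℕ)+1) (by omega)
        (by omega)]
      exact congrArg fg.1.1 (Fin.ext (by simp))
    · show sig (fun i => if i < m + n then cfun m n fg.1.1 fg.2.1 (i+1)
        - cfun m n fg.1.1 fg.2.1 i else 0) (m+1+(j:ℕ)) = fg.2.1 j
      rw [invu_sig_aux fg.1.2 fg.2.2 (by omega), cfun_eq_g (k := m+1+(j:ℕ)) (by omega)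
        (by omega)]
      exact congrArg fg.2.1 (Fin.ext (by show m+1+(j:ℕ)-1-m = (j:ℕ); omega))

lemma finite_valid {m n a b : ℕ} (hab : a ≤ b) : Finite ↥(Valid m n a b) :=
  Finite.of_equiv _ (validEquiv m n a b hab).symm

lemma card_valid (m n a b : ℕ) (hab : a ≤ b) :
    Nat.card ↥(Valid m n a b) = a.choose m * (b - a).choose n := by
  rw [Nat.card_congr (validEquiv m n a b hab), Nat.card_prod, card_SM, card_SM]
  congr 2 <;> omega

lemma sum_sub_one {T : ℕ} (u : ℕ → ℕ) (h1 : ∀ i, i < T → 1 ≤ u i) :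
    ∑ i ∈ Finset.range T, (u i - 1) = sig u T - T := by
  induction T with
  | zero => simp [sig_zero]
  | succ l ih =>
    rw [Finset.sum_range_succ, sig_succ, ih (fun i hi => h1 i (by omega))]
    have h2 := h1 l (by omega)
    have h3 := le_sig u (fun i hi => h1 i (by omega)) (le_refl l)
    omega

/-! ### Measure-theoretic layer -/

/-- If two sets agree off a null set, they have the same measure. -/
lemma meas_eq_of_iff_off_null {Ω : Type*} [MeasurableSpace Ω] (P : Measure Ω)
    {N E F : Set Ω} (hN : P N = 0) (h : ∀ ω, ω ∉ N → (ω ∈ E ↔ ω ∈ F)) : P E = P F := by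
  have h1 : ∀ X Y : Set Ω, (∀ ω, ω ∉ N → (ω ∈ X → ω ∈ Y)) → P X ≤ P Y := by
    intro X Y hXY
    calc P X ≤ P (Y ∪ N) := measure_mono (by
          intro ω hω
          by_cases hn : ω ∈ N
          · exact Or.inr hn
          · exact Or.inl (hXY ω hn hω))
    _ ≤ P Y + P N := measure_union_le _ _
    _ = P Y := by rw [hN, add_zero]
  exact le_antisymm (h1 _ _ (fun ω hω => (h ω hω).1)) (h1 _ _ (fun ω hω => (h ω hω).2))

section Meas
variable {Ω : Type*} [MeasurableSpace Ω] (P : Measure Ω) [IsProbabilityMeasure P]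
  (p q : ℝ) (hp : p ∈ Set.Ioo (0:ℝ) 1) (hq : q = 1 - p)
  (V : ℕ → Ω → ℕ) (hmeas : ∀ i, Measurable (V i))
  (hgeom : ∀ i k, 1 ≤ k → P {ω | V i ω = k} = ENNReal.ofReal (p * q ^ (k-1)))

include hp hq hgeom hmeas

omit [IsProbabilityMeasure P] in
lemma meas_tail (i c : ℕ) : P {ω | c < V i ω} = ENNReal.ofReal (q ^ c) := by
  have hq0 : 0 ≤ q := by rw [hq]; linarith [hp.2]
  have hq1 : q < 1 := by rw [hq]; linarith [hp.1]
  have hset : {ω | c < V i ω} = ⋃ k : ℕ, {ω | V i ω = c + 1 + k} := by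
    ext ω
    simp only [Set.mem_setOf_eq, Set.mem_iUnion]
    constructor
    · intro h; exact ⟨V i ω - c - 1, by omega⟩
    · rintro ⟨k, hk⟩; omega
  have hdisj : Pairwise (Function.onFun Disjoint fun k : ℕ => {ω | V i ω = c + 1 + k}) := by
    intro k k' hkk'
    simp only [Function.onFun]
    rw [Set.disjoint_left]
    intro ω h1 h2
    simp only [Set.mem_setOf_eq] at h1 h2
    omega
  have hmeas' : ∀ k : ℕ, MeasurableSet {ω | V i ω = c + 1 + k} := fun k =>
    (hmeas i) (measurableSet_singleton (c + 1 + k))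
  rw [hset, measure_iUnion hdisj hmeas']
  have hterm : ∀ k : ℕ, P {ω | V i ω = c + 1 + k} = ENNReal.ofReal (p * q ^ (c + k)) := by
    intro k
    have he : c + 1 + k - 1 = c + k := by omega
    rw [hgeom i (c + 1 + k) (by omega), he]
  simp_rw [hterm]
  rw [← ENNReal.ofReal_tsum_of_nonneg]
  · congr 1
    have : ∀ k : ℕ, p * q ^ (c + k) = (p * q ^ c) * q ^ k := by
      intro k; rw [pow_add]; ring
    simp_rw [this]
    rw [tsum_mul_left, tsum_geometric_of_lt_one hq0 hq1]
    have h1q : 1 - q = p := by rw [hq]; ring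
    rw [h1q]
    have hp0 : p ≠ 0 := ne_of_gt hp.1
    field_simp
  · intro k
    have hp0 : (0:ℝ) ≤ p := le_of_lt hp.1
    positivity
  · have hs : Summable fun k : ℕ => (p * q ^ c) * q ^ k :=
      (summable_geometric_of_lt_one hq0 hq1).mul_left _
    exact hs.congr (by intro k; rw [pow_add]; ring)

lemma meas_zero (i : ℕ) : P {ω | V i ω = 0} = 0 := by
  have hm2 : MeasurableSet {ω | 0 < V i ω} := hmeas i measurableSet_Ioi
  have hdisj : Disjoint {ω | V i ω = 0} {ω | 0 < V i ω} := by
    rw [Set.disjoint_left]; intro ω h1 h2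
    simp only [Set.mem_setOf_eq] at h1 h2; omega
  have huniv : {ω | V i ω = 0} ∪ {ω | 0 < V i ω} = Set.univ := by
    ext ω; simp only [Set.mem_union, Set.mem_setOf_eq, Set.mem_univ, iff_true]
    omega
  have h1 : P {ω | V i ω = 0} + P {ω | 0 < V i ω} = 1 := by
    rw [← measure_union hdisj hm2, huniv, measure_univ]
  rw [meas_tail P p q hp hq V hmeas hgeom i 0] at h1
  simp only [pow_zero, ENNReal.ofReal_one] at h1
  refine (ENNReal.add_left_inj (by simp : (1:ENNReal) ≠ ⊤)).1 ?_
  rw [zero_add]; exact h1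

variable (hindep : iIndepFun V P)
include hindep

omit [IsProbabilityMeasure P] in
lemma meas_block (T c : ℕ) (u : ℕ → ℕ) :
    P ((⋂ i ∈ Finset.range T, V i ⁻¹' {u i}) ∩ V T ⁻¹' (Set.Ioi c)) =
      (∏ i ∈ Finset.range T, P (V i ⁻¹' {u i})) * P (V T ⁻¹' (Set.Ioi c)) := by
  classical
  set sets : ℕ → Set ℕ := fun i => if i = T then Set.Ioi c else {u i} with hsets
  have hmeas' : ∀ i, i ∈ Finset.range (T+1) → MeasurableSet (sets i) := by
    intro i _
    by_cases h : i = T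
    · rw [hsets]; simp only [if_pos h]; exact measurableSet_Ioi
    · rw [hsets]; simp only [if_neg h]; exact measurableSet_singleton _
  have h := hindep.measure_inter_preimage_eq_mul (Finset.range (T+1)) hmeas'
  rw [Finset.range_add_one] at h
  rw [Finset.set_biInter_insert, Finset.prod_insert Finset.notMem_range_self] at h
  have hT : sets T = Set.Ioi c := by rw [hsets]; simp
  have hcongr : ∀ i ∈ Finset.range T, V i ⁻¹' sets i = V i ⁻¹' {u i} := by
    intro i hi
    have : i ≠ T := by simp only [Finset.mem_range] at hi; omega
    rw [hsets]; simp only [if_neg this]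
  rw [hT] at h
  calc P ((⋂ i ∈ Finset.range T, V i ⁻¹' {u i}) ∩ V T ⁻¹' (Set.Ioi c))
      = P (V T ⁻¹' (Set.Ioi c) ∩ ⋂ i ∈ Finset.range T, V i ⁻¹' sets i) := by
        rw [Set.inter_comm]
        congr 1
        congr 1
        exact (Set.iInter₂_congr hcongr).symm
    _ = P (V T ⁻¹' (Set.Ioi c)) * ∏ i ∈ Finset.range T, P (V i ⁻¹' sets i) := h
    _ = (∏ i ∈ Finset.range T, P (V i ⁻¹' {u i})) * P (V T ⁻¹' (Set.Ioi c)) := by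
        rw [mul_comm]
        congr 1
        exact Finset.prod_congr rfl (fun i hi => by rw [hcongr i hi])

omit [IsProbabilityMeasure P] in
lemma meas_D {m n a b : ℕ} (u : ℕ → ℕ) (hu : u ∈ Valid m n a b) :
    P ((⋂ i ∈ Finset.range (m+n), V i ⁻¹' {u i}) ∩
        V (m+n) ⁻¹' (Set.Ioi (b - sig u (m+n)))) =
      ENNReal.ofReal (p^(m+n) * q^(b - (m+n))) := by
  obtain ⟨h1, h2, h3, h4, h5⟩ := hu
  have hq0 : 0 ≤ q := by rw [hq]; linarith [hp.2]
  have hp0 : (0:ℝ) ≤ p := le_of_lt hp.1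
  rw [meas_block P p q hp hq V hmeas hgeom hindep (m+n) (b - sig u (m+n)) u]
  have htail : P (V (m+n) ⁻¹' (Set.Ioi (b - sig u (m+n)))) =
      ENNReal.ofReal (q ^ (b - sig u (m+n))) :=
    meas_tail P p q hp hq V hmeas hgeom (m+n) (b - sig u (m+n))
  have hsing : ∀ i ∈ Finset.range (m+n), P (V i ⁻¹' {u i}) =
      ENNReal.ofReal (p * q ^ (u i - 1)) := by
    intro i hi
    simp only [Finset.mem_range] at hi
    exact hgeom i (u i) (h1 i hi)
  rw [Finset.prod_congr rfl hsing, htail]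
  rw [← ENNReal.ofReal_prod_of_nonneg (fun i _ => by positivity)]
  rw [← ENNReal.ofReal_mul (by positivity)]
  congr 1
  rw [Finset.prod_mul_distrib, Finset.prod_const, Finset.card_range,
    Finset.prod_pow_eq_pow_sum, sum_sub_one u h1]
  rw [mul_assoc, ← pow_add]
  congr 2
  have := le_sig u h1 (le_refl (m+n))
  omega

lemma meas_A {m n a b : ℕ} (hab : a ≤ b) :
    P {ω | sig (fun i => V i ω) m ≤ a ∧ a < sig (fun i => V i ω) (m+1) ∧
           sig (fun i => V i ω) (m+n) ≤ b ∧ b < sig (fun i => V i ω) (m+n+1)} =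
      ENNReal.ofReal ((a.choose m) * p^m * q^(a-m)) *
      ENNReal.ofReal (((b-a).choose n) * p^n * q^((b-a)-n)) := by
  classical
  set T := m + n with hT
  set A : Set Ω := {ω | sig (fun i => V i ω) m ≤ a ∧ a < sig (fun i => V i ω) (m+1) ∧
           sig (fun i => V i ω) (m+n) ≤ b ∧ b < sig (fun i => V i ω) (m+n+1)} with hA
  set D : (ℕ → ℕ) → Set Ω := fun u =>
    (⋂ i ∈ Finset.range T, V i ⁻¹' {u i}) ∩ V T ⁻¹' (Set.Ioi (b - sig u T)) with hD
  set posT : Set Ω := {ω | ∀ i, i ≤ T → 1 ≤ V i ω} with hpos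
  -- the null set
  have hnull : P {ω | ∃ i, i ≤ T ∧ V i ω = 0} = 0 := by
    refine measure_mono_null ?_
      (measure_iUnion_null (fun i : ℕ => meas_zero P p q hp hq V hmeas hgeom i))
    intro ω hω
    rcases hω with ⟨i, _, hi⟩
    exact Set.mem_iUnion.2 ⟨i, hi⟩
  -- P A = P (A ∩ posT)
  have hPA : P A = P (A ∩ posT) := by
    refine meas_eq_of_iff_off_null P hnull (fun ω hω => ?_)
    simp only [Set.mem_setOf_eq, not_exists, not_and] at hω
    constructor
    · intro hA'
      refine ⟨hA', fun i hi => ?_⟩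
      have := hω i
      omega
    · exact fun h => h.1
  -- decomposition
  have hdecomp : A ∩ posT = ⋃ u : ↥(Valid m n a b), D u.1 := by
    ext ω
    constructor
    · rintro ⟨hA', hpos'⟩
      obtain ⟨c1, c2, c3, c4⟩ := hA'
      have hposω : ∀ i, i ≤ T → 1 ≤ V i ω := hpos'
      set u : ℕ → ℕ := fun i => if i < T then V i ω else 0 with hu
      have hsig : ∀ k, k ≤ T → sig u k = sig (fun i => V i ω) k := by
        intro k hk
        refine Finset.sum_congr rfl (fun i hi => ?_)
        simp only [Finset.mem_range] at hi
        rw [hu]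
        simp only [if_pos (show i < T by omega)]
      have huv : u ∈ Valid m n a b := by
        refine ⟨?_, ?_, ?_, ?_, ?_⟩
        · intro i hi
          rw [hu]; simp only [if_pos (show i < T by omega)]
          exact hposω i (by omega)
        · intro i hi; rw [hu]; simp only [if_neg (show ¬ i < T by omega)]
        · rw [hsig m (by omega)]; exact c1
        · intro k hk hmk
          rw [hsig k hk]
          exact lt_of_lt_of_le c2 (sig_mono _ (by omega))
        · rw [hsig (m+n) (by omega)]; exact c3
      refine Set.mem_iUnion.2 ⟨⟨u, huv⟩, ?_, ?_⟩
      · refine Set.mem_iInter₂.2 (fun i hi => ?_)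
        simp only [Finset.mem_range] at hi
        simp only [Set.mem_preimage, Set.mem_singleton_iff, hu, if_pos hi]
      · simp only [Set.mem_preimage, Set.mem_Ioi]
        have hTx : sig (fun i => V i ω) (T+1) = sig (fun i => V i ω) T + V T ω := sig_succ _ _
        have h4' : b < sig (fun i => V i ω) (T+1) := by
          rw [hT]; exact c4
        have c3' : sig (fun i => V i ω) T ≤ b := by
          rw [hT]; exact c3
        rw [hsig T (le_refl T)]
        omega
    · intro hω
      rcases Set.mem_iUnion.1 hω with ⟨⟨u, huv⟩, hωu⟩
      obtain ⟨h1, h2, h3, h4, h5⟩ := huv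
      rcases hωu with ⟨hωi, hωt⟩
      have hVi : ∀ i, i < T → V i ω = u i := by
        intro i hi
        have := Set.mem_iInter₂.1 hωi i (Finset.mem_range.2 hi)
        simpa using this
      simp only [Set.mem_preimage, Set.mem_Ioi] at hωt
      have hsig : ∀ k, k ≤ T → sig (fun i => V i ω) k = sig u k := by
        intro k hk
        refine Finset.sum_congr rfl (fun i hi => ?_)
        simp only [Finset.mem_range] at hi
        exact hVi i (by omega)
      have hposω : ∀ i, i ≤ T → 1 ≤ V i ω := by
        intro i hi
        rcases Nat.lt_or_ge i T with h | h
        · rw [hVi i h]; exact h1 i h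
        · have : i = T := by omega
          subst this
          omega
      have hsigT : sig (fun i => V i ω) (T+1) = sig u T + V T ω := by
        rw [sig_succ, hsig T (le_refl T)]
      refine ⟨⟨?_, ?_, ?_, ?_⟩, hposω⟩
      · rw [hsig m (by omega)]; exact h3
      · rcases Nat.eq_zero_or_pos n with hn0 | hn0
        · have hm1 : m + 1 = T + 1 := by omega
          rw [hm1, hsigT]
          omega
        · rw [hsig (m+1) (by omega)]
          exact h4 (m+1) (by omega) (by omega)
      · rw [hsig (m+n) (le_refl _)]; exact h5
      · show b < sig (fun i => V i ω) (m+n+1)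
        rw [show m + n + 1 = T + 1 from by rw [hT], hsigT]
        omega
  haveI : Finite ↥(Valid m n a b) := finite_valid hab
  have hdisj : Pairwise (Function.onFun Disjoint (fun u : ↥(Valid m n a b) => D u.1)) := by
    intro u u' huu'
    simp only [Function.onFun]
    rw [Set.disjoint_left]
    intro ω hω hω'
    apply huu'
    apply Subtype.ext
    funext i
    rcases Nat.lt_or_ge i T with hi | hi
    · have e1 := Set.mem_iInter₂.1 hω.1 i (Finset.mem_range.2 hi)
      have e2 := Set.mem_iInter₂.1 hω'.1 i (Finset.mem_range.2 hi)
      simp only [Set.mem_preimage, Set.mem_singleton_iff] at e1 e2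
      rw [← e1, ← e2]
    · rw [u.2.2.1 i hi, u'.2.2.1 i hi]
  have hmeasD : ∀ u : ↥(Valid m n a b), MeasurableSet (D u.1) := by
    intro u
    refine MeasurableSet.inter ?_ (hmeas T measurableSet_Ioi)
    exact MeasurableSet.biInter (Set.to_countable _)
      (fun i _ => hmeas i (measurableSet_singleton _))
  rw [hPA, hdecomp, measure_iUnion hdisj hmeasD]
  have hconst : ∀ u : ↥(Valid m n a b), P (D u.1) = ENNReal.ofReal (p^T * q^(b-T)) :=
    fun u => meas_D P p q hp hq V hmeas hgeom hindep u.1 u.2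
  rw [tsum_congr hconst]
  haveI := Fintype.ofFinite ↥(Valid m n a b)
  rw [tsum_fintype, Finset.sum_const, Finset.card_univ, ← Nat.card_eq_fintype_card,
    card_valid m n a b hab, nsmul_eq_mul]
  -- final numeric identity
  have hq0 : 0 ≤ q := by rw [hq]; linarith [hp.2]
  have hp0 : (0:ℝ) ≤ p := le_of_lt hp.1
  rw [← ENNReal.ofReal_natCast, ← ENNReal.ofReal_mul (by positivity),
    ← ENNReal.ofReal_mul (by positivity)]
  congr 1
  push_cast
  rcases Nat.lt_or_ge a m with hcase | hcase
  · rw [Nat.choose_eq_zero_of_lt hcase]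
    push_cast
    ring
  rcases Nat.lt_or_ge (b - a) n with hcase2 | hcase2
  · rw [Nat.choose_eq_zero_of_lt hcase2]
    push_cast
    ring
  have hexp : b - T = (a - m) + ((b - a) - n) := by omega
  rw [hexp, pow_add, pow_add]
  ring

omit [IsProbabilityMeasure P] hindep in
lemma tsum_binom (c : ℕ) :
    ∑' k : ℕ, ENNReal.ofReal ((c.choose k : ℝ) * p^k * q^(c-k)) = 1 := by
  have hq0 : 0 ≤ q := by rw [hq]; linarith [hp.2]
  have hp0 : (0:ℝ) ≤ p := le_of_lt hp.1
  rw [tsum_eq_sum (s := Finset.range (c+1)) ?h]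
  case h =>
    intro k hk
    simp only [Finset.mem_range] at hk
    rw [Nat.choose_eq_zero_of_lt (by omega)]
    simp
  rw [← ENNReal.ofReal_sum_of_nonneg (fun k _ => by positivity)]
  have hsum : ∑ k ∈ Finset.range (c+1), ((c.choose k : ℝ) * p^k * q^(c-k)) = (p + q)^c := by
    rw [add_pow]
    refine Finset.sum_congr rfl (fun k hk => ?_)
    ring
  rw [hsum]
  have hpq : p + q = 1 := by rw [hq]; ring
  rw [hpq, one_pow, ENNReal.ofReal_one]

end Meas
end GeomRenewal

open GeomRenewal in
/-- For a renewal counting process `L` with i.i.d. geometric interarrival times of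
parameter `p`, for all `0 ≤ s ≤ t` the random variables `L(s)` and `L(t) - L(s)`
are independent: `P{L(s) = m, L(t) - L(s) = n} = P{L(s) = m} · P{L(t) - L(s) = n}`. -/
theorem geom_renewal_increment_indep
    {Ω : Type*} [MeasurableSpace Ω] (P : Measure Ω) [IsProbabilityMeasure P]
    (p q : ℝ) (hp : p ∈ Set.Ioo (0 : ℝ) 1) (hq : q = 1 - p)
    (U : ℕ → Ω → ℕ)
    (hUmeas : ∀ m, Measurable (U m))
    (hUindep : iIndepFun (fun m => U (m + 1)) P)
    (hUgeom : ∀ m, 1 ≤ m → ∀ k, 1 ≤ k →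
      P {ω | U m ω = k} = ENNReal.ofReal (p * q ^ (k - 1)))
    (S : ℕ → Ω → ℕ) (hS : ∀ k ω, S k ω = ∑ i ∈ Finset.range k, U (i + 1) ω)
    (L : ℝ → Ω → ℕ)
    (hL : ∀ t ω, L t ω = Nat.card {k : ℕ // 1 ≤ k ∧ (S k ω : ℝ) ≤ t})
    (s t : ℝ) (hs : 0 ≤ s) (hst : s ≤ t) :
    ∀ m n : ℕ,
      P {ω | L s ω = m ∧ L t ω - L s ω = n} =
        P {ω | L s ω = m} * P {ω | L t ω - L s ω = n} := by
  intro m n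
  classical
  have ht0 : 0 ≤ t := le_trans hs hst
  set a := ⌊s⌋₊ with ha
  set b := ⌊t⌋₊ with hb
  have hab : a ≤ b := Nat.floor_mono hst
  set V : ℕ → Ω → ℕ := fun i => U (i+1) with hV
  have hmeasV : ∀ i, Measurable (V i) := fun i => hUmeas _
  have hgeomV : ∀ i k, 1 ≤ k → P {ω | V i ω = k} = ENNReal.ofReal (p * q ^ (k-1)) :=
    fun i k hk => hUgeom (i+1) (by omega) k hk
  have hindepV : iIndepFun V P := hUindep
  have hSV : ∀ k ω, S k ω = sig (fun i => V i ω) k := by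
    intro k ω; rw [hS]; rfl
  set N : Set Ω := ⋃ i : ℕ, {ω | V i ω = 0} with hN
  have hPN : P N = 0 :=
    measure_iUnion_null (fun i => meas_zero P p q hp hq V hmeasV hgeomV i)
  have hNmeas : MeasurableSet N :=
    MeasurableSet.iUnion (fun i => hmeasV i (measurableSet_singleton 0))
  have hposN : ∀ ω, ω ∉ N → ∀ i, 1 ≤ V i ω := by
    intro ω hω i
    rw [hN] at hω
    simp only [Set.mem_iUnion, Set.mem_setOf_eq, not_exists] at hω
    have := hω i; omega
  have hmono : ∀ ω, ω ∉ N → ∀ j k : ℕ, j ≤ k → S j ω ≤ S k ω := by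
    intro ω hω j k hjk; rw [hSV, hSV]; exact sig_mono _ hjk
  have hselfle : ∀ ω, ω ∉ N → ∀ k : ℕ, k ≤ S k ω := by
    intro ω hω k; rw [hSV]; exact le_sig _ (fun i _ => hposN ω hω i) (le_refl k)
  -- characterization of L off the null set
  have hchar : ∀ ω, ω ∉ N → ∀ (r : ℝ), 0 ≤ r → ∀ m' : ℕ,
      (L r ω = m' ↔ (S m' ω ≤ ⌊r⌋₊ ∧ ⌊r⌋₊ < S (m'+1) ω)) := by
    intro ω hω r hr m'
    set c := ⌊r⌋₊ with hc
    set m0 := Nat.findGreatest (fun k => S k ω ≤ c) c with hm0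
    have hS0 : S 0 ω ≤ c := by rw [hS]; simp
    have hspec : S m0 ω ≤ c := Nat.findGreatest_spec (P := fun k => S k ω ≤ c) (Nat.zero_le c) hS0
    have hm0le : m0 ≤ c := Nat.findGreatest_le c
    have hnext : c < S (m0+1) ω := by
      rcases Nat.lt_or_ge m0 c with h | h
      · by_contra hcon
        push_neg at hcon
        exact Nat.findGreatest_is_greatest (Nat.lt_succ_self m0) (by omega) hcon
      · have h1 := hselfle ω hω (m0+1)
        omega
    have hLval : L r ω = m0 := by
      rw [hL]
      have hiff2 : ∀ k : ℕ, (1 ≤ k ∧ (S k ω : ℝ) ≤ r) ↔ k ∈ Finset.Icc 1 m0 := by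
        intro k
        rw [Finset.mem_Icc]
        constructor
        · rintro ⟨hk1, hk2⟩
          refine ⟨hk1, ?_⟩
          have hkc : S k ω ≤ c := Nat.le_floor hk2
          by_contra hcon
          push_neg at hcon
          have := hmono ω hω (m0+1) k (by omega)
          omega
        · rintro ⟨hk1, hk2⟩
          refine ⟨hk1, ?_⟩
          have h1 : S k ω ≤ c := le_trans (hmono ω hω k m0 hk2) hspec
          calc (S k ω : ℝ) ≤ (c : ℝ) := Nat.cast_le.2 h1
          _ ≤ r := Nat.floor_le hr
      rw [Nat.card_congr (Equiv.subtypeEquivRight hiff2), Nat.card_eq_finsetCard,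
        Nat.card_Icc]
      omega
    constructor
    · intro he
      rw [hLval] at he
      rw [← he]
      exact ⟨hspec, hnext⟩
    · rintro ⟨h1, h2⟩
      rw [hLval]
      by_contra hne
      rcases Nat.lt_or_ge m' m0 with h | h
      · have := hmono ω hω (m'+1) m0 (by omega)
        omega
      · have hlt : m0 < m' := by omega
        have := hmono ω hω (m0+1) m' (by omega)
        omega
  -- the nice events
  set Aset : ℕ → ℕ → Set Ω := fun m' n' =>
    {ω | sig (fun i => V i ω) m' ≤ a ∧ a < sig (fun i => V i ω) (m'+1) ∧
         sig (fun i => V i ω) (m'+n') ≤ b ∧ b < sig (fun i => V i ω) (m'+n'+1)} with hAset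
  set gm : ℕ → ENNReal :=
    fun m' => ENNReal.ofReal ((a.choose m' : ℝ) * p^m' * q^(a-m')) with hgm
  set hn : ℕ → ENNReal :=
    fun n' => ENNReal.ofReal (((b-a).choose n' : ℝ) * p^n' * q^((b-a)-n')) with hhn
  have hPAset : ∀ m' n', P (Aset m' n') = gm m' * hn n' := fun m' n' =>
    meas_A P p q hp hq V hmeasV hgeomV hindepV hab
  -- translation
  have hiff : ∀ ω, ω ∉ N → ∀ m' n' : ℕ,
      (ω ∈ Aset m' n' ↔ (L s ω = m' ∧ L t ω - L s ω = n')) := by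
    intro ω hω m' n'
    have e1 := hchar ω hω s hs
    have e2 := hchar ω hω t ht0
    have hLst : L s ω ≤ L t ω := by
      by_contra hcon
      push_neg at hcon
      have c1 := (e1 (L s ω)).1 rfl
      have c2 := (e2 (L t ω)).1 rfl
      have := hmono ω hω (L t ω + 1) (L s ω) (by omega)
      omega
    have hmem : ω ∈ Aset m' n' ↔
        (S m' ω ≤ a ∧ a < S (m'+1) ω ∧ S (m'+n') ω ≤ b ∧ b < S (m'+n'+1) ω) := by
      rw [hAset]
      simp only [Set.mem_setOf_eq, hSV]
    rw [hmem]
    constructor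
    · rintro ⟨c1, c2, c3, c4⟩
      have hm : L s ω = m' := (e1 m').2 ⟨c1, c2⟩
      have hmn : L t ω = m' + n' := (e2 (m'+n')).2 ⟨c3, c4⟩
      exact ⟨hm, by omega⟩
    · rintro ⟨h1, h2⟩
      have hm := (e1 m').1 h1
      have hLt : L t ω = m' + n' := by omega
      have hmn := (e2 (m'+n')).1 hLt
      exact ⟨hm.1, hm.2, hmn.1, hmn.2⟩
  -- measurability of Aset
  have hsigmeas : ∀ k, Measurable (fun ω => sig (fun i => V i ω) k) := by
    intro k
    have he : (fun ω => sig (fun i => V i ω) k) = fun ω => ∑ i ∈ Finset.range k, V i ω := rfl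
    rw [he]
    exact Finset.measurable_sum _ (fun i _ => hmeasV i)
  have hAmeas : ∀ m' n', MeasurableSet (Aset m' n') := by
    intro m' n'
    have e : Aset m' n' = (fun ω => sig (fun i => V i ω) m') ⁻¹' (Set.Iic a) ∩
        ((fun ω => sig (fun i => V i ω) (m'+1)) ⁻¹' (Set.Ioi a) ∩
        ((fun ω => sig (fun i => V i ω) (m'+n')) ⁻¹' (Set.Iic b) ∩
         (fun ω => sig (fun i => V i ω) (m'+n'+1)) ⁻¹' (Set.Ioi b))) := by
      rw [hAset]
      ext ω
      simp only [Set.mem_setOf_eq, Set.mem_inter_iff, Set.mem_preimage, Set.mem_Iic,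
        Set.mem_Ioi]
    rw [e]
    exact ((hsigmeas _) measurableSet_Iic).inter
      (((hsigmeas _) measurableSet_Ioi).inter
        (((hsigmeas _) measurableSet_Iic).inter ((hsigmeas _) measurableSet_Ioi)))
  -- joint probability
  have key : P {ω | L s ω = m ∧ L t ω - L s ω = n} = gm m * hn n := by
    rw [← hPAset m n]
    refine (meas_eq_of_iff_off_null P hPN (fun ω hω => ?_)).symm
    exact hiff ω hω m n
  -- intersected-with-Nᶜ probabilities
  have hterm : ∀ m' n', P (Aset m' n' ∩ Nᶜ) = gm m' * hn n' := by
    intro m' n'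
    rw [← hPAset m' n']
    refine meas_eq_of_iff_off_null P hPN (fun ω hω => ?_)
    simp only [Set.mem_inter_iff, Set.mem_compl_iff]
    exact ⟨fun h => h.1, fun h => ⟨h, hω⟩⟩
  -- first marginal
  have hmarg1 : P {ω | L s ω = m} = gm m := by
    have hEq : P {ω | L s ω = m} = P (⋃ n' : ℕ, Aset m n' ∩ Nᶜ) := by
      refine meas_eq_of_iff_off_null P hPN (fun ω hω => ?_)
      simp only [Set.mem_setOf_eq, Set.mem_iUnion, Set.mem_inter_iff, Set.mem_compl_iff]
      constructor
      · intro h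
        exact ⟨L t ω - L s ω, (hiff ω hω m _).2 ⟨h, rfl⟩, hω⟩
      · rintro ⟨n', hA', _⟩
        exact ((hiff ω hω m n').1 hA').1
    rw [hEq, measure_iUnion ?disj1 (fun n' => (hAmeas m n').inter hNmeas.compl)]
    case disj1 =>
      intro n1 n2 hne
      simp only [Function.onFun]
      rw [Set.disjoint_left]
      rintro ω ⟨hA1, hω⟩ ⟨hA2, _⟩
      rw [Set.mem_compl_iff] at hω
      have e1 := (hiff ω hω m n1).1 hA1
      have e2 := (hiff ω hω m n2).1 hA2
      exact hne (by omega)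
    rw [tsum_congr (fun n' => hterm m n'), ENNReal.tsum_mul_left]
    rw [show ∑' n', hn n' = 1 from tsum_binom P p q hp hq V hmeasV hgeomV (b-a), mul_one]
  -- second marginal
  have hmarg2 : P {ω | L t ω - L s ω = n} = hn n := by
    have hEq : P {ω | L t ω - L s ω = n} = P (⋃ m' : ℕ, Aset m' n ∩ Nᶜ) := by
      refine meas_eq_of_iff_off_null P hPN (fun ω hω => ?_)
      simp only [Set.mem_setOf_eq, Set.mem_iUnion, Set.mem_inter_iff, Set.mem_compl_iff]
      constructor
      · intro h
        exact ⟨L s ω, (hiff ω hω _ n).2 ⟨rfl, h⟩, hω⟩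
      · rintro ⟨m', hA', _⟩
        exact ((hiff ω hω m' n).1 hA').2
    rw [hEq, measure_iUnion ?disj2 (fun m' => (hAmeas m' n).inter hNmeas.compl)]
    case disj2 =>
      intro m1 m2 hne
      simp only [Function.onFun]
      rw [Set.disjoint_left]
      rintro ω ⟨hA1, hω⟩ ⟨hA2, _⟩
      rw [Set.mem_compl_iff] at hω
      have e1 := (hiff ω hω m1 n).1 hA1
      have e2 := (hiff ω hω m2 n).1 hA2
      exact hne (by omega)
    rw [tsum_congr (fun m' => hterm m' n), ENNReal.tsum_mul_right]
    rw [show ∑' m', gm m' = 1 from tsum_binom P p q hp hq V hmeasV hgeomV a, one_mul]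
  rw [key, hmarg1, hmarg2]
end

section
/- For every x ≥ 0, we have ∫_x^∞ φ(u) du ≤ 2·φ(x) / (x + √(x² + 8/π)), where φ(u) = (2π)^{−1/2}·exp(−u²/2) is the standard Gaussian density. -/
open MeasureTheory Set Real Filter

noncomputable def gphi (u : ℝ) : ℝ := (Real.sqrt (2 * Real.pi))⁻¹ * Real.exp (-u ^ 2 / 2)

noncomputable def gs (x : ℝ) : ℝ := Real.sqrt (x ^ 2 + 8 / Real.pi)

noncomputable def gm (x : ℝ) : ℝ := 2 / (x + gs x)

noncomputable def gQ (x : ℝ) : ℝ := ∫ u in Set.Ioi x, gphi u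

noncomputable def gW (x : ℝ) : ℝ := gphi x * gm x - gQ x

noncomputable def gN (x : ℝ) : ℝ := 8 / Real.pi - 2 - x * (gs x - x)

lemma gphi_cont : Continuous gphi := by
  unfold gphi
  fun_prop

lemma gphi_pos (u : ℝ) : 0 < gphi u := by
  have h := Real.pi_pos
  exact mul_pos (inv_pos.mpr (Real.sqrt_pos.mpr (by linarith))) (Real.exp_pos _)

lemma integrable_gphi : Integrable gphi := by
  have h : Integrable (fun u : ℝ => Real.exp (-(1/2 : ℝ) * u ^ 2)) :=
    integrable_exp_neg_mul_sq (by norm_num)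
  have := h.const_mul (Real.sqrt (2 * Real.pi))⁻¹
  refine this.congr (Eventually.of_forall fun u => ?_)
  simp only [gphi]
  ring_nf

lemma gs_pos (x : ℝ) : 0 < gs x := by
  have h := Real.pi_pos
  exact Real.sqrt_pos.mpr (by positivity)

lemma gs_sq (x : ℝ) : gs x ^ 2 = x ^ 2 + 8 / Real.pi := by
  have h := Real.pi_pos
  exact Real.sq_sqrt (by positivity)

lemma abs_lt_gs (x : ℝ) : |x| < gs x := by
  have h := Real.pi_pos
  have : Real.sqrt (x ^ 2) < Real.sqrt (x ^ 2 + 8 / Real.pi) :=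
    Real.sqrt_lt_sqrt (sq_nonneg x) (lt_add_of_pos_right _ (by positivity))
  simpa [gs, Real.sqrt_sq_eq_abs] using this

lemma gx_add_gs_pos (x : ℝ) : 0 < x + gs x := by
  have h := abs_lt_gs x
  have := neg_abs_le x
  linarith

lemma gQ_eq (x : ℝ) : gQ x = gQ 0 - ∫ t in (0:ℝ)..x, gphi t := by
  rcases le_or_gt 0 x with h | h
  · rw [intervalIntegral.integral_of_le h]
    have hsplit : gQ 0 = (∫ t in Set.Ioc 0 x, gphi t) + gQ x := by
      unfold gQ
      rw [← setIntegral_union (Ioc_disjoint_Ioi le_rfl) measurableSet_Ioi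
        integrable_gphi.integrableOn integrable_gphi.integrableOn,
        Ioc_union_Ioi_eq_Ioi h]
    linarith
  · rw [intervalIntegral.integral_of_ge h.le]
    have hsplit : gQ x = (∫ t in Set.Ioc x 0, gphi t) + gQ 0 := by
      unfold gQ
      rw [← setIntegral_union (Ioc_disjoint_Ioi le_rfl) measurableSet_Ioi
        integrable_gphi.integrableOn integrable_gphi.integrableOn,
        Ioc_union_Ioi_eq_Ioi h.le]
    linarith

lemma hasDerivAt_gQ (x : ℝ) : HasDerivAt gQ (-gphi x) x := by
  have h : HasDerivAt (fun u => ∫ t in (0:ℝ)..u, gphi t) (gphi x) x :=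
    intervalIntegral.integral_hasDerivAt_right
      (integrable_gphi.intervalIntegrable)
      (gphi_cont.stronglyMeasurable.stronglyMeasurableAtFilter)
      gphi_cont.continuousAt
  have h2 := h.const_sub (gQ 0)
  have : gQ = fun u => gQ 0 - ∫ t in (0:ℝ)..u, gphi t := funext gQ_eq
  rw [this]
  simpa using h2

lemma hasDerivAt_gs (x : ℝ) : HasDerivAt gs (x / gs x) x := by
  have h1 : HasDerivAt (fun y : ℝ => y ^ 2 + 8 / Real.pi) (2 * x) x := by
    simpa using (hasDerivAt_pow 2 x).add_const (8 / Real.pi)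
  have h := Real.pi_pos
  have h2 := h1.sqrt (by positivity)
  have hgs := gs_pos x
  refine h2.congr_deriv (Eq.symm ?_)
  unfold gs
  rw [eq_div_iff (by unfold gs at hgs; positivity)]
  field_simp [ne_of_gt hgs]

lemma hasDerivAt_gm (x : ℝ) : HasDerivAt gm (-2 / (gs x * (x + gs x))) x := by
  have h1 : HasDerivAt (fun y => y + gs y) (1 + x / gs x) x :=
    (hasDerivAt_id x).add (hasDerivAt_gs x)
  have h2 := (hasDerivAt_const x (2:ℝ)).div h1 (ne_of_gt (gx_add_gs_pos x))
  refine h2.congr_deriv (Eq.symm ?_)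
  have hs := ne_of_gt (gs_pos x)
  have hxs := ne_of_gt (gx_add_gs_pos x)
  field_simp
  ring

lemma hasDerivAt_gphi (x : ℝ) : HasDerivAt gphi (-x * gphi x) x := by
  have h1 : HasDerivAt (fun y : ℝ => -y ^ 2 / 2) (-x) x := by
    have := ((hasDerivAt_pow 2 x).neg).div_const 2
    simpa using this.congr_deriv (by ring)
  have h2 := (h1.exp).const_mul (Real.sqrt (2 * Real.pi))⁻¹
  unfold gphi
  refine h2.congr_deriv (Eq.symm ?_)
  ring

lemma hasDerivAt_gW (x : ℝ) :
    HasDerivAt gW (gphi x * gN x / (gs x * (x + gs x))) x := by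
  have h1 := ((hasDerivAt_gphi x).mul (hasDerivAt_gm x)).sub (hasDerivAt_gQ x)
  refine h1.congr_deriv (Eq.symm ?_)
  unfold gm gN
  have hs := ne_of_gt (gs_pos x)
  have hxs := ne_of_gt (gx_add_gs_pos x)
  have hpi := Real.pi_pos
  have hsq : Real.pi * gs x ^ 2 = Real.pi * x ^ 2 + 8 := by
    rw [gs_sq x]; field_simp
  field_simp
  linear_combination (-(gphi x)) * hsq

lemma gN_antitoneOn {x y : ℝ} (hx : 0 ≤ x) (hxy : x ≤ y) : gN y ≤ gN x := by
  have hy : 0 ≤ y := hx.trans hxy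
  have hpi := Real.pi_pos
  have hc : (0:ℝ) < 8 / Real.pi := by positivity
  have hsx := gs_pos x
  have hsy := gs_pos y
  have h1 : x * gs y ≤ y * gs x := by
    have hsq : (x * gs y) ^ 2 ≤ (y * gs x) ^ 2 := by
      rw [mul_pow, mul_pow, gs_sq, gs_sq]
      have hx2 : x ^ 2 ≤ y ^ 2 := by nlinarith
      nlinarith
    exact (pow_le_pow_iff_left₀ (by positivity) (by positivity) (two_ne_zero)).mp hsq
  have e1 : x * (gs x - x) = 8 / Real.pi * x / (gs x + x) := by
    rw [eq_div_iff (by linarith [gx_add_gs_pos x])]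
    nlinarith [gs_sq x]
  have e2 : y * (gs y - y) = 8 / Real.pi * y / (gs y + y) := by
    rw [eq_div_iff (by linarith [gx_add_gs_pos y])]
    nlinarith [gs_sq y]
  unfold gN
  rw [e1, e2] at *
  have key : 8 / Real.pi * x / (gs x + x) ≤ 8 / Real.pi * y / (gs y + y) := by
    rw [div_le_div_iff₀ (by linarith [gx_add_gs_pos x]) (by linarith [gx_add_gs_pos y])]
    nlinarith [h1]
  linarith [key]

lemma gQ_zero : gQ 0 = 1 / 2 := by
  unfold gQ gphi
  rw [MeasureTheory.integral_const_mul]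
  have : ∀ u : ℝ, -u ^ 2 / 2 = -(1/2 : ℝ) * u ^ 2 := fun u => by ring
  simp_rw [this]
  rw [integral_gaussian_Ioi]
  have hpi := Real.pi_pos
  have : Real.pi / (1/2 : ℝ) = 2 * Real.pi := by ring
  rw [this]
  have h2 : Real.sqrt (2 * Real.pi) ≠ 0 := by positivity
  field_simp

lemma gW_zero : gW 0 = 0 := by
  have hpi := Real.pi_pos
  have key : gphi 0 * gm 0 = 1 / 2 := by
    unfold gphi gm gs
    rw [show ((0:ℝ) ^ 2 + 8 / Real.pi) = 8 / Real.pi by ring,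
        show (-(0:ℝ) ^ 2 / 2) = 0 by norm_num, Real.exp_zero, zero_add]
    have h1 : Real.sqrt (2 * Real.pi) * Real.sqrt (8 / Real.pi) = 4 := by
      rw [← Real.sqrt_mul (by positivity)]
      rw [show 2 * Real.pi * (8 / Real.pi) = 16 by field_simp; ring]
      rw [show (16:ℝ) = 4 ^ 2 by norm_num]
      exact Real.sqrt_sq (by norm_num)
    set A := Real.sqrt (2 * Real.pi) with hA
    set B := Real.sqrt (8 / Real.pi) with hB
    have h2 : (0:ℝ) < A := by rw [hA]; positivity
    have h3 : (0:ℝ) < B := by rw [hB]; positivity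
    field_simp
    linarith [h1]
  unfold gW
  rw [key, gQ_zero]
  norm_num

lemma gphi_tendsto : Tendsto gphi atTop (nhds 0) := by
  have h0 : Tendsto (fun x : ℝ => x ^ 2 / 2) atTop atTop :=
    (tendsto_pow_atTop two_ne_zero).atTop_div_const (by norm_num)
  have h1 : Tendsto (fun x : ℝ => -x ^ 2 / 2) atTop atBot := by
    have := tendsto_neg_atTop_atBot.comp h0
    exact this.congr fun x => by simp [Function.comp]; ring
  have h2 : Tendsto (fun x : ℝ => Real.exp (-x ^ 2 / 2)) atTop (nhds 0) :=
    Real.tendsto_exp_atBot.comp h1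
  have h3 := h2.const_mul (Real.sqrt (2 * Real.pi))⁻¹
  rw [mul_zero] at h3
  exact h3

lemma gW_tendsto : Tendsto gW atTop (nhds 0) := by
  have hpi := Real.pi_pos
  have part1 : Tendsto (fun x => gphi x * gm x) atTop (nhds 0) := by
    have hub : Tendsto (fun x => gphi x * (2 / Real.sqrt (8 / Real.pi))) atTop (nhds 0) := by
      simpa using gphi_tendsto.mul_const (2 / Real.sqrt (8 / Real.pi))
    apply tendsto_of_tendsto_of_tendsto_of_le_of_le' tendsto_const_nhds hub
    · exact Eventually.of_forall fun x =>
        le_of_lt (mul_pos (gphi_pos x) (div_pos two_pos (gx_add_gs_pos x)))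
    · filter_upwards [eventually_ge_atTop (0:ℝ)] with x hx
      apply mul_le_mul_of_nonneg_left _ (gphi_pos x).le
      unfold gm
      have hb : Real.sqrt (8 / Real.pi) ≤ x + gs x := by
        have : Real.sqrt (8 / Real.pi) ≤ gs x := Real.sqrt_le_sqrt (by nlinarith [sq_nonneg x])
        linarith
      rw [div_le_div_iff₀ (gx_add_gs_pos x) (by positivity)]
      linarith [hb]
  have part2 : Tendsto gQ atTop (nhds 0) := by
    have h := intervalIntegral_tendsto_integral_Ioi 0 integrable_gphi.integrableOn tendsto_id
    have h2 : Tendsto (fun i : ℝ => gQ 0 - ∫ t in (0:ℝ)..(id i), gphi t) atTop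
        (nhds (gQ 0 - ∫ u in Set.Ioi (0:ℝ), gphi u)) := tendsto_const_nhds.sub h
    have h3 : gQ 0 - ∫ u in Set.Ioi (0:ℝ), gphi u = 0 := by simp [gQ]
    rw [h3] at h2
    exact h2.congr fun i => (gQ_eq i).symm
  have := part1.sub part2
  rw [sub_zero] at this
  exact this

lemma gW_nonneg {x : ℝ} (hx : 0 ≤ x) : 0 ≤ gW x := by
  rcases le_or_gt 0 (gN x) with hN | hN
  · have mono : MonotoneOn gW (Set.Icc 0 x) := by
      apply monotoneOn_of_deriv_nonneg (convex_Icc 0 x)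
      · exact fun y _ => (hasDerivAt_gW y).differentiableAt.continuousAt.continuousWithinAt
      · exact fun y _ => (hasDerivAt_gW y).differentiableAt.differentiableWithinAt
      · intro y hy
        rw [interior_Icc] at hy
        rw [(hasDerivAt_gW y).deriv]
        have hNy : 0 ≤ gN y := le_trans hN (gN_antitoneOn hy.1.le hy.2.le)
        have := gphi_pos y
        have := gs_pos y
        have := gx_add_gs_pos y
        positivity
    have h := mono ⟨le_rfl, hx⟩ ⟨hx, le_rfl⟩ hx
    rwa [gW_zero] at h
  · have anti : AntitoneOn gW (Set.Ici x) := by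
      apply antitoneOn_of_deriv_nonpos (convex_Ici x)
      · exact fun y _ => (hasDerivAt_gW y).differentiableAt.continuousAt.continuousWithinAt
      · exact fun y _ => (hasDerivAt_gW y).differentiableAt.differentiableWithinAt
      · intro y hy
        rw [interior_Ici] at hy
        rw [(hasDerivAt_gW y).deriv]
        have hNy : gN y ≤ gN x := gN_antitoneOn hx (le_of_lt hy)
        have h1 := gphi_pos y
        have h2 := gs_pos y
        have h3 := gx_add_gs_pos y
        have : gphi y * gN y ≤ 0 := mul_nonpos_of_nonneg_of_nonpos h1.le (by linarith)
        exact div_nonpos_of_nonpos_of_nonneg this (by positivity)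
    have hle : ∀ᶠ y in atTop, gW y ≤ gW x :=
      (eventually_ge_atTop x).mono fun y hy => anti self_mem_Ici hy hy
    exact le_of_tendsto gW_tendsto hle

/-- **Gaussian tail bound.** For every `x ≥ 0`,
`∫_x^∞ φ(u) du ≤ 2 φ(x) / (x + √(x² + 8/π))`, where
`φ(u) = (2π)^{-1/2} exp(-u²/2)` is the standard Gaussian density. -/
theorem gaussian_tail_bound (x : ℝ) (hx : 0 ≤ x) :
    ∫ u in Set.Ioi x, (Real.sqrt (2 * Real.pi))⁻¹ * Real.exp (-u ^ 2 / 2) ≤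
      2 * ((Real.sqrt (2 * Real.pi))⁻¹ * Real.exp (-x ^ 2 / 2)) /
        (x + Real.sqrt (x ^ 2 + 8 / Real.pi)) := by
  have h := gW_nonneg hx
  unfold gW gm at h
  have hQ : gQ x ≤ gphi x * (2 / (x + gs x)) := by linarith
  unfold gQ gphi gs at hQ
  calc ∫ u in Set.Ioi x, (Real.sqrt (2 * Real.pi))⁻¹ * Real.exp (-u ^ 2 / 2)
      ≤ (Real.sqrt (2 * Real.pi))⁻¹ * Real.exp (-x ^ 2 / 2) *
        (2 / (x + Real.sqrt (x ^ 2 + 8 / Real.pi))) := hQ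
    _ = 2 * ((Real.sqrt (2 * Real.pi))⁻¹ * Real.exp (-x ^ 2 / 2)) /
        (x + Real.sqrt (x ^ 2 + 8 / Real.pi)) := by ring
end
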